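/- arXiv:1310.3363 — 7 statements merged into one kernel-verified Lean document; each statement's English description precedes it below -/
import Mathlib

section
/- (Measurable section theorem on ℝ+.) Let (Ω, F, P) be a complete probability space and A ∈ F ⊗ B(ℝ+). Then there exists an F-measurable random variable T : Ω → [0, ∞] such that (ω, T(ω)) ∈ A for every ω with T(ω) < ∞, and { ω : T(ω) < ∞ } = π_Ω(A). -/
open MeasureTheory
open scoped ENNReal NNReal

section Auxiliary

open Set Filter Topology

theorem analyticSet_nullMeasurable {X : Type*} [TopologicalSpace X] [PolishSpace X]
    [MeasurableSpace X] [BorelSpace X] (μ : Measure X) [IsFiniteMeasure μ]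
    {A : Set X} (hA : AnalyticSet A) : NullMeasurableSet A μ := by
  rw [AnalyticSet] at hA
  rcases hA with rfl | ⟨f, f_cont, rfl⟩
  · exact .of_null (by simp)
  letI := TopologicalSpace.upgradeIsCompletelyMetrizable X
  -- key: inner approximation by compact subsets
  have key : ∀ ε : ℝ≥0∞, ε ≠ 0 → ∃ C, IsCompact C ∧ C ⊆ range f ∧ μ (range f) ≤ μ C + ε := by
    intro ε hε
    have spec : ∀ (n : ℕ) (L : Set (ℕ → ℕ)), ∃ m : ℕ,
        μ (f '' L) ≤ μ (f '' (L ∩ {u | u n ≤ m})) + ε / 2 ^ (n + 1) := by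
      intro n L
      have hdir2 : Directed (· ⊆ ·) (fun m : ℕ => f '' (L ∩ {u | u n ≤ m})) := by
        intro a b
        refine ⟨max a b, image_mono (inter_subset_inter_right _ fun u hu =>
          le_trans hu (le_max_left a b)), image_mono (inter_subset_inter_right _ fun u hu =>
          le_trans hu (le_max_right a b))⟩
      have h1 : (⋃ m : ℕ, (L ∩ {u | u n ≤ m})) = L := by
        ext u; simp only [mem_iUnion, mem_inter_iff, mem_setOf_eq]
        exact ⟨fun ⟨m, hm⟩ => hm.1, fun h => ⟨u n, h, le_rfl⟩⟩
      have h2 : μ (f '' L) = ⨆ m, μ (f '' (L ∩ {u | u n ≤ m})) := by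
        conv_lhs => rw [← h1]
        rw [image_iUnion]
        exact Directed.measure_iUnion hdir2
      by_cases h0 : μ (f '' L) = 0
      · exact ⟨0, by simp [h0]⟩
      have hδ : ε / 2 ^ (n + 1) ≠ 0 := by
        simp [ENNReal.div_eq_zero_iff, hε, ENNReal.pow_ne_top]
      have hlt : μ (f '' L) - ε / 2 ^ (n + 1) < μ (f '' L) :=
        ENNReal.sub_lt_self (measure_ne_top μ _) h0 hδ
      obtain ⟨m, hm⟩ := lt_iSup_iff.1 (lt_of_lt_of_le hlt h2.le)
      exact ⟨m, tsub_le_iff_right.mp hm.le⟩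
    choose mfun hmfun using spec
    set seq : ℕ → Set (ℕ → ℕ) := fun n => Nat.rec univ (fun n L => L ∩ {u | u n ≤ mfun n L}) n
      with hseq
    have hseqS : ∀ n, seq (n + 1) = seq n ∩ {u | u n ≤ mfun n (seq n)} := fun n => rfl
    set k : ℕ → ℕ := fun n => mfun n (seq n) with hk
    have hseq_desc : ∀ n, seq n = {u | ∀ i < n, u i ≤ k i} := by
      intro n
      induction n with
      | zero => simp [hseq]
      | succ n ih =>
        have hstep : seq (n + 1) = seq n ∩ {u | u n ≤ k n} := rfl
        rw [hstep, ih]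
        ext u
        simp only [mem_inter_iff, mem_setOf_eq, Nat.lt_succ_iff_lt_or_eq]
        constructor
        · rintro ⟨h1, h2⟩ i (hi | rfl)
          · exact h1 i hi
          · exact h2
        · intro h
          exact ⟨fun i hi => h i (Or.inl hi), h n (Or.inr rfl)⟩

    -- invariant
    have hsum : ∀ n : ℕ, (∑ i ∈ Finset.range n, ε / 2 ^ (i + 1)) + ε / 2 ^ n ≤ ε := by
      intro n
      induction n with
      | zero => simp
      | succ n ih =>
        rw [Finset.sum_range_succ]
        have hhalf : ε / 2 ^ (n + 1) = ε / 2 ^ n / 2 := by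
          rw [pow_succ, div_eq_mul_inv,
            ENNReal.mul_inv (Or.inl (by positivity)) (Or.inl (by simp [ENNReal.pow_ne_top])),
            ← mul_assoc, ← div_eq_mul_inv, ← div_eq_mul_inv]
        calc (∑ i ∈ Finset.range n, ε / 2 ^ (i + 1)) + ε / 2 ^ (n + 1) + ε / 2 ^ (n + 1)
            = (∑ i ∈ Finset.range n, ε / 2 ^ (i + 1)) + (ε / 2 ^ n / 2 + ε / 2 ^ n / 2) := by
              rw [hhalf, add_assoc]
          _ = (∑ i ∈ Finset.range n, ε / 2 ^ (i + 1)) + ε / 2 ^ n := by rw [ENNReal.add_halves]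
          _ ≤ ε := ih
    have hinv : ∀ n : ℕ, μ (range f) ≤ μ (f '' seq n) + ∑ i ∈ Finset.range n, ε / 2 ^ (i + 1) := by
      intro n
      induction n with
      | zero => simp [hseq, image_univ]
      | succ n ih =>
        calc μ (range f) ≤ μ (f '' seq n) + ∑ i ∈ Finset.range n, ε / 2 ^ (i + 1) := ih
          _ ≤ (μ (f '' seq (n + 1)) + ε / 2 ^ (n + 1)) + ∑ i ∈ Finset.range n, ε / 2 ^ (i + 1) := by
              gcongr
              exact hmfun n (seq n)
          _ = μ (f '' seq (n + 1)) + ∑ i ∈ Finset.range (n + 1), ε / 2 ^ (i + 1) := by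
              rw [Finset.sum_range_succ]; ring
    have hinv' : ∀ n : ℕ, μ (range f) ≤ μ (f '' seq n) + ε := by
      intro n
      refine (hinv n).trans ?_
      gcongr
      exact le_trans (le_add_right le_rfl) (hsum n)
    -- the compact set
    set K : Set (ℕ → ℕ) := {u | ∀ i, u i ≤ k i} with hKdef
    have hK : IsCompact K := by
      have : K = Set.pi univ (fun i => Iic (k i)) := by
        ext u; simp [hKdef, Set.pi]
      rw [this]
      exact isCompact_univ_pi (fun i => (Set.finite_Iic (k i)).isCompact)
    set D : ℕ → Set X := fun n => closure (f '' seq n) with hD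
    have hseq_anti : Antitone seq := by
      refine antitone_nat_of_succ_le fun n => ?_
      rw [hseqS n]; exact inter_subset_left
    have hDanti : Antitone D := fun a b hab =>
      closure_mono (image_mono (hseq_anti hab))
    have hDsub : (⋂ n, D n) ⊆ f '' K := by
      intro y hy
      simp only [mem_iInter] at hy
      have hx : ∀ n : ℕ, ∃ x, x ∈ seq n ∧ dist y (f x) < 1 / (n + 1) := by
        intro n
        have := hy n
        rw [hD] at this
        rcases Metric.mem_closure_iff.1 this (1 / (n + 1)) (by positivity) with ⟨z, hz, hzd⟩
        rcases hz with ⟨x, hx, rfl⟩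
        exact ⟨x, hx, hzd⟩
      choose x hxseq hxdist using hx
      set z : ℕ → (ℕ → ℕ) := fun n i => min (x n i) (k i) with hz
      have hzK : ∀ n, z n ∈ K := fun n i => min_le_right _ _
      obtain ⟨L, hLK, ψ, hψmono, hψtend⟩ := hK.tendsto_subseq hzK
      have hxt : Tendsto (fun j => x (ψ j)) atTop (𝓝 L) := by
        rw [tendsto_pi_nhds]
        intro i
        have h := (tendsto_pi_nhds.1 hψtend) i
        apply h.congr'
        filter_upwards [eventually_ge_atTop (i + 1)] with j hj
        have hψj : i < ψ j := lt_of_lt_of_le (Nat.lt_of_lt_of_le (Nat.lt_succ_self i) hj)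
          (hψmono.le_apply)
        have hxk : x (ψ j) i ≤ k i := by
          have := hxseq (ψ j)
          rw [hseq_desc] at this
          exact this i hψj
        simp [hz, min_eq_left hxk]
      have h1 : Tendsto (fun j => f (x (ψ j))) atTop (𝓝 (f L)) := (f_cont.tendsto L).comp hxt
      have h2 : Tendsto (fun j => f (x (ψ j))) atTop (𝓝 y) := by
        rw [tendsto_iff_dist_tendsto_zero]
        apply squeeze_zero (g := fun j : ℕ => 1 / ((j : ℝ) + 1)) (fun j => dist_nonneg)
        · intro j
          have := hxdist (ψ j)
          rw [dist_comm] at this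
          refine this.le.trans (one_div_le_one_div_of_le (by positivity) ?_)
          have : (j : ℝ) ≤ (ψ j : ℝ) := by exact_mod_cast hψmono.le_apply
          linarith
        · exact tendsto_one_div_add_atTop_nhds_zero_nat
      exact ⟨L, hLK, tendsto_nhds_unique h1 h2⟩
    have hDmeas : ∀ n, NullMeasurableSet (D n) μ :=
      fun n => (isClosed_closure.measurableSet).nullMeasurableSet
    have hiInter : μ (⋂ n, D n) = ⨅ n, μ (D n) :=
      Directed.measure_iInter hDmeas (hDanti.directed_ge) ⟨0, measure_ne_top μ _⟩
    have hle : μ (range f) ≤ μ (f '' K) + ε := by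
      have h3 : ∀ n, μ (range f) ≤ μ (D n) + ε := fun n =>
        (hinv' n).trans (add_le_add_left (measure_mono subset_closure) ε)
      have h4 : μ (range f) ≤ (⨅ n, μ (D n)) + ε := by
        rw [ENNReal.iInf_add]
        exact le_iInf h3
      rw [← hiInter] at h4
      exact h4.trans (add_le_add_left (measure_mono hDsub) ε)
    refine ⟨f '' K, hK.image f_cont, image_subset_range f K, hle⟩
  -- now conclude null-measurability
  have hε : ∀ n : ℕ, ((n : ℝ≥0∞) + 1)⁻¹ ≠ 0 := by
    intro n
    simp only [ne_eq, ENNReal.inv_eq_zero]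
    exact ENNReal.add_ne_top.2 ⟨ENNReal.natCast_ne_top n, ENNReal.one_ne_top⟩
  choose C hCcomp hCsub hCle using fun n : ℕ => key ((n : ℝ≥0∞) + 1)⁻¹ (hε n)
  set Cu : Set X := ⋃ n, C n with hCu
  have hCuA : Cu ⊆ range f := iUnion_subset hCsub
  have hCum : MeasurableSet Cu :=
    MeasurableSet.iUnion fun n => (hCcomp n).isClosed.measurableSet
  have hCuge : μ (range f) ≤ μ Cu := by
    refine ENNReal.le_of_forall_pos_le_add fun δ hδ hfin => ?_
    obtain ⟨n, hn⟩ := exists_nat_one_div_lt (ε := (δ : ℝ≥0)) (by exact_mod_cast hδ)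
    have h7 : ((n : ℝ≥0∞) + 1)⁻¹ ≤ (δ : ℝ≥0∞) := by
      have h8 : ((n : ℝ≥0∞) + 1)⁻¹ = ((((n : ℝ≥0) + 1)⁻¹ : ℝ≥0) : ℝ≥0∞) := by
        rw [ENNReal.coe_inv (by positivity)]
        push_cast
        ring_nf
      rw [h8]
      rw [one_div] at hn
      exact_mod_cast hn.le
    calc μ (range f) ≤ μ (C n) + ((n : ℝ≥0∞) + 1)⁻¹ := hCle n
      _ ≤ μ Cu + ((n : ℝ≥0∞) + 1)⁻¹ :=
          add_le_add_left (measure_mono (subset_iUnion C n)) _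
      _ ≤ μ Cu + δ := add_le_add_right h7 _
  have hnull : μ (range f \ Cu) = 0 := by
    have h5 : range f \ Cu ⊆ toMeasurable μ (range f) \ Cu :=
      diff_subset_diff_left (subset_toMeasurable μ _)
    have h6 : μ (toMeasurable μ (range f) \ Cu) = 0 := by
      rw [measure_diff (hCuA.trans (subset_toMeasurable μ _)) hCum.nullMeasurableSet
        (measure_ne_top μ _), measure_toMeasurable]
      exact tsub_eq_zero_of_le hCuge
    exact measure_mono_null h5 h6
  have : range f = Cu ∪ (range f \ Cu) := (union_diff_cancel hCuA).symm
  rw [this]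
  exact (hCum.nullMeasurableSet).union (NullMeasurableSet.of_null hnull)

theorem exists_cantor_rep {Ω : Type*} [MeasurableSpace Ω] (A : Set (Ω × ℝ≥0))
    (hA : MeasurableSet A) :
    ∃ φ : Ω → ℕ → Bool, Measurable φ ∧ ∃ A' : Set ((ℕ → Bool) × ℝ≥0),
      MeasurableSet A' ∧ A = (fun p : Ω × ℝ≥0 => (φ p.1, p.2)) ⁻¹' A' := by
  classical
  have hA' : MeasurableSet[MeasurableSpace.generateFrom
      (image2 (· ×ˢ ·) { s : Set Ω | MeasurableSet s } { t : Set ℝ≥0 | MeasurableSet t })] A := by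
    rwa [generateFrom_prod]
  clear hA
  induction A, hA' using MeasurableSpace.generateFrom_induction with
  | hC t ht _ =>
    obtain ⟨s, hs, u, hu, rfl⟩ := ht
    replace hs : MeasurableSet s := hs
    replace hu : MeasurableSet u := hu
    refine ⟨fun ω _ => if ω ∈ s then true else false,
      measurable_pi_lambda _ fun _ => Measurable.ite hs measurable_const measurable_const,
      {x : ℕ → Bool | x 0 = true} ×ˢ u, ?_, ?_⟩
    · have h0 : {x : ℕ → Bool | x 0 = true} = (fun x : ℕ → Bool => x 0) ⁻¹' {true} := rfl
      rw [h0]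
      exact ((measurable_pi_apply 0) (MeasurableSet.singleton true)).prod hu
    ext ⟨ω, t⟩
    by_cases hω : ω ∈ s <;> simp [hω]
  | empty =>
    exact ⟨fun _ _ => false, measurable_const, ∅, MeasurableSet.empty, by simp⟩
  | compl t ht ih =>
    obtain ⟨φ, hφ, A', hA', rfl⟩ := ih
    exact ⟨φ, hφ, A'ᶜ, hA'.compl, by simp⟩
  | iUnion s hs ih =>
    choose φ hφ A' hA' hrep using ih
    set e : ℕ × ℕ ≃ ℕ := Nat.pairEquiv with he
    refine ⟨fun ω m => φ (e.symm m).1 ω (e.symm m).2,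
      measurable_pi_lambda _ fun m =>
        (measurable_pi_apply (e.symm m).2).comp (hφ (e.symm m).1), ?_⟩
    set r : ℕ → (ℕ → Bool) → ℕ → Bool := fun n x m => x (e (n, m)) with hr
    have hrm : ∀ n, Measurable (r n) :=
      fun n => measurable_pi_lambda _ fun m => measurable_pi_apply _
    refine ⟨⋃ n, (fun q : (ℕ → Bool) × ℝ≥0 => (r n q.1, q.2)) ⁻¹' A' n,
      MeasurableSet.iUnion fun n =>
        (((hrm n).comp measurable_fst).prodMk measurable_snd) (hA' n), ?_⟩
    have hcomp : ∀ n ω, r n (fun m => φ (e.symm m).1 ω (e.symm m).2) = φ n ω := by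
      intro n ω
      funext m
      simp [hr, Equiv.symm_apply_apply]
    have hn : ∀ n, s n = (fun p : Ω × ℝ≥0 => ((fun m => φ (e.symm m).1 p.1 (e.symm m).2), p.2))
        ⁻¹' ((fun q : (ℕ → Bool) × ℝ≥0 => (r n q.1, q.2)) ⁻¹' A' n) := by
      intro n
      rw [hrep n]
      ext ⟨ω, t⟩
      simp only [mem_preimage]
      rw [hcomp n ω]
    rw [preimage_iUnion]
    exact iUnion_congr hn

/-- The lexicographically least branch of a set of sequences. -/
noncomputable def lexMin (C : Set (ℕ → ℕ)) : ℕ → ℕ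
  | n => sInf {k | ∃ u ∈ C, (∀ i, (_ : i < n) → u i = lexMin C i) ∧ u n = k}
  termination_by n => n
  decreasing_by omega

theorem lexMin_def (C : Set (ℕ → ℕ)) (n : ℕ) :
    lexMin C n = sInf {k | ∃ u ∈ C, (∀ i, i < n → u i = lexMin C i) ∧ u n = k} := by
  rw [lexMin]

theorem lexMin_realize {C : Set (ℕ → ℕ)} (hne : C.Nonempty) :
    ∀ n : ℕ, ∃ u ∈ C, ∀ i, i < n → u i = lexMin C i := by
  intro n
  induction n with
  | zero => exact ⟨hne.choose, hne.choose_spec, fun i hi => absurd hi (Nat.not_lt_zero i)⟩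
  | succ n ih =>
    obtain ⟨u, hu, hpre⟩ := ih
    have hKne : {k | ∃ u ∈ C, (∀ i, i < n → u i = lexMin C i) ∧ u n = k}.Nonempty :=
      ⟨u n, u, hu, hpre, rfl⟩
    have hmem := Nat.sInf_mem hKne
    rw [← lexMin_def] at hmem
    obtain ⟨v, hv, hvpre, hvn⟩ := hmem
    refine ⟨v, hv, fun i hi => ?_⟩
    rcases Nat.lt_succ_iff_lt_or_eq.1 hi with hi' | rfl
    · exact hvpre i hi'
    · exact hvn

theorem lexMin_mem {C : Set (ℕ → ℕ)} (hC : IsClosed C) (hne : C.Nonempty) : lexMin C ∈ C := by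
  choose u hu hpre using lexMin_realize hne
  have htend : Tendsto u atTop (𝓝 (lexMin C)) := by
    rw [tendsto_pi_nhds]
    intro i
    apply tendsto_const_nhds.congr'
    filter_upwards [eventually_ge_atTop (i + 1)] with n hn
    exact (hpre n i (Nat.lt_of_succ_le hn)).symm
  exact hC.mem_of_tendsto htend (Eventually.of_forall hu)

theorem cyl_subset_of_isOpen {U : Set (ℕ → ℕ)} (hU : IsOpen U) {u : ℕ → ℕ} (hu : u ∈ U) :
    ∃ n : ℕ, {v : ℕ → ℕ | ∀ i, i < n → v i = u i} ⊆ U := by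
  obtain ⟨I, t, h1, h2⟩ := isOpen_pi_iff.1 hU u hu
  refine ⟨I.sup id + 1, fun v hv => h2 fun i hi => ?_⟩
  have : v i = u i := hv i (Nat.lt_succ_of_le (Finset.le_sup (f := id) hi))
  rw [this]
  exact (h1 i hi).2

end Auxiliary

/-- **Measurable section theorem on `ℝ⁺`.** Let `(Ω, F, P)` be a complete probability space
and `A` a measurable subset of `Ω × ℝ⁺` for the product σ-field.  Then there is an
`F`-measurable random variable `T : Ω → [0,∞]` whose graph is contained in `A` (on
`{T < ∞}`) and such that `{T < ∞} = π_Ω(A)`. -/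
theorem measurable_section_real
    {Ω : Type*} [MeasurableSpace Ω]
    (P : Measure Ω) [IsProbabilityMeasure P] (hP : P.IsComplete)
    (A : Set (Ω × ℝ≥0)) (hA : MeasurableSet A) :
    ∃ T : Ω → ℝ≥0∞, Measurable T ∧
      (∀ ω, T ω < ⊤ → (ω, (T ω).toNNReal) ∈ A) ∧
      {ω | T ω < ⊤} = Prod.fst '' A := by
  classical
  haveI : PolishSpace (ℕ → Bool) := {}
  open Set Filter Topology in
  obtain ⟨φ, hφ, A', hA', hrep⟩ := exists_cantor_rep A hA
  have hAn : AnalyticSet A' := hA'.analyticSet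
  rw [AnalyticSet] at hAn
  rcases hAn with hAe | ⟨f, fcont, frange⟩
  · -- `A' = ∅`, hence `A = ∅`
    subst hAe
    refine ⟨fun _ => ⊤, measurable_const, ?_, ?_⟩
    · intro ω h; exact absurd h (lt_irrefl _)
    · rw [hrep]; simp
  -- main case; set up the selection
  set S : (ℕ → Bool) → Set (ℕ → ℕ) := fun x => {u | (f u).1 = x} with hS
  set g : (ℕ → Bool) → ℝ≥0 := fun x => (f (lexMin (S x))).2 with hg
  set E0 : Set (ℕ → Bool) := Prod.fst '' A' with hE0def
  set T : Ω → ℝ≥0∞ := fun ω => if φ ω ∈ E0 then ((g (φ ω) : ℝ≥0) : ℝ≥0∞) else ⊤ with hT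
  have hSclosed : ∀ x, IsClosed (S x) :=
    fun x => isClosed_eq (continuous_fst.comp fcont) continuous_const
  have hE0iff : ∀ x, x ∈ E0 ↔ (S x).Nonempty := by
    intro x
    constructor
    · rintro ⟨p, hp, rfl⟩
      rw [← frange] at hp
      obtain ⟨u, rfl⟩ := hp
      exact ⟨u, rfl⟩
    · rintro ⟨u, hu⟩
      exact ⟨f u, by rw [← frange]; exact mem_range_self u, hu⟩
  have hσ : ∀ x ∈ E0, lexMin (S x) ∈ S x := fun x hx =>
    lexMin_mem (hSclosed x) ((hE0iff x).1 hx)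
  have hgraph' : ∀ x ∈ E0, (x, g x) ∈ A' := by
    intro x hx
    have h1 : (f (lexMin (S x))).1 = x := hσ x hx
    have h2 : f (lexMin (S x)) ∈ A' := by rw [← frange]; exact mem_range_self _
    have h3 : (x, g x) = f (lexMin (S x)) := Prod.ext h1.symm rfl
    rw [h3]; exact h2
  have hmemA : ∀ (ω : Ω) (t : ℝ≥0), (ω, t) ∈ A ↔ (φ ω, t) ∈ A' := by
    intro ω t; rw [hrep]; exact Iff.rfl
  have hE0iff' : ∀ ω, φ ω ∈ E0 ↔ ω ∈ Prod.fst '' A := by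
    intro ω
    constructor
    · rintro ⟨p, hp, hpx⟩
      refine ⟨(ω, p.2), (hmemA ω p.2).2 ?_, rfl⟩
      have : ((φ ω, p.2) : (ℕ → Bool) × ℝ≥0) = p := Prod.ext hpx.symm rfl
      rw [this]; exact hp
    · rintro ⟨⟨ω', t⟩, hp, rfl⟩
      exact ⟨(φ ω', t), (hmemA ω' t).1 hp, rfl⟩
  -- measurability machinery
  haveI := hP
  set μ : Measure (ℕ → Bool) := Measure.map φ P with hμ
  haveI : IsProbabilityMeasure μ := Measure.isProbabilityMeasure_map hφ.aemeasurable
  have hGood : ∀ Sset : Set (ℕ → Bool), AnalyticSet Sset → MeasurableSet (φ ⁻¹' Sset) := by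
    intro Sset hSA
    obtain ⟨t, hts, htm, hteq⟩ :=
      (analyticSet_nullMeasurable μ hSA).exists_measurable_subset_ae_eq
    have hnull : μ (Sset \ t) = 0 := (ae_eq_set.1 hteq).2
    have hnull2 : P (φ ⁻¹' (Sset \ t)) = 0 :=
      le_antisymm (le_trans (Measure.le_map_apply hφ.aemeasurable _) (le_of_eq hnull)) zero_le
    have hdecomp : φ ⁻¹' Sset = φ ⁻¹' t ∪ φ ⁻¹' (Sset \ t) := by
      rw [← preimage_union, union_diff_cancel hts]
    rw [hdecomp]
    exact (hφ htm).union (measurableSet_of_null hnull2)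
  -- the Suslin scheme sets
  set Cyl : ℕ → (ℕ → ℕ) → Set (ℕ → ℕ) := fun n s => {u | ∀ i, i < n → u i = s i} with hCyl
  set E : ℕ → (ℕ → ℕ) → Set (ℕ → Bool) := fun n s => (fun u => (f u).1) '' Cyl n s with hE
  have hCylclosed : ∀ n s, IsClosed (Cyl n s) := by
    intro n s
    have h4 : Cyl n s = ⋂ (i : ℕ) (_ : i < n), {u : ℕ → ℕ | u i = s i} := by
      ext u; simp [hCyl]
    rw [h4]
    exact isClosed_iInter fun i => isClosed_iInter fun _ =>
      isClosed_eq (continuous_apply i) continuous_const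
  have hEanalytic : ∀ n s, AnalyticSet (E n s) := fun n s =>
    ((hCylclosed n s).analyticSet).image_of_continuous (continuous_fst.comp fcont)
  have hE0eq : ∀ s, E 0 s = E0 := by
    intro s
    rw [hE0def, ← frange]
    have h5 : Cyl 0 s = univ := by ext u; simp [hCyl]
    show (fun u => (f u).1) '' Cyl 0 s = Prod.fst '' range f
    rw [h5, image_univ]
    ext x
    constructor
    · rintro ⟨u, rfl⟩; exact ⟨f u, mem_range_self u, rfl⟩
    · rintro ⟨p, ⟨u, rfl⟩, rfl⟩; exact ⟨u, rfl⟩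
  have hEmem : ∀ n s x, x ∈ E n s ↔ ∃ u ∈ S x, ∀ i, i < n → u i = s i := by
    intro n s x
    constructor
    · rintro ⟨u, hu, rfl⟩; exact ⟨u, rfl, hu⟩
    · rintro ⟨u, hu, hpre⟩; exact ⟨u, hpre, hu⟩
  set Gd : ℕ → (ℕ → ℕ) → Set (ℕ → Bool) :=
    fun n s => {x | x ∈ E0 ∧ ∀ i, i < n → lexMin (S x) i = s i} with hGd
  have hGd0 : ∀ s, Gd 0 s = E0 := by intro s; ext x; simp [hGd]
  have hGdS : ∀ n s, Gd (n + 1) s =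
      (Gd n s ∩ E (n + 1) s) \ ⋃ (j : ℕ) (_ : j < s n), E (n + 1) (Function.update s n j) := by
    intro n s
    ext x
    simp only [hGd, mem_setOf_eq, mem_diff, mem_inter_iff, mem_iUnion, not_exists]
    constructor
    · rintro ⟨hx0, hpre⟩
      obtain ⟨u, hu, hupre⟩ := lexMin_realize ((hE0iff x).1 hx0) (n + 1)
      refine ⟨⟨⟨hx0, fun i hi => hpre i (Nat.lt_succ_of_lt hi)⟩,
        (hEmem _ _ _).2 ⟨u, hu, fun i hi => by rw [hupre i hi, hpre i hi]⟩⟩, ?_⟩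
      rintro j hj hmem
      obtain ⟨v, hv, hvpre⟩ := (hEmem _ _ _).1 hmem
      have hj' : lexMin (S x) n ≤ j := by
        rw [lexMin_def]
        apply Nat.sInf_le
        refine ⟨v, hv, fun i hi => ?_, ?_⟩
        · rw [hvpre i (Nat.lt_succ_of_lt hi), Function.update_of_ne (Nat.ne_of_lt hi),
            ← hpre i (Nat.lt_succ_of_lt hi)]
        · rw [hvpre n (Nat.lt_succ_self n), Function.update_self]
      rw [hpre n (Nat.lt_succ_self n)] at hj'
      omega
    · rintro ⟨⟨⟨hx0, hpre⟩, hmemE⟩, hnot⟩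
      refine ⟨hx0, fun i hi => ?_⟩
      rcases Nat.lt_succ_iff_lt_or_eq.1 hi with hi' | heq
      · exact hpre i hi'
      rw [heq]
      obtain ⟨u, hu, hupre⟩ := (hEmem _ _ _).1 hmemE
      have hle : lexMin (S x) n ≤ s n := by
        rw [lexMin_def]
        apply Nat.sInf_le
        exact ⟨u, hu, fun i hi' => by
          rw [hupre i (Nat.lt_succ_of_lt hi'), ← hpre i hi'], hupre n (Nat.lt_succ_self n)⟩
      rcases eq_or_lt_of_le hle with heq | hlt
      · exact heq
      exfalso
      apply hnot (lexMin (S x) n) hlt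
      obtain ⟨v, hv, hvpre⟩ := lexMin_realize ((hE0iff x).1 hx0) (n + 1)
      refine (hEmem _ _ _).2 ⟨v, hv, fun i hi' => ?_⟩
      rcases Nat.lt_succ_iff_lt_or_eq.1 hi' with hi'' | heq
      · rw [Function.update_of_ne (Nat.ne_of_lt hi''), hvpre i (Nat.lt_succ_of_lt hi''),
          hpre i hi'']
      · rw [heq, Function.update_self]; exact hvpre n (Nat.lt_succ_self n)
  have hGoodGd : ∀ n s, MeasurableSet (φ ⁻¹' Gd n s) := by
    intro n
    induction n with
    | zero =>
      intro s
      rw [hGd0, ← hE0eq (fun _ => 0)]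
      exact hGood _ (hEanalytic 0 _)
    | succ n ih =>
      intro s
      rw [hGdS n s, diff_eq, preimage_inter, preimage_inter, preimage_compl, preimage_iUnion]
      refine ((ih s).inter (hGood _ (hEanalytic (n + 1) s))).inter (MeasurableSet.compl ?_)
      refine MeasurableSet.iUnion fun j => ?_
      rw [preimage_iUnion]
      exact MeasurableSet.iUnion fun _ => hGood _ (hEanalytic (n + 1) _)
  -- level sets of T are measurable
  have hlevel : ∀ c : ℝ≥0∞, MeasurableSet {ω | T ω < c} := by
    intro c
    set U : Set (ℕ → ℕ) := f ⁻¹' {p : (ℕ → Bool) × ℝ≥0 | ((p.2 : ℝ≥0∞)) < c} with hU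
    have hUopen : IsOpen U := by
      apply IsOpen.preimage fcont
      have : {p : (ℕ → Bool) × ℝ≥0 | ((p.2 : ℝ≥0∞)) < c} =
          (fun p : (ℕ → Bool) × ℝ≥0 => ((p.2 : ℝ≥0∞))) ⁻¹' Iio c := rfl
      rw [this]
      exact isOpen_Iio.preimage (ENNReal.continuous_coe.comp continuous_snd)
    have hTiff : ∀ ω, T ω < c ↔ φ ω ∈ E0 ∧ lexMin (S (φ ω)) ∈ U := by
      intro ω
      by_cases h : φ ω ∈ E0
      · simp only [hT, if_pos h, hU, mem_preimage, mem_setOf_eq, hg]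
        exact ⟨fun hc => ⟨h, hc⟩, fun hc => hc.2⟩
      · simp only [hT, if_neg h]
        exact ⟨fun hc => absurd hc (not_top_lt), fun hc => absurd hc.1 h⟩
    have hWeq : {x | x ∈ E0 ∧ lexMin (S x) ∈ U} =
        ⋃ (l : List ℕ) (_ : Cyl l.length (fun i => l.getD i 0) ⊆ U),
          Gd l.length (fun i => l.getD i 0) := by
      ext x
      simp only [mem_setOf_eq, mem_iUnion]
      constructor
      · rintro ⟨hx0, hσU⟩
        obtain ⟨n, hn⟩ := cyl_subset_of_isOpen hUopen hσU
        refine ⟨List.ofFn (fun i : Fin n => lexMin (S x) i), ?_, ?_⟩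
        · intro v hv
          apply hn
          intro i hi
          have hi' : i < (List.ofFn (fun i : Fin n => lexMin (S x) i)).length := by
            rwa [List.length_ofFn]
          have h9 : v i = (List.ofFn fun i : Fin n => lexMin (S x) i).getD i 0 := hv i hi'
          rwa [List.getD_eq_getElem _ _ hi', List.getElem_ofFn] at h9
        · refine ⟨hx0, fun i hi => ?_⟩
          show lexMin (S x) i = (List.ofFn fun i : Fin n => lexMin (S x) i).getD i 0
          rw [List.getD_eq_getElem _ _ hi, List.getElem_ofFn]
      · rintro ⟨l, hsub, hx0, hpre⟩
        exact ⟨hx0, hsub fun i hi => hpre i hi⟩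
    have h6 : {ω | T ω < c} = φ ⁻¹' {x | x ∈ E0 ∧ lexMin (S x) ∈ U} := by
      ext ω
      exact hTiff ω
    rw [h6, hWeq, preimage_iUnion]
    refine MeasurableSet.iUnion fun l => ?_
    rw [preimage_iUnion]
    exact MeasurableSet.iUnion fun _ => hGoodGd _ _
  refine ⟨T, measurable_of_Iio (fun c => hlevel c), ?_, ?_⟩
  · -- graph property
    intro ω hω
    by_cases h : φ ω ∈ E0
    · have hTω : T ω = ((g (φ ω) : ℝ≥0) : ℝ≥0∞) := by rw [hT]; simp [h]
      rw [hTω, ENNReal.toNNReal_coe]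
      exact (hmemA ω (g (φ ω))).2 (hgraph' (φ ω) h)
    · exfalso
      have hTω : T ω = ⊤ := by rw [hT]; simp [h]
      rw [hTω] at hω
      exact absurd hω (lt_irrefl _)
  · -- the set where T is finite
    ext ω
    simp only [mem_setOf_eq]
    constructor
    · intro hω
      by_cases h : φ ω ∈ E0
      · exact (hE0iff' ω).1 h
      · exfalso
        have hTω : T ω = ⊤ := by rw [hT]; simp [h]
        rw [hTω] at hω
        exact absurd hω (lt_irrefl _)
    · intro hω
      have h : φ ω ∈ E0 := (hE0iff' ω).2 hω
      have hTω : T ω = ((g (φ ω) : ℝ≥0) : ℝ≥0∞) := by rw [hT]; simp [h]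
      rw [hTω]
      exact ENNReal.coe_lt_top
end

section
/- Let (Ω, F) be a measurable space and A ∈ F ⊗ B(ℝ+). Then: (i) the projection π_Ω(A) belongs to the universal completion F^U of F; (ii) there exists an F^U-measurable map T : Ω → [0, ∞] such that { ω : T(ω) < ∞ } = π_Ω(A) and (ω, T(ω)) ∈ A whenever T(ω) < ∞; (iii) for every F ⊗ B(ℝ+)-measurable function f : Ω × ℝ+ → ℝ, the function g(ω) := sup{ f(ω, t) : (ω, t) ∈ A } (sup ∅ = −∞) is F^U-measurable as a map into ℝ ∪ {−∞, +∞}. -/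
open MeasureTheory
open scoped ENNReal NNReal
open Set Filter Topology

/-- The universal completion `F^U = ∩_P F^P` of a σ-field: a set is measurable iff it is
null-measurable (i.e. belongs to the `P`-completion) for every probability measure `P`. -/
def univCompletion {Ω : Type*} (m : MeasurableSpace Ω) : MeasurableSpace Ω :=
  letI : MeasurableSpace Ω := m
  { MeasurableSet' := fun s =>
      ∀ μ : Measure Ω, IsProbabilityMeasure μ → NullMeasurableSet s μ
    measurableSet_empty := fun _ _ => MeasurableSet.empty.nullMeasurableSet
    measurableSet_compl := fun _ hs μ hμ => (hs μ hμ).compl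
    measurableSet_iUnion := fun _ hf μ hμ =>
      NullMeasurableSet.iUnion fun i => hf i μ hμ }

namespace UnivProj


/-- bounded cylinder sets in Baire space -/
def FS (u : List ℕ) : Set (ℕ → ℕ) := {y | ∀ i, (hi : i < u.length) → y i ≤ u[i]}

lemma FS_nil : FS ([] : List ℕ) = univ := by
  ext y; simp [FS]

lemma FS_concat (u : List ℕ) (k : ℕ) :
    FS (u ++ [k]) = FS u ∩ {y | y u.length ≤ k} := by
  ext y
  constructor
  · intro h
    refine ⟨fun i hi => ?_, ?_⟩
    · have h2 : i < (u ++ [k]).length := by simp; omega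
      have := h i h2
      rwa [List.getElem_append_left hi] at this
    · have h2 : u.length < (u ++ [k]).length := by simp
      have := h u.length h2
      rwa [List.getElem_concat_length] at this
      rfl
  · rintro ⟨h1, h2⟩ i hi
    have hlen : i < u.length + 1 := by simpa using hi
    rcases Nat.lt_or_ge i u.length with hlt | hge
    · rw [List.getElem_append_left hlt]; exact h1 i hlt
    · have hieq : i = u.length := by omega
      subst hieq
      rw [List.getElem_concat_length]
      · exact h2
      · rfl

lemma iUnion_FS (u : List ℕ) : ⋃ k, FS (u ++ [k]) = FS u := by
  simp only [FS_concat]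
  rw [← inter_iUnion]
  have : ⋃ k, {y : ℕ → ℕ | y u.length ≤ k} = univ := by
    ext y; simp only [mem_iUnion, mem_setOf_eq, mem_univ, iff_true]
    exact ⟨y u.length, le_rfl⟩
  rw [this, inter_univ]

lemma FS_mono (u : List ℕ) : Monotone (fun k => FS (u ++ [k])) := by
  intro a b hab y hy
  have h1 : y ∈ FS (u ++ [a]) := hy
  rw [FS_concat] at h1
  show y ∈ FS (u ++ [b])
  rw [FS_concat]
  exact ⟨h1.1, h1.2.trans hab⟩

variable {X : Type*} [TopologicalSpace X] [PolishSpace X] [MeasurableSpace X] [BorelSpace X]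

lemma exists_compact_le (μ : Measure X) [IsFiniteMeasure μ] {h : (ℕ → ℕ) → X}
    (hh : Continuous h) {ε : ℝ≥0∞} (hε : 0 < ε) (hεtop : ε ≠ ⊤) :
    ∃ K, K ⊆ range h ∧ IsCompact K ∧ μ (range h) ≤ μ K + ε := by
  letI := TopologicalSpace.upgradeIsCompletelyMetrizable X
  -- step existence
  have key : ∀ (u : List ℕ) (n : ℕ),
      ∃ k, μ (h '' FS u) ≤ μ (h '' FS (u ++ [k])) + ε / 2 ^ (n + 1) := by
    intro u n
    have hδpos : (0 : ℝ≥0∞) < ε / 2 ^ (n + 1) :=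
      ENNReal.div_pos hε.ne' (by simp [ENNReal.pow_ne_top])
    have hδtop : ε / 2 ^ (n + 1) ≠ ⊤ :=
      (ENNReal.div_lt_top hεtop (by positivity)).ne
    set δ := ε / 2 ^ (n + 1)
    have hsup : μ (h '' FS u) = ⨆ k, μ (h '' FS (u ++ [k])) := by
      rw [← (Monotone.measure_iUnion (fun a b hab => image_mono (FS_mono u hab)))]
      rw [← image_iUnion, iUnion_FS]
    rcases le_or_gt (μ (h '' FS u)) δ with hle | hlt
    · exact ⟨0, hle.trans le_add_self⟩
    · have hne : μ (h '' FS u) ≠ ⊤ := measure_ne_top μ _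
      have hsub : μ (h '' FS u) - δ < μ (h '' FS u) :=
        ENNReal.sub_lt_self hne (hδpos.trans hlt).ne' hδpos.ne'
      obtain ⟨k, hk⟩ := lt_iSup_iff.1 (hsub.trans_eq hsup)
      refine ⟨k, ?_⟩
      have := (ENNReal.sub_lt_iff_lt_right hδtop hlt.le).1 hk
      exact this.le.trans (by rw [add_comm])
  choose pick hpick using key
  set u : ℕ → List ℕ := fun n => Nat.rec [] (fun n v => v ++ [pick v n]) n with hu
  have husucc : ∀ n, u (n + 1) = u n ++ [pick (u n) n] := fun n => rfl
  -- invariant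
  have sumle : ∀ n, ∑ i ∈ Finset.range n, ε / 2 ^ (i + 1) ≤ ε := by
    intro n
    have h1 : ∑' i : ℕ, ε / 2 ^ (i + 1) = ε := by
      have : ∀ i : ℕ, ε / 2 ^ (i + 1) = ε * (2⁻¹ * 2⁻¹ ^ i) := by
        intro i
        rw [div_eq_mul_inv, pow_succ', ENNReal.mul_inv (Or.inl two_ne_zero)
          (Or.inl ENNReal.ofNat_ne_top), ENNReal.inv_pow]
      simp_rw [this]
      rw [ENNReal.tsum_mul_left, ENNReal.tsum_mul_left, ENNReal.tsum_geometric,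
        ENNReal.one_sub_inv_two, inv_inv]
      rw [ENNReal.inv_mul_cancel two_ne_zero ENNReal.ofNat_ne_top, mul_one]
    calc ∑ i ∈ Finset.range n, ε / 2 ^ (i + 1) ≤ ∑' i : ℕ, ε / 2 ^ (i + 1) :=
          ENNReal.sum_le_tsum _
      _ = ε := h1
  have inv : ∀ n, μ (range h) ≤ μ (h '' FS (u n)) + ∑ i ∈ Finset.range n, ε / 2 ^ (i + 1) := by
    intro n
    induction n with
    | zero =>
      rw [show u 0 = ([] : List ℕ) from rfl, FS_nil, image_univ]
      simp
    | succ n ih =>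
      rw [Finset.sum_range_succ]
      calc μ (range h) ≤ μ (h '' FS (u n)) + ∑ i ∈ Finset.range n, ε / 2 ^ (i + 1) := ih
        _ ≤ (μ (h '' FS (u (n + 1))) + ε / 2 ^ (n + 1))
              + ∑ i ∈ Finset.range n, ε / 2 ^ (i + 1) := by
            refine add_le_add_left ?_ _
            rw [husucc]
            exact hpick (u n) n
        _ = μ (h '' FS (u (n + 1)))
              + (∑ i ∈ Finset.range n, ε / 2 ^ (i + 1) + ε / 2 ^ (n + 1)) := by ring
  have inv' : ∀ n, μ (range h) ≤ μ (h '' FS (u n)) + ε :=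
    fun n => (inv n).trans (add_le_add_right (sumle n) _)
  -- description of FS (u n)
  set b : ℕ → ℕ := fun i => pick (u i) i with hb
  have hulen : ∀ n, (u n).length = n := by
    intro n; induction n with
    | zero => rfl
    | succ n ih => rw [husucc, List.length_append, ih]; rfl
  have hFSu : ∀ n, FS (u n) = {y | ∀ i < n, y i ≤ b i} := by
    intro n; induction n with
    | zero => rw [show u 0 = [] from rfl, FS_nil]; ext y; simp
    | succ n ih =>
      rw [husucc, FS_concat, ih, hulen]
      ext y
      simp only [mem_inter_iff, mem_setOf_eq]
      constructor
      · rintro ⟨h1, h2⟩ i hi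
        rcases Nat.lt_or_ge i n with h | h
        · exact h1 i h
        · have : i = n := by omega
          subst this; exact h2
      · intro h1
        exact ⟨fun i hi => h1 i (by omega), h1 n (by omega)⟩
  set L : Set (ℕ → ℕ) := {y | ∀ i, y i ≤ b i} with hLdef
  have hLc : IsCompact L := by
    have : L = univ.pi (fun i => Iic (b i)) := by
      ext y; simp [Set.mem_pi, hLdef, Pi.le_def]
    rw [this]
    exact isCompact_univ_pi (fun i => (finite_Iic (b i)).isCompact)
  refine ⟨h '' L, image_subset_range h L, hLc.image hh, ?_⟩
  -- the closure intersection
  have hsubset : (⋂ n, closure (h '' FS (u n))) ⊆ h '' L := by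
    intro x hx
    simp only [mem_iInter] at hx
    have hx' : ∀ n : ℕ, ∃ y, y ∈ FS (u n) ∧ dist x (h y) < 1 / (n + 1) := by
      intro n
      have hpos : (0 : ℝ) < 1 / (n + 1) := by positivity
      obtain ⟨w, hw, hd⟩ := Metric.mem_closure_iff.1 (hx n) _ hpos
      obtain ⟨y, hy, rfl⟩ := hw
      exact ⟨y, hy, hd⟩
    choose y hy hdist using hx'
    set c : ℕ → ℕ := fun i => max (b i) (Finset.sup (Finset.range (i + 1)) (fun n => y n i))
    have hyc : ∀ n, y n ∈ univ.pi (fun i => Iic (c i)) := by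
      intro n
      intro i _
      simp only [mem_Iic]
      rcases Nat.lt_or_ge i n with hlt | hge
      · have hmem := hy n
        rw [hFSu n] at hmem
        exact le_max_of_le_left (hmem i hlt)
      · exact le_max_of_le_right (Finset.le_sup (f := fun m => y m i) (b := n) (Finset.mem_range.2 (by omega)))
    have hCc : IsCompact (univ.pi (fun i => Iic (c i))) :=
      isCompact_univ_pi (fun i => (finite_Iic (c i)).isCompact)
    obtain ⟨z, hz, φ, hφ, hφt⟩ := hCc.tendsto_subseq hyc
    have hzL : z ∈ L := by
      intro i
      have hev : ∀ᶠ j in atTop, y (φ j) i ≤ b i := by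
        filter_upwards [eventually_ge_atTop (i + 1)] with j hj
        have h2 : j ≤ φ j := hφ.le_apply
        have hmem := hy (φ j)
        rw [hFSu (φ j)] at hmem
        exact hmem i (by omega)
      have htend : Tendsto (fun j => y (φ j) i) atTop (𝓝 (z i)) :=
        ((continuous_apply i).tendsto z).comp hφt
      exact (isClosed_Iic.mem_of_tendsto htend (by simpa using hev) : z i ∈ Iic (b i))
    have h1 : Tendsto (fun j => h (y (φ j))) atTop (𝓝 (h z)) := (hh.tendsto z).comp hφt
    have hle : ∀ j, dist (h (y (φ j))) x ≤ 1 / ((j : ℝ) + 1) := by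
      intro j
      rw [dist_comm]
      refine (hdist (φ j)).le.trans ?_
      have hj : j ≤ φ j := hφ.le_apply
      have h2 : (j : ℝ) + 1 ≤ (φ j : ℝ) + 1 := by exact_mod_cast Nat.succ_le_succ hj
      exact one_div_le_one_div_of_le (by positivity) h2
    have h2 : Tendsto (fun j => h (y (φ j))) atTop (𝓝 x) := by
      rw [tendsto_iff_dist_tendsto_zero]
      exact squeeze_zero (fun j => dist_nonneg) hle tendsto_one_div_add_atTop_nhds_zero_nat
    have := tendsto_nhds_unique h1 h2
    exact this ▸ (mem_image_of_mem h hzL)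
  -- measure estimate
  have hanti : Antitone (fun n => closure (h '' FS (u n))) := by
    intro a a' haa'
    apply closure_mono
    apply image_mono
    rw [hFSu, hFSu]
    intro y hy i hi
    exact hy i (lt_of_lt_of_le hi haa')
  have hiInter : μ (⋂ n, closure (h '' FS (u n))) = ⨅ n, μ (closure (h '' FS (u n))) :=
    Antitone.measure_iInter hanti
      (fun n => isClosed_closure.measurableSet.nullMeasurableSet)
      ⟨0, measure_ne_top μ _⟩
  have hstep : μ (range h) - ε ≤ μ (h '' L) := by
    have h1 : μ (range h) - ε ≤ ⨅ n, μ (closure (h '' FS (u n))) := by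
      refine le_iInf fun n => ?_
      rw [tsub_le_iff_right]
      exact (inv' n).trans (add_le_add_left (measure_mono subset_closure) ε)
    exact h1.trans (hiInter ▸ measure_mono hsubset)
  exact tsub_le_iff_right.1 hstep

theorem analytic_nullMeasurable {S : Set X} (hS : AnalyticSet S) (μ : Measure X)
    [IsFiniteMeasure μ] : NullMeasurableSet S μ := by
  rcases eq_empty_or_nonempty S with rfl | hne
  · exact MeasurableSet.empty.nullMeasurableSet
  obtain ⟨β, tβ, pβ, f, hf, hfr⟩ := analyticSet_iff_exists_polishSpace_range.1 hS
  haveI : Nonempty β := by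
    rw [← range_nonempty_iff_nonempty, hfr]; exact hne
  obtain ⟨s, hs, hssurj⟩ := PolishSpace.exists_nat_nat_continuous_surjective β
  have hrange : range (f ∘ s) = S := by
    rw [range_comp, hssurj.range_eq, image_univ, hfr]
  have step : ∀ m : ℕ, ∃ K, K ⊆ S ∧ IsCompact K ∧ μ S ≤ μ K + (↑(m + 1) : ℝ≥0∞)⁻¹ := by
    intro m
    have hpos : (0 : ℝ≥0∞) < (↑(m + 1) : ℝ≥0∞)⁻¹ :=
      ENNReal.inv_pos.2 (ENNReal.natCast_ne_top _)
    have hnetop : (↑(m + 1) : ℝ≥0∞)⁻¹ ≠ ⊤ := by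
      simp [ENNReal.inv_ne_top]
    obtain ⟨K, hK1, hK2, hK3⟩ := exists_compact_le μ (hf.comp hs) hpos hnetop
    exact ⟨K, hrange ▸ hK1, hK2, by rwa [hrange] at hK3⟩
  choose K hKS hKc hKμ using step
  set B := ⋃ m, K m with hB
  have hBmeas : MeasurableSet B :=
    MeasurableSet.iUnion fun m => (hKc m).isClosed.measurableSet
  have hBS : B ⊆ S := iUnion_subset hKS
  have hμBS : μ S ≤ μ B := by
    have htend : Tendsto (fun m : ℕ => μ B + (↑(m + 1) : ℝ≥0∞)⁻¹) atTop (𝓝 (μ B)) := by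
      have h0 : Tendsto (fun m : ℕ => (↑(m + 1) : ℝ≥0∞)⁻¹) atTop (𝓝 0) :=
        ENNReal.tendsto_inv_nat_nhds_zero.comp (tendsto_add_atTop_nat 1)
      simpa using tendsto_const_nhds.add h0
    refine ge_of_tendsto' htend fun m => ?_
    exact (hKμ m).trans (add_le_add_left (measure_mono (subset_iUnion K m)) _)
  have hμeq : μ B = μ S := le_antisymm (measure_mono hBS) hμBS
  have hnull : μ (toMeasurable μ S \ B) = 0 := by
    rw [measure_diff (hBS.trans (subset_toMeasurable μ S)) hBmeas.nullMeasurableSet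
      (measure_ne_top μ B), measure_toMeasurable, hμeq, tsub_self]
  have : S = B ∪ (S \ B) := (union_diff_cancel hBS).symm
  rw [this]
  exact hBmeas.nullMeasurableSet.union
    (NullMeasurableSet.of_null
      (measure_mono_null (diff_subset_diff_left (subset_toMeasurable μ S)) hnull))




lemma getLast_eq_of_eq {α : Type*} {l l' : List α} (h : l = l') (h1 : l ≠ []) :
    l.getLast h1 = l'.getLast (h ▸ h1) := by subst h; rfl

lemma univCompletion_measurableSet {Ω : Type*} {m : MeasurableSpace Ω} {s : Set Ω}
    (h : ∀ μ : Measure Ω, IsProbabilityMeasure μ → NullMeasurableSet s μ) :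
    MeasurableSet[univCompletion m] s := h

lemma measurable_of_countable_fibers {α γ β : Type*} [Countable γ] {m : MeasurableSpace α}
    [MeasurableSpace β] (q : α → γ) (G : γ → β)
    (hq : ∀ c, MeasurableSet[m] (q ⁻¹' {c})) : Measurable[m] fun x => G (q x) := by
  intro B hB
  have hEq : (fun x => G (q x)) ⁻¹' B = ⋃ c ∈ {c | G c ∈ B}, q ⁻¹' {c} := by
    ext x; simp
  rw [hEq]
  exact MeasurableSet.biUnion (to_countable _) (fun c _ => hq c)

/-- exact cylinders in Baire space -/
def Cyl (u : List ℕ) : Set (ℕ → ℕ) := {y | ∀ i, (hi : i < u.length) → y i = u[i]}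

lemma Cyl_nil : Cyl ([] : List ℕ) = univ := by ext y; simp [Cyl]

lemma isClosed_Cyl (u : List ℕ) : IsClosed (Cyl u) := by
  have : Cyl u = ⋂ i, ⋂ (hi : i < u.length), (fun y : ℕ → ℕ => y i) ⁻¹' {u[i]} := by
    ext y; simp [Cyl]
  rw [this]
  exact isClosed_iInter fun i => isClosed_iInter fun hi =>
    IsClosed.preimage (continuous_apply i) isClosed_singleton

lemma mem_Cyl_concat {u : List ℕ} {k : ℕ} {y : ℕ → ℕ} :
    y ∈ Cyl (u ++ [k]) ↔ y ∈ Cyl u ∧ y u.length = k := by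
  constructor
  · intro hy
    refine ⟨fun i hi => ?_, ?_⟩
    · have h2 : i < (u ++ [k]).length := by simp; omega
      have := hy i h2
      rwa [List.getElem_append_left hi] at this
    · have h2 : u.length < (u ++ [k]).length := by simp
      have := hy u.length h2
      rwa [List.getElem_concat_length] at this
      rfl
  · rintro ⟨h1, h2⟩ i hi
    have hlen : i < u.length + 1 := by simpa using hi
    rcases Nat.lt_or_ge i u.length with hlt | hge
    · rw [List.getElem_append_left hlt]; exact h1 i hlt
    · have hieq : i = u.length := by omega
      subst hieq
      rw [List.getElem_concat_length]
      · exact h2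
      · rfl

/-- padded extension of a list -/
def Lext (u : List ℕ) : ℕ → ℕ := fun i => if hi : i < u.length then u[i] else 0

lemma Lext_mem_Cyl (u : List ℕ) : Lext u ∈ Cyl u := fun i hi => dif_pos hi

theorem exists_selection {X : Type*} [TopologicalSpace X] [PolishSpace X]
    [mX : MeasurableSpace X] [BorelSpace X]
    (A : Set (X × ℝ≥0)) (hA : MeasurableSet A) :
    ∃ T : X → ℝ≥0∞, Measurable[univCompletion mX] T ∧
      {x | T x < ⊤} = Prod.fst '' A ∧
      (∀ x, T x < ⊤ → (x, (T x).toNNReal) ∈ A) := by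
  classical
  rcases eq_empty_or_nonempty A with rfl | hne
  · refine ⟨fun _ => ⊤, measurable_const, ?_, ?_⟩
    · simp
    · intro x hx; simp at hx
  have hAan : AnalyticSet A := hA.analyticSet
  obtain ⟨β, tβ, pβ, f, hf, hfr⟩ := analyticSet_iff_exists_polishSpace_range.1 hAan
  haveI : Nonempty β := by rw [← range_nonempty_iff_nonempty, hfr]; exact hne
  obtain ⟨s, hs, hssurj⟩ := PolishSpace.exists_nat_nat_continuous_surjective β
  set h : (ℕ → ℕ) → X × ℝ≥0 := f ∘ s with hhdef
  have hh : Continuous h := hf.comp hs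
  have hrange : range h = A := by rw [hhdef, range_comp, hssurj.range_eq, image_univ, hfr]
  -- the analytic projection sets
  set E : List ℕ → Set X := fun u => (fun y => (h y).1) '' Cyl u with hEdef
  have hEan : ∀ u, AnalyticSet (E u) := fun u =>
    ((isClosed_Cyl u).analyticSet).image_of_continuous (continuous_fst.comp hh)
  have hEU : ∀ u, MeasurableSet[univCompletion mX] (E u) := by
    intro u
    refine univCompletion_measurableSet fun μ hμ => ?_
    haveI := hμ
    exact analytic_nullMeasurable (hEan u) μ
  -- leftmost branch
  set nxt : List ℕ → X → ℕ := fun u x => sInf {k | x ∈ E (u ++ [k])} with hnxt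
  set p : X → ℕ → List ℕ := fun x n => Nat.rec [] (fun n v => v ++ [nxt v x]) n with hp
  have hpsucc : ∀ x n, p x (n + 1) = p x n ++ [nxt (p x n) x] := fun _ _ => rfl
  have hplen : ∀ x n, (p x n).length = n := by
    intro x n; induction n with
    | zero => rfl
    | succ n ih => rw [hpsucc, List.length_append, ih]; rfl
  set σ : X → ℕ → ℕ := fun x n => nxt (p x n) x with hσ
  have hpget : ∀ x n i (hi : i < n), (p x n)[i]'(by rw [hplen]; exact hi) = σ x i := by
    intro x n
    induction n with
    | zero => intro i hi; omega
    | succ n ih =>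
      intro i hi
      have e1 := List.getElem_of_eq (hpsucc x n) (i := i)
        (lt_of_lt_of_eq hi (hplen x (n + 1)).symm)
      rw [e1]
      rcases Nat.lt_or_ge i n with hlt | hge
      · rw [List.getElem_append_left (lt_of_lt_of_eq hlt (hplen x n).symm)]
        exact ih i hlt
      · have hieq : i = n := by omega
        subst hieq
        rw [List.getElem_concat_length (hplen x i).symm]
  -- invariant
  have hmem : ∀ x, x ∈ E [] → ∀ n, x ∈ E (p x n) := by
    intro x hx n
    induction n with
    | zero => exact hx
    | succ n ih =>
      obtain ⟨y, hy, hy1⟩ := ih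
      have hyk : y ∈ Cyl (p x n ++ [y (p x n).length]) := mem_Cyl_concat.2 ⟨hy, rfl⟩
      have hnonempty : {k | x ∈ E (p x n ++ [k])}.Nonempty :=
        ⟨y (p x n).length, ⟨y, hyk, hy1⟩⟩
      have := Nat.sInf_mem hnonempty
      rw [hpsucc]
      exact this
  -- limit point facts
  have hσfacts : ∀ x, x ∈ E [] → (h (σ x)).1 = x ∧ (x, (h (σ x)).2) ∈ A := by
    intro x hx
    choose y hy hy1 using hmem x hx
    have hyt : Tendsto y atTop (𝓝 (σ x)) := by
      rw [tendsto_pi_nhds]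
      intro i
      have hev : ∀ᶠ n in atTop, y n i = σ x i := by
        filter_upwards [eventually_ge_atTop (i + 1)] with n hn
        have := hy n i (lt_of_lt_of_eq (by omega) (hplen x n).symm)
        rw [this, hpget x n i (by omega)]
      exact Tendsto.congr' (hev.mono fun n hn => hn.symm) tendsto_const_nhds
    have h1 : Tendsto (fun n => h (y n)) atTop (𝓝 (h (σ x))) := (hh.tendsto _).comp hyt
    have h2 : Tendsto (fun n => (h (y n)).1) atTop (𝓝 ((h (σ x)).1)) :=
      (continuous_fst.tendsto _).comp h1
    have h3 : Tendsto (fun n => (h (y n)).1) atTop (𝓝 x) := by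
      simp_rw [hy1]; exact tendsto_const_nhds
    have hfst : (h (σ x)).1 = x := tendsto_nhds_unique h2 h3
    refine ⟨hfst, ?_⟩
    have : h (σ x) ∈ A := hrange ▸ mem_range_self _
    have hprod : h (σ x) = (x, (h (σ x)).2) := Prod.ext hfst rfl
    rwa [hprod] at this
  -- prefix-extension convergence
  have hextt : ∀ x, Tendsto (fun n => h (Lext (p x n))) atTop (𝓝 (h (σ x))) := by
    intro x
    refine (hh.tendsto _).comp ?_
    rw [tendsto_pi_nhds]
    intro i
    have hev : ∀ᶠ n in atTop, Lext (p x n) i = σ x i := by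
      filter_upwards [eventually_ge_atTop (i + 1)] with n hn
      have hi : i < (p x n).length := lt_of_lt_of_eq (by omega) (hplen x n).symm
      rw [Lext, dif_pos hi, hpget x n i (by omega)]
    exact Tendsto.congr' (hev.mono fun n hn => hn.symm) tendsto_const_nhds
  -- the selection
  set gg : ℕ → X → ℝ≥0∞ := fun n x =>
    if x ∈ E [] then ((h (Lext (p x n))).2 : ℝ≥0∞) else ⊤ with hgg
  set T : X → ℝ≥0∞ := fun x => liminf (fun n => gg n x) atTop with hT
  have hTval : ∀ x, x ∈ E [] → T x = ((h (σ x)).2 : ℝ≥0∞) := by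
    intro x hx
    have ht : Tendsto (fun n => gg n x) atTop (𝓝 (((h (σ x)).2 : ℝ≥0∞))) := by
      have h1 : Tendsto (fun n => (h (Lext (p x n))).2) atTop (𝓝 ((h (σ x)).2)) :=
        (continuous_snd.tendsto _).comp (hextt x)
      have h2 := ENNReal.tendsto_coe.2 h1
      refine Tendsto.congr (fun n => ?_) h2
      rw [hgg]; simp [hx]
    exact ht.liminf_eq
  have hTtop : ∀ x, x ∉ E [] → T x = ⊤ := by
    intro x hx
    have : ∀ n, gg n x = ⊤ := by intro n; rw [hgg]; simp [hx]
    rw [hT]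
    simp only [this]
    exact liminf_const ⊤
  have hE0 : E [] = Prod.fst '' A := by
    rw [hEdef]
    simp only [Cyl_nil, image_univ]
    rw [← hrange]
    ext x
    simp [Set.mem_image, Set.mem_range]
  -- measurability
  have hnxtU : ∀ v k, MeasurableSet[univCompletion mX] {x | nxt v x = k} := by
    intro v k
    have hset : {x | nxt v x = k} =
        (E (v ++ [k]) ∩ ⋂ j, ⋂ (_ : j < k), (E (v ++ [j]))ᶜ) ∪
          ((⋂ j, (E (v ++ [j]))ᶜ) ∩ {x : X | k = 0}) := by
      ext x
      simp only [mem_setOf_eq, mem_union, mem_inter_iff, mem_iInter, mem_compl_iff]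
      have h0 : nxt v x = sInf {j | x ∈ E (v ++ [j])} := rfl
      rw [h0]
      constructor
      · intro hk
        by_cases hS : {j | x ∈ E (v ++ [j])}.Nonempty
        · left
          refine ⟨?_, fun j hj => Nat.notMem_of_lt_sInf (by rw [hk]; exact hj)⟩
          have := Nat.sInf_mem hS
          rwa [hk] at this
        · right
          have hSempty : {j | x ∈ E (v ++ [j])} = ∅ := not_nonempty_iff_eq_empty.1 hS
          exact ⟨fun j hj => hS ⟨j, hj⟩, by rw [← hk, hSempty, Nat.sInf_empty]⟩
      · rintro (⟨hm, hmin⟩ | ⟨hall, hk0⟩)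
        · have h1 : sInf {j | x ∈ E (v ++ [j])} ≤ k := Nat.sInf_le hm
          have hminmem : sInf {j | x ∈ E (v ++ [j])} ∈ {j | x ∈ E (v ++ [j])} :=
            Nat.sInf_mem ⟨k, hm⟩
          have h2 : ¬ sInf {j | x ∈ E (v ++ [j])} < k := fun hlt => hmin _ hlt hminmem
          omega
        · have hSempty : {j | x ∈ E (v ++ [j])} = ∅ := by
            ext j; simp only [mem_setOf_eq, mem_empty_iff_false, iff_false]; exact hall j
          rw [hSempty, Nat.sInf_empty]; omega
    rw [hset]
    refine MeasurableSet.union ?_ ?_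
    · exact (hEU _).inter (MeasurableSet.iInter fun j => MeasurableSet.iInter fun _ => (hEU _).compl)
    · refine (MeasurableSet.iInter fun j => (hEU _).compl).inter ?_
      by_cases hk : k = 0
      · have hs2 : {x : X | k = 0} = univ := by ext x; simp [hk]
        rw [hs2]; exact @MeasurableSet.univ X (univCompletion mX)
      · have hs2 : {x : X | k = 0} = ∅ := by ext x; simp [hk]
        rw [hs2]; exact @MeasurableSet.empty X (univCompletion mX)
  have hpU : ∀ n u, MeasurableSet[univCompletion mX] {x | p x n = u} := by
    intro n
    induction n with
    | zero =>
      intro u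
      by_cases hu : ([] : List ℕ) = u
      · have hs2 : {x : X | p x 0 = u} = univ := by
          ext x; simp only [mem_setOf_eq, mem_univ, iff_true]; exact hu
        rw [hs2]; exact @MeasurableSet.univ X (univCompletion mX)
      · have hs2 : {x : X | p x 0 = u} = ∅ := by
          ext x; simp only [mem_setOf_eq, mem_empty_iff_false, iff_false]
          exact fun hc => hu hc
        rw [hs2]; exact @MeasurableSet.empty X (univCompletion mX)
    | succ n ih =>
      intro u
      by_cases hu : u = []
      · have hs2 : {x : X | p x (n + 1) = u} = ∅ := by
          ext x
          simp only [mem_setOf_eq, mem_empty_iff_false, iff_false, hpsucc]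
          intro hcontra
          rw [hu] at hcontra
          simp at hcontra
        rw [hs2]; exact @MeasurableSet.empty X (univCompletion mX)
      · have hset : {x | p x (n + 1) = u} =
            {x | p x n = u.dropLast} ∩ {x | nxt u.dropLast x = u.getLast hu} := by
          ext x
          simp only [mem_setOf_eq, mem_inter_iff, hpsucc]
          constructor
          · intro heq
            have h1 : p x n = u.dropLast := by rw [← heq, List.dropLast_concat]
            have h2 : u.getLast hu = nxt (p x n) x :=
              (getLast_eq_of_eq heq.symm hu).trans List.getLast_concat
            exact ⟨h1, by rw [← h1]; exact h2.symm⟩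
          · rintro ⟨h1, h2⟩
            rw [← h1] at h2
            rw [h2, h1, List.dropLast_append_getLast hu]
        rw [hset]
        exact (ih _).inter (hnxtU _ _)
  have hqU : ∀ (n : ℕ) (o : Option (List ℕ)),
      MeasurableSet[univCompletion mX]
        ((fun x => if x ∈ E [] then some (p x n) else none) ⁻¹' {o}) := by
    intro n o
    cases o with
    | none =>
      have : (fun x => if x ∈ E [] then some (p x n) else none) ⁻¹' {none} = (E [])ᶜ := by
        ext x
        by_cases hx : x ∈ E [] <;> simp [hx]
      rw [this]
      exact (hEU _).compl
    | some u =>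
      have : (fun x => if x ∈ E [] then some (p x n) else none) ⁻¹' {some u} =
          E [] ∩ {x | p x n = u} := by
        ext x
        by_cases hx : x ∈ E [] <;> simp [hx]
      rw [this]
      exact (hEU _).inter (hpU n u)
  have hggU : ∀ n, Measurable[univCompletion mX] (gg n) := by
    intro n
    have : gg n = fun x =>
        (Option.elim · ⊤ (fun u => ((h (Lext u)).2 : ℝ≥0∞)))
          ((fun x => if x ∈ E [] then some (p x n) else none) x) := by
      funext x
      by_cases hx : x ∈ E [] <;> simp [hgg, hx]
    rw [this]
    exact measurable_of_countable_fibers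
      (fun x => if x ∈ E [] then some (p x n) else none)
      (Option.elim · ⊤ (fun u => ((h (Lext u)).2 : ℝ≥0∞))) (hqU n)
  have hTmeas : Measurable[univCompletion mX] T := Measurable.liminf hggU
  refine ⟨T, hTmeas, ?_, ?_⟩
  · rw [← hE0]
    ext x
    by_cases hx : x ∈ E []
    · simp only [mem_setOf_eq, hx, iff_true, hTval x hx]
      exact ENNReal.coe_lt_top
    · simp only [mem_setOf_eq, hx, iff_false, hTtop x hx]
      exact lt_irrefl ⊤
  · intro x hx
    have hxE : x ∈ E [] := by
      by_contra hc
      rw [hTtop x hc] at hx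
      exact lt_irrefl _ hx
    rw [hTval x hxE, ENNReal.toNNReal_coe]
    exact (hσfacts x hxE).2


lemma pull {Ω X : Type*} [mΩ : MeasurableSpace Ω] [mX : MeasurableSpace X]
    {φ : Ω → X} (hφ : Measurable φ) {S : Set X}
    (hS : ∀ μ : Measure X, IsProbabilityMeasure μ → NullMeasurableSet S μ) :
    MeasurableSet[univCompletion mΩ] (φ ⁻¹' S) := by
  refine univCompletion_measurableSet fun P hP => ?_
  haveI := hP
  haveI : IsProbabilityMeasure (P.map φ) := Measure.isProbabilityMeasure_map hφ.aemeasurable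
  obtain ⟨t, hts, htm, hteq⟩ := (hS (P.map φ) inferInstance).exists_measurable_subset_ae_eq
  have hnull : (P.map φ) (S \ t) = 0 := (ae_eq_set.1 hteq.symm).1
  have hNm : MeasurableSet (toMeasurable (P.map φ) (S \ t)) := measurableSet_toMeasurable _ _
  have hN0 : P (φ ⁻¹' toMeasurable (P.map φ) (S \ t)) = 0 := by
    rw [← Measure.map_apply hφ hNm, measure_toMeasurable]
    exact hnull
  have hsplit : φ ⁻¹' S = φ ⁻¹' t ∪ φ ⁻¹' (S \ t) := by
    rw [← preimage_union, union_diff_cancel hts]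
  rw [hsplit]
  exact (hφ htm).nullMeasurableSet.union
    (NullMeasurableSet.of_null
      (measure_mono_null (preimage_mono (subset_toMeasurable _ _)) hN0))

lemma prod_mono_left {α β : Type*} {m₁ m₂ : MeasurableSpace α} (h : m₁ ≤ m₂)
    (n : MeasurableSpace β) : m₁.prod n ≤ m₂.prod n :=
  sup_le_sup (MeasurableSpace.comap_mono h) le_rfl

lemma exists_borel_factor {Ω : Type*} [mΩ : MeasurableSpace Ω] (A : Set (Ω × ℝ≥0))
    (hA : MeasurableSet A) :
    ∃ (φ : Ω → (ℕ → Bool)) (A' : Set ((ℕ → Bool) × ℝ≥0)),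
      Measurable φ ∧ MeasurableSet A' ∧ A = Prod.map φ id ⁻¹' A' := by
  classical
  -- step 1 : A is measurable for a countably generated sub-σ-algebra on Ω
  let m' : MeasurableSpace (Ω × ℝ≥0) :=
    { MeasurableSet' := fun B => ∃ C : Set (Set Ω), C.Countable ∧ (∀ c ∈ C, MeasurableSet c) ∧
        MeasurableSet[(MeasurableSpace.generateFrom C).prod inferInstance] B
      measurableSet_empty := ⟨∅, countable_empty, by simp,
        @MeasurableSet.empty _ ((MeasurableSpace.generateFrom (∅ : Set (Set Ω))).prod
          inferInstance)⟩
      measurableSet_compl := fun B hB => by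
        obtain ⟨C, h1, h2, h3⟩ := hB
        exact ⟨C, h1, h2, h3.compl⟩
      measurableSet_iUnion := fun g hg => by
        choose C h1 h2 h3 using hg
        refine ⟨⋃ n, C n, countable_iUnion h1, ?_, ?_⟩
        · intro c hc
          obtain ⟨n, hn⟩ := mem_iUnion.1 hc
          exact h2 n c hn
        · refine MeasurableSet.iUnion fun n => ?_
          exact prod_mono_left
            (MeasurableSpace.generateFrom_mono (subset_iUnion C n)) _ _ (h3 n) }
  have hAm' : MeasurableSet[m'] A := by
    have hle : (mΩ.prod (inferInstance : MeasurableSpace ℝ≥0)) ≤ m' := by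
      refine sup_le ?_ ?_
      · rintro s ⟨B, hB, rfl⟩
        refine ⟨{B}, countable_singleton B, by simpa using hB, ?_⟩
        exact (le_sup_left :
            MeasurableSpace.comap Prod.fst (MeasurableSpace.generateFrom {B}) ≤
              (MeasurableSpace.generateFrom {B}).prod inferInstance) _
          ⟨B, MeasurableSpace.measurableSet_generateFrom rfl, rfl⟩
      · rintro s ⟨I, hI, rfl⟩
        refine ⟨∅, countable_empty, by simp, ?_⟩
        exact (le_sup_right :
            MeasurableSpace.comap Prod.snd (inferInstance : MeasurableSpace ℝ≥0) ≤
              (MeasurableSpace.generateFrom ∅).prod inferInstance) _ ⟨I, hI, rfl⟩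
    exact hle _ hA
  obtain ⟨C, hC1, hC2, hC3⟩ := hAm'
  -- step 2 : enumerate the generators
  obtain ⟨g, hg⟩ := (hC1.insert ∅).exists_eq_range (insert_nonempty _ _)
  have hgmeas : ∀ n, MeasurableSet (g n) := by
    intro n
    have : g n ∈ insert ∅ C := hg ▸ mem_range_self n
    rcases this with h | h
    · rw [h]; exact MeasurableSet.empty
    · exact hC2 _ h
  set φ : Ω → ℕ → Bool := fun ω n => decide (ω ∈ g n) with hφdef
  have hφpre : ∀ n, φ ⁻¹' {x | x n = true} = g n := by
    intro n; ext ω; simp [hφdef]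
  have hcylmeas : ∀ n, MeasurableSet {x : ℕ → Bool | x n = true} := by
    intro n
    have : {x : ℕ → Bool | x n = true} = (fun x : ℕ → Bool => x n) ⁻¹' {true} := rfl
    rw [this]
    exact measurable_pi_apply n (measurableSet_singleton true)
  have hφmeas : Measurable φ := by
    refine measurable_pi_lambda _ fun n => ?_
    have : (fun ω => decide (ω ∈ g n)) = fun ω => id (decide (ω ∈ g n)) := rfl
    rw [this]
    refine measurable_of_countable_fibers (fun ω => decide (ω ∈ g n)) id fun c => ?_
    cases c
    · have : (fun ω => decide (ω ∈ g n)) ⁻¹' {false} = (g n)ᶜ := by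
        ext ω; simp
      rw [this]; exact (hgmeas n).compl
    · have : (fun ω => decide (ω ∈ g n)) ⁻¹' {true} = g n := by
        ext ω; simp
      rw [this]; exact hgmeas n
  -- step 3 : transport through comap
  have hgen : MeasurableSpace.generateFrom C
      ≤ MeasurableSpace.comap φ (inferInstance : MeasurableSpace (ℕ → Bool)) := by
    refine MeasurableSpace.generateFrom_le fun t ht => ?_
    have : t ∈ range g := by rw [← hg]; exact mem_insert_of_mem _ ht
    obtain ⟨n, rfl⟩ := this
    exact ⟨{x | x n = true}, hcylmeas n, hφpre n⟩
  have hA2 : MeasurableSet[(MeasurableSpace.comap φ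
      (inferInstance : MeasurableSpace (ℕ → Bool))).prod
      (inferInstance : MeasurableSpace ℝ≥0)] A :=
    prod_mono_left hgen _ _ hC3
  have hcomap : (MeasurableSpace.comap φ (inferInstance : MeasurableSpace (ℕ → Bool))).prod
        (inferInstance : MeasurableSpace ℝ≥0)
      = MeasurableSpace.comap (Prod.map φ (id : ℝ≥0 → ℝ≥0))
          (inferInstance : MeasurableSpace ((ℕ → Bool) × ℝ≥0)) := by
    show MeasurableSpace.comap Prod.fst
          (MeasurableSpace.comap φ (inferInstance : MeasurableSpace (ℕ → Bool)))
        ⊔ MeasurableSpace.comap Prod.snd (inferInstance : MeasurableSpace ℝ≥0)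
      = MeasurableSpace.comap (Prod.map φ id)
          (MeasurableSpace.comap Prod.fst (inferInstance : MeasurableSpace (ℕ → Bool))
            ⊔ MeasurableSpace.comap Prod.snd (inferInstance : MeasurableSpace ℝ≥0))
    rw [MeasurableSpace.comap_sup, MeasurableSpace.comap_comp, MeasurableSpace.comap_comp,
      MeasurableSpace.comap_comp]
    rfl
  rw [hcomap] at hA2
  obtain ⟨A', hA', hpre⟩ := hA2
  exact ⟨φ, A', hφmeas, hA', hpre.symm⟩

lemma fst_image_preimage {Ω : Type*} (φ : Ω → ℕ → Bool) (A' : Set ((ℕ → Bool) × ℝ≥0)) :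
    Prod.fst '' (Prod.map φ id ⁻¹' A') = φ ⁻¹' (Prod.fst '' A') := by
  ext ω
  constructor
  · rintro ⟨⟨ω', t⟩, hmem, rfl⟩
    exact ⟨(φ ω', t), hmem, rfl⟩
  · rintro ⟨⟨x, t⟩, hmem, hfst⟩
    refine ⟨(ω, t), ?_, rfl⟩
    show (φ ω, t) ∈ A'
    have : x = φ ω := hfst
    rwa [this] at hmem

lemma proj_univ {Ω : Type*} [mΩ : MeasurableSpace Ω] (A : Set (Ω × ℝ≥0))
    (hA : MeasurableSet A) :
    MeasurableSet[univCompletion mΩ] (Prod.fst '' A) := by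
  obtain ⟨φ, A', hφ, hA', rfl⟩ := exists_borel_factor A hA
  rw [fst_image_preimage]
  have han : AnalyticSet (Prod.fst '' A') := hA'.analyticSet_image measurable_fst
  haveI : PolishSpace (ℕ → Bool) := by
    haveI : TopologicalSpace.SeparableSpace (ℕ → Bool) := inferInstance
    infer_instance
  exact pull hφ (fun μ hμ => by haveI := hμ; exact analytic_nullMeasurable han μ)

end UnivProj

/-- **Universally measurable projection and section on `ℝ⁺`.** For any measurable space
`(Ω, F)` and `A` in the product σ-field of `Ω × ℝ⁺`: (i) `π_Ω(A)` is universally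
measurable; (ii) there is an `F^U`-measurable section `T` of `A`; (iii) for every
product-measurable `f : Ω × ℝ⁺ → ℝ`, the partial supremum `g` (with `sup ∅ = −∞`) is
`F^U`-measurable. -/
theorem universal_projection_section
    {Ω : Type*} [mΩ : MeasurableSpace Ω]
    (A : Set (Ω × ℝ≥0)) (hA : MeasurableSet A) :
    MeasurableSet[univCompletion mΩ] (Prod.fst '' A) ∧
    (∃ T : Ω → ℝ≥0∞, Measurable[univCompletion mΩ] T ∧
      {ω | T ω < ⊤} = Prod.fst '' A ∧
      (∀ ω, T ω < ⊤ → (ω, (T ω).toNNReal) ∈ A)) ∧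
    (∀ f : Ω × ℝ≥0 → ℝ, Measurable f →
      Measurable[univCompletion mΩ]
        (fun ω => ⨆ (t : ℝ≥0) (_ : (ω, t) ∈ A), (f (ω, t) : EReal))) := by
  classical
  refine ⟨UnivProj.proj_univ A hA, ?_, ?_⟩
  · -- the measurable section
    obtain ⟨φ, A', hφ, hA', hApre⟩ := UnivProj.exists_borel_factor A hA
    haveI : PolishSpace (ℕ → Bool) := by
      haveI : TopologicalSpace.SeparableSpace (ℕ → Bool) := inferInstance
      infer_instance
    obtain ⟨T', hT'm, hT'fin, hT'sec⟩ := UnivProj.exists_selection A' hA'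
    refine ⟨fun ω => T' (φ ω), ?_, ?_, ?_⟩
    · intro B hB
      exact UnivProj.pull hφ (hT'm hB)
    · have h1 : {ω | T' (φ ω) < ⊤} = φ ⁻¹' {x | T' x < ⊤} := rfl
      rw [h1, hT'fin, ← UnivProj.fst_image_preimage, ← hApre]
    · intro ω hω
      have := hT'sec (φ ω) hω
      rw [hApre]
      exact this
  · -- partial suprema
    intro f hf
    apply measurable_of_Ioi
    intro x
    have hset : (fun ω => ⨆ (t : ℝ≥0) (_ : (ω, t) ∈ A), (f (ω, t) : EReal)) ⁻¹' (Set.Ioi x)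
        = Prod.fst '' (A ∩ {p | x < (f p : EReal)}) := by
      ext ω
      simp only [mem_preimage, mem_Ioi, lt_iSup_iff]
      constructor
      · rintro ⟨t, ht, hlt⟩
        exact ⟨(ω, t), ⟨ht, hlt⟩, rfl⟩
      · rintro ⟨⟨ω', t⟩, ⟨hmem, hlt⟩, h1⟩
        cases h1
        exact ⟨t, hmem, hlt⟩
    rw [hset]
    have hmeas : MeasurableSet (A ∩ {p | x < (f p : EReal)}) := by
      refine hA.inter ?_
      have h2 : {p : Ω × ℝ≥0 | x < (f p : EReal)}
          = (fun p => (f p : EReal)) ⁻¹' (Set.Ioi x) := rfl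
      rw [h2]
      exact (measurable_coe_real_ereal.comp hf) measurableSet_Ioi
    exact UnivProj.proj_univ _ hmeas
end

section
/- (General measurable selection theorem.) Let (Ω, F) be a measurable space, E a Borel space with Borel σ-field B(E), and A ∈ F ⊗ B(E). Let ∂ be a point not in E. Then there exists a map Z : Ω → E ∪ {∂}, measurable from (Ω, F^U) to E ∪ {∂} (with σ-field generated by the Borel sets of E together with {∂}), such that (ω, Z(ω)) ∈ A for every ω with Z(ω) ∈ E, and { ω : Z(ω) ∈ E } = π_Ω(A). -/
open MeasureTheory Set
open scoped ENNReal NNReal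


/-- The σ-field on `E ∪ {∂}` (modelled as `Option E`, with `∂ = none`) generated by the
Borel sets of `E` together with `{∂}`. -/
def optionSigma (E : Type*) [MeasurableSpace E] : MeasurableSpace (Option E) :=
  MeasurableSpace.generateFrom
    ({t | ∃ s : Set E, MeasurableSet s ∧ t = Option.some '' s} ∪ {{(none : Option E)}})

namespace Sel

/-! ### Finite initial segments of branches -/

/-- Initial segment of length `n` of a branch `σ : ℕ → ℕ`. -/
def seg (σ : ℕ → ℕ) (n : ℕ) : List ℕ := (List.range n).map σ

@[simp] lemma seg_zero (σ : ℕ → ℕ) : seg σ 0 = [] := rfl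

lemma seg_succ (σ : ℕ → ℕ) (n : ℕ) : seg σ (n + 1) = seg σ n ++ [σ n] := by
  simp [seg, List.range_succ]

@[simp] lemma length_seg (σ : ℕ → ℕ) (n : ℕ) : (seg σ n).length = n := by simp [seg]

lemma seg_succ_cons (σ : ℕ → ℕ) (n : ℕ) :
    seg σ (n + 1) = σ 0 :: seg (fun i => σ (i + 1)) n := by
  simp only [seg, List.range_succ_eq_map, List.map_cons, List.map_map]
  rfl

lemma take_seg (σ : ℕ → ℕ) (m n : ℕ) : (seg σ n).take m = seg σ (min m n) := by
  simp [seg, ← List.map_take, List.take_range]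

lemma seg_prefix (σ : ℕ → ℕ) {m n : ℕ} (h : m ≤ n) : seg σ m <+: seg σ n := by
  have := List.take_prefix m (seg σ n)
  rwa [take_seg, min_eq_left h] at this

lemma map_seg (g : ℕ → ℕ) (σ : ℕ → ℕ) (n : ℕ) : (seg σ n).map g = seg (g ∘ σ) n := by
  simp [seg, List.map_map]

lemma getElem_seg (σ : ℕ → ℕ) {i n : ℕ} (h : i < n) :
    (seg σ n)[i]'(by simpa using h) = σ i := by
  simp [seg]

lemma seg_of_cons (k : ℕ) (σ : ℕ → ℕ) (n : ℕ) :
    seg (fun i => Nat.casesOn i k σ) (n + 1) = k :: seg σ n := by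
  rw [seg_succ_cons]
  rfl

/-! ### The Souslin operation -/

/-- The Souslin operation applied to a scheme `P`. -/
def souslin {Ω : Type*} (P : List ℕ → Set Ω) : Set Ω :=
  ⋃ σ : ℕ → ℕ, ⋂ n, P (seg σ n)

variable {Ω : Type*}

lemma mem_souslin {P : List ℕ → Set Ω} {ω : Ω} :
    ω ∈ souslin P ↔ ∃ σ : ℕ → ℕ, ∀ n, ω ∈ P (seg σ n) := by
  simp [souslin]

/-- A scheme is regular if it is antitone with respect to the prefix order. -/
def Reg (P : List ℕ → Set Ω) : Prop := ∀ ⦃s t : List ℕ⦄, s <+: t → P t ⊆ P s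

/-- Regularization of a scheme. -/
def regularize (P : List ℕ → Set Ω) (s : List ℕ) : Set Ω := ⋂ n, P (s.take n)

lemma regularize_subset (P : List ℕ → Set Ω) (s : List ℕ) : regularize P s ⊆ P s := by
  intro ω hω
  have := mem_iInter.1 hω s.length
  simpa using this

lemma reg_regularize (P : List ℕ → Set Ω) : Reg (regularize P) := by
  intro s t hst ω hω
  rcases hst with ⟨u, rfl⟩
  refine mem_iInter.2 fun n => ?_
  rcases le_or_gt n s.length with h | h
  · have := mem_iInter.1 hω n
    rwa [List.take_append, show n - s.length = 0 from by omega,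
      List.take_zero, List.append_nil] at this
  · have := mem_iInter.1 hω s.length
    rw [List.take_append, Nat.sub_self, List.take_zero, List.append_nil,
      List.take_length] at this
    have he : List.take n s = s := List.take_of_length_le (le_of_lt h)
    rw [he]; exact this

lemma souslin_regularize (P : List ℕ → Set Ω) : souslin (regularize P) = souslin P := by
  apply subset_antisymm
  · refine iUnion_subset fun σ => ?_
    refine subset_iUnion_of_subset σ (iInter_mono fun n => regularize_subset _ _)
  · refine iUnion_subset fun σ => ?_
    refine subset_iUnion_of_subset σ ?_
    intro ω hω
    refine mem_iInter.2 fun n => mem_iInter.2 fun m => ?_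
    rw [take_seg]
    exact mem_iInter.1 hω _

/-- Souslin sets over a family of sets `C`. -/
def IsSouslin (C : Set (Set Ω)) (A : Set Ω) : Prop :=
  ∃ P : List ℕ → Set Ω, (∀ s, P s ∈ C) ∧ A = souslin P

lemma IsSouslin.of_mem {C : Set (Set Ω)} {A : Set Ω} (hA : A ∈ C) : IsSouslin C A := by
  refine ⟨fun _ => A, fun _ => hA, ?_⟩
  apply subset_antisymm
  · intro ω hω; exact mem_iUnion.2 ⟨fun _ => 0, mem_iInter.2 fun _ => hω⟩
  · refine iUnion_subset fun σ => ?_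
    intro ω hω; exact mem_iInter.1 hω 0

lemma IsSouslin.iUnion {C : Set (Set Ω)} (huniv : univ ∈ C) {A : ℕ → Set Ω}
    (hA : ∀ m, IsSouslin C (A m)) : IsSouslin C (⋃ m, A m) := by
  choose P hPC hPA using hA
  refine ⟨fun s => match s with | [] => univ | (m :: t) => P m t,
    fun s => by cases s <;> simp [huniv, hPC], ?_⟩
  ext ω
  simp only [mem_iUnion, hPA, mem_souslin]
  constructor
  · rintro ⟨m, σ, hσ⟩
    exact ⟨fun i => Nat.casesOn i m σ, fun n => by
      cases n with
      | zero => simp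
      | succ n => rw [seg_of_cons]; exact hσ n⟩
  · rintro ⟨σ, hσ⟩
    refine ⟨σ 0, fun i => σ (i + 1), fun n => ?_⟩
    have := hσ (n + 1)
    rwa [seg_succ_cons] at this

/-- A family closed under countable intersections (and containing `univ`). -/
structure InterClosed (C : Set (Set Ω)) : Prop where
  univ_mem : univ ∈ C
  iInter_mem : ∀ f : ℕ → Set Ω, (∀ n, f n ∈ C) → (⋂ n, f n) ∈ C

lemma InterClosed.iInter_mem₂ {C : Set (Set Ω)} (hC : InterClosed C)
    (f : ℕ → ℕ → Set Ω) (hf : ∀ m k, f m k ∈ C) : (⋂ m, ⋂ k, f m k) ∈ C := by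
  have : (⋂ m, ⋂ k, f m k) = ⋂ n, f (Nat.unpair n).1 (Nat.unpair n).2 := by
    apply subset_antisymm
    · intro ω hω; exact mem_iInter.2 fun n =>
        mem_iInter.1 (mem_iInter.1 hω _) _
    · intro ω hω
      refine mem_iInter.2 fun m => mem_iInter.2 fun k => ?_
      have := mem_iInter.1 hω (Nat.pair m k)
      rwa [Nat.unpair_pair] at this
  rw [this]
  exact hC.iInter_mem _ fun n => hf _ _

/-- The scheme computing a countable intersection of Souslin sets. -/
def interScheme (P : ℕ → List ℕ → Set Ω) (s : List ℕ) : Set Ω :=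
  ⋂ m, ⋂ k, ⋂ (_ : ∀ j < k, Nat.pair m j < s.length),
    P m ((List.range k).map fun j => s.getD (Nat.pair m j) 0)

lemma interScheme_mem {C : Set (Set Ω)} (hC : InterClosed C) {P : ℕ → List ℕ → Set Ω}
    (hP : ∀ m s, P m s ∈ C) (s : List ℕ) : interScheme P s ∈ C := by
  refine hC.iInter_mem₂ _ fun m k => ?_
  classical
  rw [iInter_eq_if]
  by_cases h : ∀ j < k, Nat.pair m j < s.length
  · rw [if_pos h]; exact hP _ _
  · rw [if_neg h]; exact hC.univ_mem

lemma getD_seg (σ : ℕ → ℕ) {i n : ℕ} (h : i < n) : (seg σ n).getD i 0 = σ i := by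
  rw [List.getD_eq_getElem _ _ (by simpa [length_seg] using h)]
  exact getElem_seg σ h

lemma souslin_interScheme (P : ℕ → List ℕ → Set Ω) :
    souslin (interScheme P) = ⋂ m, souslin (P m) := by
  ext ω
  simp only [mem_iInter, mem_souslin]
  constructor
  · rintro ⟨σ, hσ⟩ m
    refine ⟨fun k => σ (Nat.pair m k), fun k => ?_⟩
    -- choose n large enough
    obtain ⟨n, hn⟩ : ∃ n, ∀ j < k, Nat.pair m j < n := by
      refine ⟨Nat.pair m k, fun j hj => Nat.pair_lt_pair_right m hj⟩
    have h := hσ n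
    have hcond : ∀ j < k, Nat.pair m j < (seg σ n).length := by
      simpa [length_seg] using hn
    have := mem_iInter.1 (mem_iInter.1 (mem_iInter.1 h m) k) hcond
    have heq : ((List.range k).map fun j => (seg σ n).getD (Nat.pair m j) 0)
        = seg (fun j => σ (Nat.pair m j)) k := by
      apply List.ext_getElem (by simp [seg])
      intro i h1 h2
      have hik : i < k := by simpa using h1
      simp only [List.getElem_map, List.getElem_range]
      rw [getD_seg σ (hn i hik), getElem_seg _ hik]
    rwa [heq] at this
  · rintro h
    choose τ hτ using h
    refine ⟨fun i => τ (Nat.unpair i).1 (Nat.unpair i).2, fun n => ?_⟩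
    refine mem_iInter.2 fun m => mem_iInter.2 fun k => mem_iInter.2 fun hcond => ?_
    have heq : ((List.range k).map fun j =>
        (seg (fun i => τ (Nat.unpair i).1 (Nat.unpair i).2) n).getD (Nat.pair m j) 0)
        = seg (τ m) k := by
      apply List.ext_getElem (by simp [seg])
      intro i h1 h2
      have hik : i < k := by simpa using h1
      have hn' : Nat.pair m i < n := by simpa [seg] using hcond i hik
      simp only [List.getElem_map, List.getElem_range]
      rw [getD_seg _ hn', Nat.unpair_pair, getElem_seg _ hik]
    rw [heq]
    exact hτ m k

lemma IsSouslin.iInter {C : Set (Set Ω)} (hC : InterClosed C) {A : ℕ → Set Ω}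
    (hA : ∀ m, IsSouslin C (A m)) : IsSouslin C (⋂ m, A m) := by
  choose P hPC hPA using hA
  refine ⟨interScheme P, interScheme_mem hC hPC, ?_⟩
  rw [souslin_interScheme]
  exact iInter_congr fun m => hPA m

/-! ### Chains built by repeatedly appending a chosen element -/

/-- Iteratively extend the empty list using a choice function `f`. -/
def chain (f : List ℕ → ℕ) : ℕ → List ℕ :=
  fun n => Nat.rec [] (fun _ l => l ++ [f l]) n

@[simp] lemma chain_zero (f : List ℕ → ℕ) : chain f 0 = [] := rfl

@[simp] lemma chain_succ (f : List ℕ → ℕ) (n : ℕ) :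
    chain f (n + 1) = chain f n ++ [f (chain f n)] := rfl

/-- The branch associated to a choice function. -/
def chainFun (f : List ℕ → ℕ) (n : ℕ) : ℕ := f (chain f n)

@[simp] lemma length_chain (f : List ℕ → ℕ) (n : ℕ) : (chain f n).length = n := by
  induction n with
  | zero => rfl
  | succ n ih => simp [ih]

lemma seg_chainFun (f : List ℕ → ℕ) (n : ℕ) : seg (chainFun f) n = chain f n := by
  induction n with
  | zero => rfl
  | succ n ih => rw [seg_succ, ih, chain_succ]; rfl

lemma chain_prefix (f : List ℕ → ℕ) {m n : ℕ} (h : m ≤ n) : chain f m <+: chain f n := by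
  induction n with
  | zero => have : m = 0 := by omega
            subst this; exact List.prefix_refl _
  | succ n ih =>
    rcases Nat.lt_or_ge m (n+1) with h' | h'
    · exact (ih (by omega)).trans ⟨[f (chain f n)], (chain_succ f n).symm⟩
    · have : m = n + 1 := by omega
      subst this; exact List.prefix_refl _

/-! ### getD helper lemmas -/

lemma getD_prefix {l₁ l₂ : List ℕ} (h : l₁ <+: l₂) {i : ℕ} (hi : i < l₁.length) (d : ℕ) :
    l₁.getD i d = l₂.getD i d := by
  rw [List.getD_eq_getElem _ _ hi, List.getD_eq_getElem _ _ (lt_of_lt_of_le hi h.length_le)]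
  exact h.getElem hi

lemma getD_concat_self (b : List ℕ) (M d : ℕ) : (b ++ [M]).getD b.length d = M := by
  rw [List.getD_eq_getElem _ _ (by simp)]
  simp

/-! ### Localized Souslin sets -/

variable {Ω : Type*}

/-- The part of `souslin P` coming from branches extending `t`. -/
def aloc (P : List ℕ → Set Ω) (t : List ℕ) : Set Ω :=
  ⋃ σ : ℕ → ℕ, ⋃ (_ : seg σ t.length = t), ⋂ n, P (seg σ n)

lemma aloc_nil (P : List ℕ → Set Ω) : aloc P [] = souslin P := by
  simp [aloc, souslin, seg]

lemma aloc_subset {P : List ℕ → Set Ω} (hP : Reg P) (t : List ℕ) : aloc P t ⊆ P t := by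
  rintro ω hω
  simp only [aloc, mem_iUnion] at hω
  obtain ⟨σ, hσ, hmem⟩ := hω
  have := mem_iInter.1 hmem t.length
  rw [hσ] at this
  exact this

lemma aloc_mono {P : List ℕ → Set Ω} {t₁ t₂ : List ℕ} (h : t₁ <+: t₂) :
    aloc P t₂ ⊆ aloc P t₁ := by
  rintro ω hω
  simp only [aloc, mem_iUnion] at hω ⊢
  obtain ⟨σ, hσ, hmem⟩ := hω
  refine ⟨σ, ?_, hmem⟩
  obtain ⟨u, hu⟩ := h
  have h1 : t₁.length ≤ t₂.length := by rw [← hu]; simp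
  have := take_seg σ t₁.length t₂.length
  rw [min_eq_left h1, hσ, ← hu] at this
  rw [List.take_left] at this
  exact this.symm

lemma aloc_eq_iUnion (P : List ℕ → Set Ω) (t : List ℕ) :
    aloc P t = ⋃ k, aloc P (t ++ [k]) := by
  apply subset_antisymm
  · rintro ω hω
    simp only [aloc, mem_iUnion] at hω ⊢
    obtain ⟨σ, hσ, hmem⟩ := hω
    refine ⟨σ t.length, σ, ?_, hmem⟩
    have : (t ++ [σ t.length]).length = t.length + 1 := by simp
    rw [this, seg_succ, hσ]
  · exact iUnion_subset fun k => aloc_mono ⟨[k], rfl⟩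

/-! ### Admissible nodes and level sets -/

/-- `t` is admissible for the bound list `b`. -/
def Adm (b t : List ℕ) : Prop := t.length = b.length ∧ ∀ i, t.getD i 0 ≤ b.getD i 0

lemma adm_nil_iff (t : List ℕ) : Adm [] t ↔ t = [] := by
  constructor
  · rintro ⟨h, -⟩; exact List.length_eq_zero_iff.1 h
  · rintro rfl; exact ⟨rfl, fun i => le_refl _⟩

lemma Adm.take {b t : List ℕ} (h : Adm b t) {b' : List ℕ} (hb : b' <+: b) :
    Adm b' (t.take b'.length) := by
  obtain ⟨hlen, hle⟩ := h
  have hlb : b'.length ≤ t.length := by rw [hlen]; exact hb.length_le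
  constructor
  · simp [hlb]
  · intro i
    rcases Nat.lt_or_ge i b'.length with hi | hi
    · have h1 : (t.take b'.length).getD i 0 = t.getD i 0 :=
        getD_prefix (List.take_prefix _ _) (by simp [hlb]; omega) 0
      rw [h1, getD_prefix hb hi 0]
      exact hle i
    · rw [List.getD_eq_default _ _ (by simp; omega), List.getD_eq_default _ _ (by omega)]

/-- Level set for `aloc`. -/
def levelA (P : List ℕ → Set Ω) (b : List ℕ) : Set Ω := ⋃ t, ⋃ (_ : Adm b t), aloc P t

/-- Level set for `P`. -/
def levelP (P : List ℕ → Set Ω) (b : List ℕ) : Set Ω := ⋃ t, ⋃ (_ : Adm b t), P t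

lemma levelA_nil (P : List ℕ → Set Ω) : levelA P [] = souslin P := by
  apply subset_antisymm
  · refine iUnion_subset fun t => iUnion_subset fun ht => ?_
    rw [(adm_nil_iff t).1 ht, aloc_nil]
  · intro ω hω
    simp only [levelA, mem_iUnion]
    exact ⟨[], (adm_nil_iff []).2 rfl, by rw [aloc_nil]; exact hω⟩

lemma levelA_subset_levelP {P : List ℕ → Set Ω} (hP : Reg P) (b : List ℕ) :
    levelA P b ⊆ levelP P b := by
  refine iUnion_subset fun t => iUnion_subset fun ht => ?_
  intro ω hω
  simp only [levelP, mem_iUnion]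
  exact ⟨t, ht, aloc_subset hP t hω⟩

lemma levelA_concat_subset (P : List ℕ → Set Ω) (b : List ℕ) (M : ℕ) :
    levelA P (b ++ [M]) ⊆ levelA P b := by
  refine iUnion_subset fun t => iUnion_subset fun ht => ?_
  obtain ⟨hlen, hle⟩ := ht
  have hA : Adm b (t.take b.length) := Adm.take ⟨hlen, hle⟩ ⟨[M], rfl⟩
  refine subset_trans (aloc_mono (List.take_prefix b.length t)) ?_
  intro ω hω
  simp only [levelA, mem_iUnion]
  exact ⟨_, hA, hω⟩

lemma levelA_concat_mono (P : List ℕ → Set Ω) (b : List ℕ) {M M' : ℕ} (h : M ≤ M') :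
    levelA P (b ++ [M]) ⊆ levelA P (b ++ [M']) := by
  refine iUnion_subset fun t => iUnion_subset fun ht => ?_
  obtain ⟨hlen, hle⟩ := ht
  intro ω hω
  simp only [levelA, mem_iUnion]
  refine ⟨t, ⟨by simpa using hlen, fun i => ?_⟩, hω⟩
  rcases Nat.lt_or_ge i b.length with hi | hi
  · calc t.getD i 0 ≤ (b ++ [M]).getD i 0 := hle i
      _ = b.getD i 0 := (getD_prefix (⟨[M], rfl⟩ : b <+: b ++ [M]) hi 0).symm
      _ = (b ++ [M']).getD i 0 := getD_prefix (⟨[M'], rfl⟩ : b <+: b ++ [M']) hi 0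
  · rcases Nat.lt_or_ge i (b.length + 1) with hi' | hi'
    · have hib : i = b.length := by omega
      subst hib
      rw [getD_concat_self]
      refine le_trans ?_ h
      rw [← getD_concat_self b M 0]
      exact hle b.length
    · rw [List.getD_eq_default _ _ (by simp [hlen]; omega)]
      exact Nat.zero_le _

lemma Adm.concat {b t : List ℕ} (h : Adm b t) (k : ℕ) : Adm (b ++ [k]) (t ++ [k]) := by
  obtain ⟨hlen, hle⟩ := h
  refine ⟨by simp [hlen], fun i => ?_⟩
  rcases Nat.lt_or_ge i b.length with hi | hi
  · rw [← getD_prefix (⟨[k], rfl⟩ : t <+: t ++ [k]) (by rw [hlen]; exact hi) 0,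
      ← getD_prefix (⟨[k], rfl⟩ : b <+: b ++ [k]) hi 0]
    exact hle i
  · rcases Nat.lt_or_ge i (b.length + 1) with hi' | hi'
    · have hib : i = b.length := by omega
      subst hib
      have e1 : (b ++ [k]).getD b.length 0 = k := getD_concat_self b k 0
      have e2 : (t ++ [k]).getD b.length 0 = k := by
        rw [← hlen]; exact getD_concat_self t k 0
      rw [e1, e2]
    · rw [List.getD_eq_default _ _ (by simp; omega),
        List.getD_eq_default _ _ (by simp; omega)]

lemma iUnion_levelA_concat (P : List ℕ → Set Ω) (b : List ℕ) :
    ⋃ M, levelA P (b ++ [M]) = levelA P b := by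
  apply subset_antisymm
  · exact iUnion_subset fun M => levelA_concat_subset P b M
  · refine iUnion_subset fun t => iUnion_subset fun ht => ?_
    rw [aloc_eq_iUnion P t]
    refine iUnion_subset fun k => ?_
    intro ω hω
    refine mem_iUnion.2 ⟨k, ?_⟩
    simp only [levelA, mem_iUnion]
    exact ⟨t ++ [k], ht.concat k, hω⟩

/-! ### König-type argument: the closed kernel is contained in the Souslin set -/

lemma koenig_subset {P : List ℕ → Set Ω} (hreg : Reg P) (g : List ℕ → ℕ) :
    (⋂ n, levelP P (chain g n)) ⊆ souslin P := by
  classical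
  intro ω hω
  set T : List ℕ → Prop := fun t => Adm (chain g t.length) t ∧ ω ∈ P t with hT
  set good : List ℕ → Prop :=
    fun t => ∀ n, ∃ s, T s ∧ t <+: s ∧ s.length = t.length + n with hgood
  have hTtake : ∀ (t : List ℕ) (j : ℕ), T t → j ≤ t.length → T (t.take j) := by
    rintro t j ⟨hadm, hmem⟩ hj
    constructor
    · have h2 := hadm.take (b' := chain g j) (chain_prefix g hj)
      rw [length_chain] at h2
      have hlen2 : (List.take j t).length = j := by simp; omega
      rw [hlen2]
      exact h2
    · exact hreg (List.take_prefix _ _) hmem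
  have hmem_of_good : ∀ t, good t → T t := by
    intro t ht
    obtain ⟨s, hs, hts, hlen⟩ := ht 0
    rwa [hts.eq_of_length (by omega)]
  have hgood_nil : good [] := by
    intro n
    have := mem_iInter.1 hω n
    simp only [levelP, mem_iUnion] at this
    obtain ⟨t, hadm, hmem⟩ := this
    have hlen : t.length = n := by rw [hadm.1, length_chain]
    exact ⟨t, ⟨by rwa [hlen], hmem⟩, List.nil_prefix, by simpa using hlen⟩
  have hstep : ∀ t, good t → ∃ k, good (t ++ [k]) := by
    intro t ht
    by_contra hcon
    push_neg at hcon
    simp only [hgood, not_forall, not_exists] at hcon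
    choose ν hν using hcon
    set K := g (chain g t.length) with hK
    have hbound : ∀ s, T s → t.length < s.length → s.getD t.length 0 ≤ K := by
      rintro s ⟨hadm, -⟩ hls
      refine le_trans (hadm.2 t.length) (le_of_eq ?_)
      have h1 : chain g (t.length + 1) <+: chain g s.length := chain_prefix g (by omega)
      rw [← getD_prefix h1 (by simpa using Nat.lt_succ_self _) 0]
      have e := getD_concat_self (chain g t.length) (g (chain g t.length)) 0
      rw [length_chain] at e
      rw [chain_succ]
      exact e
    set N := (Finset.range (K + 1)).sup ν with hN
    obtain ⟨s, hTs, hts, hslen⟩ := ht (N + 1)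
    set k := s.getD t.length 0 with hk
    have hkK : k ≤ K := hbound s hTs (by omega)
    have hνk : ν k ≤ N := Finset.le_sup (by simp [Finset.mem_range]; omega)
    have hsget : s[t.length]'(by omega) = k := (List.getD_eq_getElem s 0 (by omega)).symm
    have hprefix : t ++ [k] <+: s := by
      have h1 : t = s.take t.length := by
        rw [List.prefix_iff_eq_take] at hts; exact hts
      have h2 : t ++ [k] = s.take (t.length + 1) := by
        conv_lhs => rw [h1, ← hsget]
        rw [← List.concat_eq_append]
        exact List.take_concat_get (by omega : t.length < s.length)
      rw [h2]; exact List.take_prefix _ _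
    set s' := s.take (t.length + 1 + ν k) with hs'
    have hlens' : s'.length = t.length + 1 + ν k := by
      simp [hs']; omega
    refine hν k s' ⟨?_, ?_, ?_⟩
    · exact hTtake s _ hTs (by omega)
    · rw [List.prefix_take_iff]
      exact ⟨hprefix, by simp⟩
    · rw [hlens']
      simp
  choose knext hknext using hstep
  set f : List ℕ → ℕ := fun t => if h : good t then knext t h else 0 with hf
  have hfval : ∀ t (h : good t), f t = knext t h := fun t h => by
    rw [hf]; exact dif_pos h
  have hgoodn : ∀ n, good (chain f n) := by
    intro n
    induction n with
    | zero => exact hgood_nil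
    | succ n ih =>
      rw [chain_succ, hfval _ ih]
      exact hknext _ ih
  rw [mem_souslin]
  refine ⟨chainFun f, fun n => ?_⟩
  rw [seg_chainFun]
  exact (hmem_of_good _ (hgoodn n)).2

/-! ### Measure estimates -/

section Measure

variable [MeasurableSpace Ω]

lemma measurableSet_levelP {P : List ℕ → Set Ω} (hP : ∀ s, MeasurableSet (P s))
    (b : List ℕ) : MeasurableSet (levelP P b) :=
  MeasurableSet.iUnion fun t => MeasurableSet.iUnion fun _ => hP t

lemma exists_le_add {f : ℕ → ℝ≥0∞} {a δ : ℝ≥0∞} (ha : a ≠ ⊤) (h : a ≤ ⨆ M, f M)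
    (hδ : δ ≠ 0) : ∃ M, a ≤ f M + δ := by
  rcases le_or_gt a δ with hle | hlt
  · exact ⟨0, le_trans hle le_add_self⟩
  · have h1 : a - δ < a := ENNReal.sub_lt_self ha (by intro h0; rw [h0] at hlt; simp at hlt) hδ
    obtain ⟨M, hM⟩ := lt_iSup_iff.1 (lt_of_lt_of_le h1 h)
    refine ⟨M, ?_⟩
    have h2 : a - δ + δ = a := tsub_add_cancel_of_le hlt.le
    rw [← h2]
    exact add_le_add hM.le le_rfl

lemma step_exists {P : List ℕ → Set Ω} (μ : Measure Ω) [IsFiniteMeasure μ]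
    {δ : ℝ≥0∞} (hδ : δ ≠ 0) (b : List ℕ) :
    ∃ M, μ (levelA P b) ≤ μ (levelA P (b ++ [M])) + δ := by
  have hd : Directed (· ⊆ ·) (fun M => levelA P (b ++ [M])) := fun M M' =>
    ⟨max M M', levelA_concat_mono P b (le_max_left _ _),
      levelA_concat_mono P b (le_max_right _ _)⟩
  have hsup := hd.measure_iUnion (μ := μ)
  rw [iUnion_levelA_concat] at hsup
  exact exists_le_add (measure_ne_top μ _) hsup.le hδ

lemma geom_sum_le_one : ∀ n : ℕ, (∑ i ∈ Finset.range n, (2⁻¹ : ℝ≥0∞) ^ (i + 1)) ≤ 1 := by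
  intro n
  induction n with
  | zero => simp
  | succ n ih =>
    rw [Finset.sum_range_succ']
    have h1 : ∀ i : ℕ, (2⁻¹ : ℝ≥0∞) ^ (i + 1 + 1) = (2⁻¹ : ℝ≥0∞) ^ (i + 1) * 2⁻¹ := by
      intro i; rw [pow_succ]
    calc (∑ i ∈ Finset.range n, (2⁻¹ : ℝ≥0∞) ^ (i + 1 + 1)) + 2⁻¹ ^ (0 + 1)
        = (∑ i ∈ Finset.range n, (2⁻¹ : ℝ≥0∞) ^ (i + 1)) * 2⁻¹ + 2⁻¹ := by
          rw [Finset.sum_mul]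
          congr 1
          · exact Finset.sum_congr rfl fun i _ => h1 i
          · norm_num
      _ ≤ 1 * 2⁻¹ + 2⁻¹ := by gcongr
      _ = 1 := by
          rw [one_mul]
          have : (2⁻¹ : ℝ≥0∞) + 2⁻¹ = 2 * 2⁻¹ := by ring
          rw [this, ENNReal.mul_inv_cancel (by norm_num) (by norm_num)]

lemma inner_approx {P : List ℕ → Set Ω} (hP : ∀ s, MeasurableSet (P s)) (hreg : Reg P)
    (μ : Measure Ω) [IsFiniteMeasure μ] {ε : ℝ≥0∞} (hε : ε ≠ 0) :
    ∃ B : Set Ω, MeasurableSet B ∧ B ⊆ souslin P ∧ μ (souslin P) ≤ μ B + ε := by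
  classical
  set err : ℕ → ℝ≥0∞ := fun n => ε * 2⁻¹ ^ (n + 1) with herr
  have herr0 : ∀ n, err n ≠ 0 := fun n =>
    mul_ne_zero hε (pow_ne_zero _ (by simp))
  set errsum : ℕ → ℝ≥0∞ := fun n => ∑ i ∈ Finset.range n, err i with herrsum
  have herrsum_le : ∀ n, errsum n ≤ ε := by
    intro n
    calc errsum n = ε * ∑ i ∈ Finset.range n, (2⁻¹ : ℝ≥0∞) ^ (i + 1) := by
          rw [herrsum, Finset.mul_sum]
      _ ≤ ε * 1 := by gcongr; exact geom_sum_le_one n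
      _ = ε := mul_one ε
  set g : List ℕ → ℕ :=
    fun b => Classical.choose (step_exists (P := P) μ (herr0 b.length) b) with hg
  have hgspec : ∀ b : List ℕ,
      μ (levelA P b) ≤ μ (levelA P (b ++ [g b])) + err b.length :=
    fun b => Classical.choose_spec (step_exists (P := P) μ (herr0 b.length) b)
  set bseq : ℕ → List ℕ := chain g with hbseq
  have hinv : ∀ n, μ (souslin P) ≤ μ (levelA P (bseq n)) + errsum n := by
    intro n
    induction n with
    | zero =>
      rw [show bseq 0 = ([] : List ℕ) from rfl, levelA_nil]
      simp [herrsum]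
    | succ n ih =>
      have h1 := hgspec (bseq n)
      rw [length_chain] at h1
      calc μ (souslin P) ≤ μ (levelA P (bseq n)) + errsum n := ih
        _ ≤ (μ (levelA P (bseq n ++ [g (bseq n)])) + err n) + errsum n := by gcongr
        _ = μ (levelA P (bseq (n + 1))) + errsum (n + 1) := by
            rw [show bseq (n + 1) = bseq n ++ [g (bseq n)] from rfl,
              herrsum]
            simp only
            rw [Finset.sum_range_succ]
            ring
  have hanti : ∀ {m n : ℕ}, m ≤ n → levelA P (bseq n) ⊆ levelA P (bseq m) := by
    intro m n h
    induction n with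
    | zero => have : m = 0 := by omega
              subst this; exact subset_rfl
    | succ n ih =>
      rcases Nat.lt_or_ge m (n + 1) with h' | h'
      · exact subset_trans (levelA_concat_subset P (bseq n) _) (ih (by omega))
      · have : m = n + 1 := by omega
        subst this; exact subset_rfl
  set Bn : ℕ → Set Ω := fun n => ⋂ j, ⋂ (_ : j ≤ n), levelP P (bseq j) with hBn
  have hBnmeas : ∀ n, MeasurableSet (Bn n) := fun n =>
    MeasurableSet.iInter fun j => MeasurableSet.iInter fun _ => measurableSet_levelP hP _
  have hEB : ∀ n, levelA P (bseq n) ⊆ Bn n := by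
    intro n
    refine subset_iInter fun j => subset_iInter fun hj => ?_
    exact subset_trans (hanti hj) (levelA_subset_levelP hreg _)
  have hBnanti : ∀ {m n : ℕ}, m ≤ n → Bn n ⊆ Bn m := by
    intro m n h
    refine subset_iInter fun j => subset_iInter fun hj => ?_
    exact iInter_subset_of_subset j (iInter_subset _ (by omega))
  set B : Set Ω := ⋂ n, levelP P (bseq n) with hB
  have hBeq : B = ⋂ n, Bn n := by
    apply subset_antisymm
    · exact subset_iInter fun n => subset_iInter fun j => subset_iInter fun hj =>
        iInter_subset _ j
    · refine subset_iInter fun n => ?_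
      exact iInter_subset_of_subset n (iInter_subset_of_subset n (iInter_subset _ le_rfl))
  refine ⟨B, MeasurableSet.iInter fun n => measurableSet_levelP hP _,
    koenig_subset hreg g, ?_⟩
  have hμB : μ B = ⨅ n, μ (Bn n) := by
    rw [hBeq]
    exact Directed.measure_iInter (fun n => (hBnmeas n).nullMeasurableSet)
      (fun m n => ⟨max m n, hBnanti (le_max_left _ _), hBnanti (le_max_right _ _)⟩)
      ⟨0, measure_ne_top μ _⟩
  have h1 : μ (souslin P) ≤ ⨅ n, (μ (Bn n) + ε) := by
    refine le_iInf fun n => ?_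
    calc μ (souslin P) ≤ μ (levelA P (bseq n)) + errsum n := hinv n
      _ ≤ μ (Bn n) + ε := add_le_add (measure_mono (hEB n)) (herrsum_le n)
  rwa [← ENNReal.iInf_add, ← hμB] at h1

/-- **Lusin–Sierpiński**: the Souslin operation applied to measurable sets yields a
null-measurable set, for any finite measure. -/
theorem souslin_nullMeasurable {P : List ℕ → Set Ω} (hP : ∀ s, MeasurableSet (P s))
    (μ : Measure Ω) [IsFiniteMeasure μ] : NullMeasurableSet (souslin P) μ := by
  classical
  -- replace `P` by its regularization
  set Q := regularize P with hQ
  have hQmeas : ∀ s, MeasurableSet (Q s) := fun s => MeasurableSet.iInter fun n => hP _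
  have hQreg : Reg Q := reg_regularize P
  rw [← souslin_regularize P]
  set A := souslin Q with hA
  -- inner approximations
  have hinner : ∀ n : ℕ, ∃ B : Set Ω, MeasurableSet B ∧ B ⊆ A ∧
      μ A ≤ μ B + ((n : ℝ≥0∞))⁻¹ := by
    intro n
    rcases Nat.eq_zero_or_pos n with rfl | hn
    · exact ⟨∅, MeasurableSet.empty, empty_subset _, by simp⟩
    · exact inner_approx hQmeas hQreg μ
        (ENNReal.inv_ne_zero.mpr (ENNReal.natCast_ne_top n))
  choose Bs hBmeas hBsub hBle using hinner
  set B : Set Ω := ⋃ n, Bs n with hB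
  have hBmeas' : MeasurableSet B := MeasurableSet.iUnion hBmeas
  have hBsub' : B ⊆ A := iUnion_subset hBsub
  have hle : μ A ≤ μ B := by
    refine ENNReal.le_of_forall_pos_le_add fun δ hδ _ => ?_
    obtain ⟨n, hn⟩ := ENNReal.exists_inv_nat_lt (a := (δ : ℝ≥0∞)) (by simpa using hδ.ne')
    calc μ A ≤ μ (Bs n) + (n : ℝ≥0∞)⁻¹ := hBle n
      _ ≤ μ B + δ := add_le_add (measure_mono (subset_iUnion _ n)) hn.le
  -- hull
  set H := toMeasurable μ A with hH
  have hdiffnull : μ (H \ B) = 0 := by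
    have h1 : μ (H \ B) = μ H - μ B :=
      measure_diff (subset_trans hBsub' (subset_toMeasurable μ A))
        hBmeas'.nullMeasurableSet (measure_ne_top μ _)
    rw [h1, measure_toMeasurable]
    exact tsub_eq_zero_of_le hle
  have hAeq : A = B ∪ (A \ B) := by
    rw [union_diff_self, union_eq_self_of_subset_left hBsub']
  rw [hAeq]
  exact hBmeas'.nullMeasurableSet.union
    (NullMeasurableSet.of_null (measure_mono_null
      (diff_subset_diff_left (subset_toMeasurable μ A)) hdiffnull))

end Measure

/-! ### Souslin representation of product-measurable sets over Baire space -/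

lemma iInter_prod_eq {X Y : Type*} (f : ℕ → Set X) (g : ℕ → Set Y) :
    ⋂ n, (f n ×ˢ g n) = (⋂ n, f n) ×ˢ (⋂ n, g n) := by
  ext ⟨a, b⟩
  simp only [mem_iInter, Set.mem_prod]
  exact ⟨fun h => ⟨fun n => (h n).1, fun n => (h n).2⟩, fun h n => ⟨h.1 n, h.2 n⟩⟩

section Rect

variable {Ω : Type*} [MeasurableSpace Ω]

/-- Measurable-times-closed rectangles in `Ω × (ℕ → ℕ)`. -/
def RectC (Ω : Type*) [MeasurableSpace Ω] : Set (Set (Ω × (ℕ → ℕ))) :=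
  {S | ∃ (F : Set Ω) (D : Set (ℕ → ℕ)), MeasurableSet F ∧ IsClosed D ∧ S = F ×ˢ D}

lemma rectC_interClosed : InterClosed (RectC Ω) := by
  constructor
  · exact ⟨univ, univ, MeasurableSet.univ, isClosed_univ, (univ_prod_univ).symm⟩
  · intro f hf
    choose F D hF hD hFD using hf
    refine ⟨⋂ n, F n, ⋂ n, D n, MeasurableSet.iInter hF, isClosed_iInter hD, ?_⟩
    rw [← iInter_prod_eq]
    exact iInter_congr hFD

lemma isSouslin_compl_prod {F : Set Ω} {D : Set (ℕ → ℕ)} (hF : MeasurableSet F)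
    (hD : IsClosed D) : IsSouslin (RectC Ω) (F ×ˢ D)ᶜ := by
  obtain ⟨Dn, hDn, hDnU⟩ : ∃ Dn : ℕ → Set (ℕ → ℕ), (∀ n, IsClosed (Dn n)) ∧ ⋃ n, Dn n = Dᶜ := by
    letI := TopologicalSpace.pseudoMetrizableSpacePseudoMetric (ℕ → ℕ)
    obtain ⟨Dn, h1, h2, h3, h4⟩ := (isOpen_compl_iff.2 hD).exists_iUnion_isClosed
    exact ⟨Dn, h1, h3⟩
  have hcompl : (F ×ˢ D)ᶜ = (Fᶜ ×ˢ univ) ∪ ⋃ n, (univ ×ˢ Dn n) := by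
    ext ⟨a, b⟩
    simp only [Set.mem_compl_iff, Set.mem_prod, Set.mem_union, mem_iUnion, mem_univ,
      and_true, true_and, not_and_or]
    constructor
    · rintro (h | h)
      · exact Or.inl h
      · refine Or.inr ?_
        have : b ∈ ⋃ n, Dn n := by rw [hDnU]; exact h
        simpa using this
    · rintro (h | ⟨n, hn⟩)
      · exact Or.inl h
      · refine Or.inr fun hb => ?_
        have : b ∈ Dᶜ := by rw [← hDnU]; exact mem_iUnion.2 ⟨n, hn⟩
        exact this hb
  rw [hcompl]
  set S : ℕ → Set (Ω × (ℕ → ℕ)) :=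
    fun m => Nat.casesOn m (Fᶜ ×ˢ (univ : Set (ℕ → ℕ)))
      (fun n => (univ : Set Ω) ×ˢ Dn n) with hS
  have hU : (Fᶜ ×ˢ (univ : Set (ℕ → ℕ))) ∪ (⋃ n, ((univ : Set Ω) ×ˢ Dn n)) = ⋃ m, S m := by
    ext p
    simp only [mem_union, mem_iUnion]
    constructor
    · rintro (h | ⟨n, hn⟩)
      · exact ⟨0, h⟩
      · exact ⟨n + 1, hn⟩
    · rintro ⟨m, hm⟩
      match m with
      | 0 => exact Or.inl hm
      | (n + 1) => exact Or.inr ⟨n, hm⟩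
  rw [hU]
  refine IsSouslin.iUnion rectC_interClosed.univ_mem fun m => IsSouslin.of_mem ?_
  match m with
  | 0 => exact ⟨Fᶜ, univ, hF.compl, isClosed_univ, rfl⟩
  | (n + 1) => exact ⟨univ, Dn n, MeasurableSet.univ, hDn n, rfl⟩

/-- Every product-measurable subset of `Ω × (ℕ → ℕ)` is Souslin over rectangles. -/
lemma isSouslin_of_measurableSet {A : Set (Ω × (ℕ → ℕ))} (hA : MeasurableSet A) :
    IsSouslin (RectC Ω) A := by
  set m2 : MeasurableSpace (Ω × (ℕ → ℕ)) :=
    { MeasurableSet' := fun S => IsSouslin (RectC Ω) S ∧ IsSouslin (RectC Ω) Sᶜ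
      measurableSet_empty := by
        constructor
        · exact IsSouslin.of_mem ⟨∅, univ, MeasurableSet.empty, isClosed_univ, by simp⟩
        · rw [compl_empty]
          exact IsSouslin.of_mem ⟨univ, univ, MeasurableSet.univ, isClosed_univ, by simp⟩
      measurableSet_compl := by
        rintro s ⟨h1, h2⟩
        exact ⟨h2, by rwa [compl_compl]⟩
      measurableSet_iUnion := by
        rintro f hf
        constructor
        · exact IsSouslin.iUnion rectC_interClosed.univ_mem fun m => (hf m).1
        · rw [compl_iUnion]
          exact IsSouslin.iInter rectC_interClosed fun m => (hf m).2 } with hm2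
  suffices hle : (Prod.instMeasurableSpace : MeasurableSpace (Ω × (ℕ → ℕ))) ≤ m2 by
    exact (hle _ hA).1
  have hprod : (Prod.instMeasurableSpace : MeasurableSpace (Ω × (ℕ → ℕ)))
      = MeasurableSpace.comap Prod.fst ‹MeasurableSpace Ω› ⊔
        MeasurableSpace.comap Prod.snd (inferInstance : MeasurableSpace (ℕ → ℕ)) := rfl
  rw [hprod, sup_le_iff]
  constructor
  · rintro s ⟨F, hF, rfl⟩
    have h1 : Prod.fst ⁻¹' F = F ×ˢ (univ : Set (ℕ → ℕ)) := by
      ext ⟨a, b⟩; simp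
    have h2 : (F ×ˢ (univ : Set (ℕ → ℕ)))ᶜ = Fᶜ ×ˢ (univ : Set (ℕ → ℕ)) := by
      ext ⟨a, b⟩; simp
    refine ⟨?_, ?_⟩
    · rw [h1]; exact IsSouslin.of_mem ⟨F, univ, hF, isClosed_univ, rfl⟩
    · rw [h1, h2]; exact IsSouslin.of_mem ⟨Fᶜ, univ, hF.compl, isClosed_univ, rfl⟩
  · have hb : (inferInstance : MeasurableSpace (ℕ → ℕ)) = borel (ℕ → ℕ) :=
      BorelSpace.measurable_eq
    rw [hb, borel_eq_generateFrom_isClosed, MeasurableSpace.comap_generateFrom]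
    refine MeasurableSpace.generateFrom_le ?_
    rintro s ⟨D, hD, rfl⟩
    have h1 : Prod.snd ⁻¹' D = (univ : Set Ω) ×ˢ D := by
      ext ⟨a, b⟩; simp
    refine ⟨?_, ?_⟩
    · rw [h1]; exact IsSouslin.of_mem ⟨univ, D, MeasurableSet.univ, hD, rfl⟩
    · rw [h1]; exact isSouslin_compl_prod MeasurableSet.univ hD

/-- Decomposition: a measurable `A ⊆ Ω × (ℕ → ℕ)` is the Souslin operation applied
to a regular scheme of measurable-times-closed rectangles. -/
lemma exists_rect_scheme {A : Set (Ω × (ℕ → ℕ))} (hA : MeasurableSet A) :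
    ∃ (F : List ℕ → Set Ω) (D : List ℕ → Set (ℕ → ℕ)),
      (∀ t, MeasurableSet (F t)) ∧ (∀ t, IsClosed (D t)) ∧ Reg F ∧ Reg D ∧
      A = souslin (fun t => F t ×ˢ D t) := by
  obtain ⟨P, hPC, hPA⟩ := isSouslin_of_measurableSet hA
  choose F D hF hD hFD using hPC
  refine ⟨regularize F, regularize D, fun t => MeasurableSet.iInter fun n => hF _,
    fun t => isClosed_iInter fun n => hD _, reg_regularize F, reg_regularize D, ?_⟩
  have : regularize P = fun t => regularize F t ×ˢ regularize D t := by
    funext t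
    rw [regularize, funext hFD]
    exact iInter_prod_eq _ _
  rw [hPA, ← souslin_regularize P, this]

end Rect


/-! ### Universal completion glue -/

lemma measurableSet_univCompletion {Ω : Type*} {m : MeasurableSpace Ω} {s : Set Ω} :
    MeasurableSet[univCompletion m] s ↔
      ∀ μ : Measure Ω, IsProbabilityMeasure μ → NullMeasurableSet s μ := Iff.rfl

lemma le_univCompletion {Ω : Type*} (m : MeasurableSpace Ω) : m ≤ univCompletion m :=
  fun _s hs _μ _hμ => hs.nullMeasurableSet

lemma souslin_univCompletion {Ω : Type*} {m : MeasurableSpace Ω} {P : List ℕ → Set Ω}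
    (hP : ∀ s, MeasurableSet (P s)) :
    MeasurableSet[univCompletion m] (souslin P) := by
  intro μ hμ
  haveI := hμ
  exact souslin_nullMeasurable hP μ

/-! ### Cylinders in Baire space -/

/-- The cylinder of a finite sequence. -/
def cyl (u : List ℕ) : Set (ℕ → ℕ) := {x | seg x u.length = u}

lemma isClosed_cyl (u : List ℕ) : IsClosed (cyl u) := by
  have : cyl u = ⋂ i ∈ Finset.range u.length, {x : ℕ → ℕ | x i = u.getD i 0} := by
    ext x
    simp only [cyl, mem_setOf_eq, mem_iInter, Finset.mem_range]
    constructor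
    · intro h i hi
      rw [← h, getD_seg x hi]
    · intro h
      apply List.ext_getElem (by simp)
      intro i h1 h2
      rw [getElem_seg x (by simpa using h1), ← List.getD_eq_getElem u 0 h2]
      exact h i (by simpa using h1)
  rw [this]
  refine isClosed_biInter fun i _ => ?_
  exact isClosed_eq (continuous_apply i) continuous_const

lemma cyl_anti {u v : List ℕ} (h : u <+: v) : cyl v ⊆ cyl u := by
  intro x hx
  have h1 : seg x u.length = (seg x v.length).take u.length := by
    rw [take_seg, min_eq_left h.length_le]
  rw [cyl, mem_setOf_eq, h1, hx]
  exact (List.prefix_iff_eq_take.1 h).symm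

lemma mem_cyl_seg (x : ℕ → ℕ) (n : ℕ) : x ∈ cyl (seg x n) := by
  simp [cyl, length_seg]

/-- Key limit lemma: if all cylinder-restricted pieces along a branch are nonempty, then the
diagonal point `υ` lies in all the closed sets. -/
lemma mem_iInter_of_nonempty {D : List ℕ → Set (ℕ → ℕ)} (hDc : ∀ t, IsClosed (D t))
    (hreg : Reg D) (σ υ : ℕ → ℕ) (hne : ∀ n, (D (seg σ n) ∩ cyl (seg υ n)).Nonempty) :
    υ ∈ ⋂ n, D (seg σ n) := by
  choose y hy using hne
  have htd : Filter.Tendsto y Filter.atTop (nhds υ) := by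
    rw [tendsto_pi_nhds]
    intro i
    refine Filter.Tendsto.congr' ?_ tendsto_const_nhds
    rw [Filter.EventuallyEq, Filter.eventually_atTop]
    refine ⟨i + 1, fun n hn => ?_⟩
    have h1 : seg (y n) n = seg υ n := by
      have := (hy n).2
      simpa [cyl] using this
    have h2 : (seg (y n) n).getD i 0 = (seg υ n).getD i 0 := by rw [h1]
    rw [getD_seg _ (by omega), getD_seg _ (by omega)] at h2
    exact h2.symm
  refine mem_iInter.2 fun m => ?_
  refine (hDc (seg σ m)).mem_of_tendsto htd ?_
  rw [Filter.eventually_atTop]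
  exact ⟨m, fun n hn => hreg (seg_prefix σ hn) (hy n).1⟩

/-! ### Localized Souslin sets and the selection chain -/

variable {Ω : Type*}

/-- Souslin set localized below a node `t`. -/
def tloc (G : List ℕ → Set Ω) (t : List ℕ) : Set Ω := souslin (fun u => G (t ++ u))

lemma tloc_nil (G : List ℕ → Set Ω) : tloc G [] = souslin G := rfl

lemma tloc_subset {G : List ℕ → Set Ω} (t : List ℕ) : tloc G t ⊆ G t := by
  intro ω hω
  obtain ⟨σ, hσ⟩ := mem_souslin.1 hω
  have := hσ 0
  simpa using this

lemma tloc_eq_iUnion {G : List ℕ → Set Ω} (hreg : Reg G) (t : List ℕ) :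
    tloc G t = ⋃ k, tloc G (t ++ [k]) := by
  apply subset_antisymm
  · intro ω hω
    obtain ⟨σ, hσ⟩ := mem_souslin.1 hω
    refine mem_iUnion.2 ⟨σ 0, mem_souslin.2 ⟨fun i => σ (i + 1), fun n => ?_⟩⟩
    simpa [seg_succ_cons, List.append_assoc, List.singleton_append] using hσ (n + 1)
  · refine iUnion_subset fun k => ?_
    intro ω hω
    obtain ⟨σ, hσ⟩ := mem_souslin.1 hω
    refine mem_souslin.2 ⟨fun i => Nat.casesOn i k σ, fun n => ?_⟩
    cases n with
    | zero =>
      have := hσ 0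
      simp only [seg_zero, List.append_nil] at this ⊢
      exact hreg ⟨[k], rfl⟩ this
    | succ n =>
      rw [seg_of_cons]
      simpa [List.append_assoc, List.singleton_append] using hσ n

/-- The canonical next choice: least `k` with `ω ∈ X (t ++ [k])`. -/
noncomputable def pick (X : List ℕ → Set Ω) (ω : Ω) (t : List ℕ) : ℕ := by
  classical
  exact if h : ∃ k, ω ∈ X (t ++ [k]) then Nat.find h else 0

lemma pick_spec {X : List ℕ → Set Ω} {ω : Ω} {t : List ℕ} (h : ∃ k, ω ∈ X (t ++ [k])) :
    ω ∈ X (t ++ [pick X ω t]) := by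
  classical
  rw [pick]
  simp only [dif_pos h]
  exact Nat.find_spec h

/-- The selected nodes. -/
noncomputable def selChain (X : List ℕ → Set Ω) (ω : Ω) : ℕ → List ℕ := chain (pick X ω)

/-- The selected branch. -/
noncomputable def selFun (X : List ℕ → Set Ω) (ω : Ω) : ℕ → ℕ := chainFun (pick X ω)

lemma measurableSet_pick_eq {M : MeasurableSpace Ω} {X : List ℕ → Set Ω}
    (hX : ∀ t, MeasurableSet[M] (X t)) (t : List ℕ) (k : ℕ) :
    MeasurableSet[M] {ω | pick X ω t = k} := by
  classical
  rcases Nat.eq_zero_or_pos k with rfl | hk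
  · have : {ω | pick X ω t = 0} = X (t ++ [0]) ∪ ⋂ j, (X (t ++ [j]))ᶜ := by
      ext ω
      simp only [mem_setOf_eq, mem_union, mem_iInter, Set.mem_compl_iff]
      constructor
      · intro h
        by_cases he : ∃ j, ω ∈ X (t ++ [j])
        · left
          rw [pick, dif_pos he] at h
          have := Nat.find_spec he
          rwa [h] at this
        · right
          push_neg at he
          exact he
      · rintro (h | h)
        · rw [pick, dif_pos ⟨0, h⟩]
          exact (Nat.find_eq_zero _).2 h
        · rw [pick, dif_neg (by push_neg; exact h)]
    rw [this]
    exact ((hX _).union (MeasurableSet.iInter fun j => (hX _).compl))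
  · have : {ω | pick X ω t = k} = X (t ++ [k]) ∩ ⋂ j, ⋂ (_ : j < k), (X (t ++ [j]))ᶜ := by
      ext ω
      simp only [mem_setOf_eq, mem_inter_iff, mem_iInter, Set.mem_compl_iff]
      constructor
      · intro h
        by_cases he : ∃ j, ω ∈ X (t ++ [j])
        · rw [pick, dif_pos he] at h
          subst h
          exact ⟨Nat.find_spec he, fun j hj => Nat.find_min he hj⟩
        · rw [pick, dif_neg he] at h
          omega
      · rintro ⟨h1, h2⟩
        rw [pick, dif_pos ⟨k, h1⟩]
        exact (Nat.find_eq_iff _).2 ⟨h1, fun j hj => h2 j hj⟩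
    rw [this]
    exact (hX _).inter (MeasurableSet.iInter fun j => MeasurableSet.iInter fun _ => (hX _).compl)

lemma measurableSet_selChain_eq {M : MeasurableSpace Ω} {X : List ℕ → Set Ω}
    (hX : ∀ t, MeasurableSet[M] (X t)) (n : ℕ) (t : List ℕ) :
    MeasurableSet[M] {ω | selChain X ω n = t} := by
  induction n generalizing t with
  | zero =>
    by_cases ht : t = []
    · subst ht
      have : {ω : Ω | selChain X ω 0 = []} = univ := by
        ext ω; simp [selChain]
      rw [this]; exact MeasurableSet.univ
    · have : {ω : Ω | selChain X ω 0 = t} = ∅ := by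
        ext ω
        simp only [mem_setOf_eq, mem_empty_iff_false, iff_false]
        intro h
        exact ht (by rw [← h]; rfl)
      rw [this]; exact MeasurableSet.empty
  | succ n ih =>
    have : {ω | selChain X ω (n + 1) = t}
        = ⋃ t' : List ℕ, ⋃ k : ℕ, ⋃ (_ : t' ++ [k] = t),
            ({ω | selChain X ω n = t'} ∩ {ω | pick X ω t' = k}) := by
      ext ω
      simp only [mem_iUnion, mem_inter_iff, mem_setOf_eq]
      constructor
      · intro h
        refine ⟨selChain X ω n, pick X ω (selChain X ω n), ?_, rfl, rfl⟩
        rw [← h]; rfl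
      · rintro ⟨t', k, rfl, h1, h2⟩
        show selChain X ω n ++ [pick X ω (selChain X ω n)] = t' ++ [k]
        rw [h1, h2]
    rw [this]
    exact MeasurableSet.iUnion fun t' => MeasurableSet.iUnion fun k =>
      MeasurableSet.iUnion fun _ => (ih t').inter (measurableSet_pick_eq hX t' k)

lemma measurableSet_selFun_eq {M : MeasurableSpace Ω} {X : List ℕ → Set Ω}
    (hX : ∀ t, MeasurableSet[M] (X t)) (n c : ℕ) :
    MeasurableSet[M] {ω | selFun X ω n = c} := by
  have : {ω | selFun X ω n = c}
      = ⋃ t : List ℕ, ({ω | selChain X ω n = t} ∩ {ω | pick X ω t = c}) := by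
    ext ω
    simp only [mem_iUnion, mem_inter_iff, mem_setOf_eq]
    constructor
    · intro h
      exact ⟨selChain X ω n, rfl, h⟩
    · rintro ⟨t, h1, h2⟩
      show pick X ω (selChain X ω n) = c
      rw [h1, h2]
  rw [this]
  exact MeasurableSet.iUnion fun t =>
    (measurableSet_selChain_eq hX n t).inter (measurableSet_pick_eq hX t c)

lemma measurable_zraw {Ω : Type*} [M : MeasurableSpace Ω] (X : List ℕ → Set Ω)
    (hX : ∀ t, MeasurableSet (X t)) :
    Measurable (fun ω n => (Nat.unpair (selFun X ω n)).2 : Ω → ℕ → ℕ) := by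
  rw [measurable_pi_iff]
  intro n
  apply measurable_to_countable'
  intro v
  have : (fun ω => (Nat.unpair (selFun X ω n)).2) ⁻¹' {v}
      = ⋃ c : ℕ, ⋃ (_ : (Nat.unpair c).2 = v), {ω | selFun X ω n = c} := by
    ext ω
    simp only [mem_preimage, mem_singleton_iff, mem_iUnion, mem_setOf_eq]
    constructor
    · intro h
      exact ⟨selFun X ω n, h, rfl⟩
    · rintro ⟨c, hc, h⟩
      rw [h, hc]
  rw [this]
  exact MeasurableSet.iUnion fun c => MeasurableSet.iUnion fun _ =>
    measurableSet_selFun_eq hX n c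

/-- **Measurable selection for Baire space.** -/
theorem baire_selection {Ω : Type*} [mΩ : MeasurableSpace Ω]
    (A : Set (Ω × (ℕ → ℕ))) (hA : MeasurableSet A) :
    ∃ Z : Ω → Option (ℕ → ℕ),
      @Measurable Ω (Option (ℕ → ℕ)) (univCompletion mΩ) (optionSigma (ℕ → ℕ)) Z ∧
      (∀ ω x, Z ω = some x → (ω, x) ∈ A) ∧
      {ω | Z ω ≠ none} = Prod.fst '' A := by
  classical
  obtain ⟨F, D, hFmeas, hDclosed, hFreg, hDreg, hAeq⟩ := exists_rect_scheme hA
  set d1 : List ℕ → List ℕ := fun t => t.map (fun c => (Nat.unpair c).1) with hd1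
  set d2 : List ℕ → List ℕ := fun t => t.map (fun c => (Nat.unpair c).2) with hd2
  set G : List ℕ → Set Ω := fun t =>
    if (D (d1 t) ∩ cyl (d2 t)).Nonempty then F (d1 t) else ∅ with hG
  have hGmeas : ∀ t, MeasurableSet (G t) := by
    intro t
    show MeasurableSet (if (D (d1 t) ∩ cyl (d2 t)).Nonempty then F (d1 t) else ∅)
    split_ifs
    · exact hFmeas _
    · exact MeasurableSet.empty
  have hd1pre : ∀ {s t : List ℕ}, s <+: t → d1 s <+: d1 t := fun h => h.map _
  have hd2pre : ∀ {s t : List ℕ}, s <+: t → d2 s <+: d2 t := fun h => h.map _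
  have hGreg : Reg G := by
    intro s t hst ω hω
    rw [hG] at hω ⊢
    simp only at hω ⊢
    by_cases hne : (D (d1 t) ∩ cyl (d2 t)).Nonempty
    · rw [if_pos hne] at hω
      have hne' : (D (d1 s) ∩ cyl (d2 s)).Nonempty :=
        hne.mono (inter_subset_inter (hDreg (hd1pre hst)) (cyl_anti (hd2pre hst)))
      rw [if_pos hne']
      exact hFreg (hd1pre hst) hω
    · rw [if_neg hne] at hω
      exact absurd hω (notMem_empty ω)
  -- membership along a branch of `G` yields a point of `A`
  have key1 : ∀ (ω : Ω) (σ : ℕ → ℕ), (∀ n, ω ∈ G (seg σ n)) →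
      (ω, fun n => (Nat.unpair (σ n)).2) ∈ A := by
    intro ω σ hσ
    set σ1 : ℕ → ℕ := fun n => (Nat.unpair (σ n)).1 with hσ1
    set υ : ℕ → ℕ := fun n => (Nat.unpair (σ n)).2 with hυ
    have hmap1 : ∀ n, d1 (seg σ n) = seg σ1 n := fun n => map_seg _ σ n
    have hmap2 : ∀ n, d2 (seg σ n) = seg υ n := fun n => map_seg _ σ n
    have hne : ∀ n, (D (seg σ1 n) ∩ cyl (seg υ n)).Nonempty := by
      intro n
      have h := hσ n
      rw [hG] at h
      simp only at h
      rw [hmap1, hmap2] at h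
      by_contra hc
      rw [if_neg hc] at h
      exact absurd h (notMem_empty ω)
    have hωF : ∀ n, ω ∈ F (seg σ1 n) := by
      intro n
      have h := hσ n
      rw [hG] at h
      simp only at h
      rw [hmap1, hmap2] at h
      rwa [if_pos (hne n)] at h
    have hυD : υ ∈ ⋂ n, D (seg σ1 n) :=
      mem_iInter_of_nonempty hDclosed hDreg σ1 υ hne
    rw [hAeq]
    exact mem_souslin.2 ⟨σ1, fun n => ⟨hωF n, mem_iInter.1 hυD n⟩⟩
  -- the projection
  have key2 : souslin G = Prod.fst '' A := by
    apply subset_antisymm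
    · intro ω hω
      obtain ⟨σ, hσ⟩ := mem_souslin.1 hω
      exact ⟨(ω, fun n => (Nat.unpair (σ n)).2), key1 ω σ hσ, rfl⟩
    · rintro ω ⟨⟨ω', x⟩, hmem, rfl⟩
      rw [hAeq] at hmem
      obtain ⟨τ, hτ⟩ := mem_souslin.1 hmem
      refine mem_souslin.2 ⟨fun n => Nat.pair (τ n) (x n), fun n => ?_⟩
      have hm1 : d1 (seg (fun n => Nat.pair (τ n) (x n)) n) = seg τ n := by
        show (seg (fun n => Nat.pair (τ n) (x n)) n).map (fun c => (Nat.unpair c).1) = seg τ n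
        rw [map_seg]
        congr 1
        funext i
        simp [Nat.unpair_pair]
      have hm2 : d2 (seg (fun n => Nat.pair (τ n) (x n)) n) = seg x n := by
        show (seg (fun n => Nat.pair (τ n) (x n)) n).map (fun c => (Nat.unpair c).2) = seg x n
        rw [map_seg]
        congr 1
        funext i
        simp [Nat.unpair_pair]
      rw [hG]
      simp only
      rw [hm1, hm2, if_pos ⟨x, (hτ n).2, mem_cyl_seg x n⟩]
      exact (hτ n).1
  -- the selection
  have hXmemU : ∀ t, MeasurableSet[univCompletion mΩ] ((tloc G) t) := fun t =>
    souslin_univCompletion (fun u => hGmeas _)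
  set S : Set Ω := souslin G with hS
  have hSmemU : MeasurableSet[univCompletion mΩ] S := souslin_univCompletion hGmeas
  set Zraw : Ω → ℕ → ℕ := fun ω n => (Nat.unpair (selFun (tloc G) ω n)).2 with hZraw
  set Z : Ω → Option (ℕ → ℕ) := fun ω => if ω ∈ S then some (Zraw ω) else none with hZ
  have hsel : ∀ ω, ω ∈ S → ∀ n, ω ∈ (tloc G) (selChain (tloc G) ω n) := by
    intro ω hω n
    induction n with
    | zero => exact hω
    | succ n ih =>
      rw [tloc_eq_iUnion hGreg] at ih
      obtain ⟨k, hk⟩ := mem_iUnion.1 ih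
      have hpick := pick_spec (X := tloc G) (ω := ω) (t := selChain (tloc G) ω n) ⟨k, hk⟩
      exact hpick
  have hgraph : ∀ ω, ω ∈ S → (ω, Zraw ω) ∈ A := by
    intro ω hω
    refine key1 ω (selFun (tloc G) ω) fun n => ?_
    have h1 : ω ∈ (tloc G) (selChain (tloc G) ω n) := hsel ω hω n
    have h2 : (tloc G) (selChain (tloc G) ω n) ⊆ G (selChain (tloc G) ω n) := tloc_subset _
    have h3 : selChain (tloc G) ω n = seg (selFun (tloc G) ω) n := (seg_chainFun _ n).symm
    rw [h3] at h1 h2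
    exact h2 h1
  refine ⟨Z, ?_, ?_, ?_⟩
  · -- measurability
    have hZrawMeas := @measurable_zraw Ω (univCompletion mΩ) (tloc G) hXmemU
    apply @measurable_generateFrom Ω (Option (ℕ → ℕ)) (univCompletion mΩ) _ Z
    rintro t (⟨B, hB, rfl⟩ | ht)
    · have hpre : Z ⁻¹' (Option.some '' B) = S ∩ Zraw ⁻¹' B := by
        ext ω
        simp only [mem_preimage, mem_inter_iff, hZ]
        constructor
        · rintro ⟨x, hxB, hx⟩
          by_cases hωS : ω ∈ S
          · rw [if_pos hωS] at hx
            have : Zraw ω = x := by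
              injection hx.symm
            rw [← this] at hxB
            exact ⟨hωS, hxB⟩
          · rw [if_neg hωS] at hx
            exact absurd hx.symm (by simp)
        · rintro ⟨hωS, hxB⟩
          exact ⟨Zraw ω, hxB, by rw [if_pos hωS]⟩
      rw [hpre]
      exact hSmemU.inter (hZrawMeas hB)
    · simp only [mem_singleton_iff] at ht
      subst ht
      have hpre : Z ⁻¹' {none} = Sᶜ := by
        ext ω
        simp only [mem_preimage, mem_singleton_iff, Set.mem_compl_iff, hZ]
        by_cases hωS : ω ∈ S
        · simp [if_pos hωS, hωS]
        · simp [if_neg hωS, hωS]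
      rw [hpre]
      exact hSmemU.compl
  · -- graph property
    intro ω x hx
    rw [hZ] at hx
    simp only at hx
    by_cases hωS : ω ∈ S
    · rw [if_pos hωS] at hx
      have : Zraw ω = x := by injection hx
      rw [← this]
      exact hgraph ω hωS
    · rw [if_neg hωS] at hx
      exact absurd hx (by simp)
  · -- projection property
    rw [← key2]
    ext ω
    simp only [mem_setOf_eq, hZ]
    by_cases hωS : ω ∈ S
    · simp [if_pos hωS, hωS]
    · simp [if_neg hωS, hωS]

lemma not_countable_baire : ¬ Countable (ℕ → ℕ) := by
  intro h
  obtain ⟨e, he⟩ := Countable.exists_injective_nat (ℕ → ℕ)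
  classical
  set F : ℕ → (ℕ → ℕ) := fun k =>
    if h' : ∃ f, e f = k then Classical.choose h' else fun _ => 0 with hF
  have hFe : ∀ f, F (e f) = f := by
    intro f
    have h' : ∃ g, e g = e f := ⟨f, rfl⟩
    rw [hF]
    simp only
    rw [dif_pos h']
    exact he (Classical.choose_spec h')
  set d : ℕ → ℕ := fun n => F n n + 1 with hd
  have h1 : d (e d) = F (e d) (e d) + 1 := rfl
  rw [hFe d] at h1
  omega

/-- Every standard Borel space embeds measurably into Baire space. -/
lemma exists_embedding_baire (E : Type*) [MeasurableSpace E] [StandardBorelSpace E] :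
    ∃ g : E → (ℕ → ℕ), MeasurableEmbedding g := by
  obtain ⟨f, hf⟩ := exists_measurableEmbedding_real E
  have e : ℝ ≃ᵐ (ℕ → ℕ) :=
    PolishSpace.measurableEquivOfNotCountable not_countable not_countable_baire
  exact ⟨e ∘ f, e.measurableEmbedding.comp hf⟩

end Sel

open Sel

/-- **General measurable selection theorem.**  For a measurable space `(Ω, F)`, a Borel
space `E` (modelled as a standard Borel space) and `A` in the product σ-field, there is a
universally measurable map `Z : Ω → E ∪ {∂}` whose graph is contained in `A` on
`{Z ∈ E}`, and `{Z ∈ E} = π_Ω(A)`. -/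
theorem general_measurable_selection
    {Ω E : Type*} [mΩ : MeasurableSpace Ω]
    [MeasurableSpace E] [StandardBorelSpace E]
    (A : Set (Ω × E)) (hA : MeasurableSet A) :
    ∃ Z : Ω → Option E,
      @Measurable Ω (Option E) (univCompletion mΩ) (optionSigma E) Z ∧
      (∀ ω : Ω, ∀ x : E, Z ω = some x → (ω, x) ∈ A) ∧
      {ω | Z ω ≠ none} = Prod.fst '' A := by
  classical
  rcases isEmpty_or_nonempty E with hE | hE
  · -- trivial case: `E` empty
    refine ⟨fun _ => none, ?_, ?_, ?_⟩
    · apply @measurable_generateFrom Ω (Option E) (univCompletion mΩ) _ (fun _ => none)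
      rintro t (⟨B, hB, rfl⟩ | ht)
      · have : (fun _ : Ω => (none : Option E)) ⁻¹' (Option.some '' B) = ∅ := by
          ext ω
          simp only [Set.mem_preimage, Set.mem_image, Set.mem_empty_iff_false, iff_false]
          rintro ⟨x, -, -⟩
          exact (IsEmpty.false x).elim
        rw [this]
        exact @MeasurableSet.empty _ (univCompletion mΩ)
      · simp only [Set.mem_singleton_iff] at ht
        subst ht
        have : (fun _ : Ω => (none : Option E)) ⁻¹' {none} = Set.univ := by
          ext ω; simp
        rw [this]
        exact @MeasurableSet.univ _ (univCompletion mΩ)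
    · intro ω x hx
      exact (IsEmpty.false x).elim
    · have h1 : {ω : Ω | (none : Option E) ≠ none} = ∅ := by simp
      have h2 : Prod.fst '' A = ∅ := by
        ext ω
        simp only [Set.mem_image, Set.mem_empty_iff_false, iff_false]
        rintro ⟨⟨ω', x⟩, -, -⟩
        exact (IsEmpty.false x).elim
      rw [h1, h2]
  · -- main case: embed `E` into Baire space
    obtain ⟨g, hg⟩ := exists_embedding_baire E
    set A' : Set (Ω × (ℕ → ℕ)) := (fun p : Ω × E => (p.1, g p.2)) '' A with hA'def
    have hemb : MeasurableEmbedding (fun p : Ω × E => (p.1, g p.2)) :=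
      MeasurableEmbedding.prodMap MeasurableEmbedding.id hg
    have hA' : MeasurableSet A' := hemb.measurableSet_image' hA
    obtain ⟨Z', hZ'meas, hZ'graph, hZ'proj⟩ := baire_selection A' hA'
    set h : (ℕ → ℕ) → E := Function.invFun g with hh
    have hleft : Function.LeftInverse h g := Function.leftInverse_invFun hg.injective
    set Z : Ω → Option E := fun ω => (Z' ω).map h with hZ
    -- if `Z' ω = some x'` then `x' = g e` with `(ω, e) ∈ A`
    have hrange : ∀ ω x', Z' ω = some x' → ∃ e : E, (ω, e) ∈ A ∧ g e = x' := by
      intro ω x' hx'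
      have := hZ'graph ω x' hx'
      rw [hA'def] at this
      obtain ⟨⟨ω₀, e⟩, hmem, heq⟩ := this
      have h1 : ω₀ = ω := congrArg Prod.fst heq
      have h2 : g e = x' := congrArg Prod.snd heq
      subst h1
      exact ⟨e, hmem, h2⟩
    refine ⟨Z, ?_, ?_, ?_⟩
    · apply @measurable_generateFrom Ω (Option E) (univCompletion mΩ) _ Z
      rintro t (⟨B, hB, rfl⟩ | ht)
      · have hpre : Z ⁻¹' (Option.some '' B) = Z' ⁻¹' (Option.some '' (g '' B)) := by
          ext ω
          simp only [Set.mem_preimage, Set.mem_image, hZ]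
          constructor
          · rintro ⟨x, hxB, hx⟩
            cases hz' : Z' ω with
            | none => rw [hz'] at hx; simp at hx
            | some x' =>
              rw [hz'] at hx
              simp only [Option.map_some, Option.some.injEq] at hx
              obtain ⟨e, hmemA, hge⟩ := hrange ω x' hz'
              have he : h x' = e := by rw [← hge, hleft e]
              have hxe : x = e := by rw [hx, he]
              refine ⟨x', ⟨e, ?_, hge⟩, rfl⟩
              rwa [← hxe]
          · rintro ⟨y, ⟨x₀, hx₀B, rfl⟩, hy⟩
            refine ⟨x₀, hx₀B, ?_⟩
            rw [← hy, Option.map_some, hleft x₀]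
        rw [hpre]
        exact hZ'meas (MeasurableSpace.measurableSet_generateFrom
          (Or.inl ⟨g '' B, hg.measurableSet_image' hB, rfl⟩))
      · simp only [Set.mem_singleton_iff] at ht
        subst ht
        have hpre : Z ⁻¹' {none} = Z' ⁻¹' {none} := by
          ext ω
          simp only [Set.mem_preimage, Set.mem_singleton_iff, hZ]
          cases hz' : Z' ω <;> simp
        rw [hpre]
        exact hZ'meas (MeasurableSpace.measurableSet_generateFrom (Or.inr rfl))
    · intro ω x hx
      rw [hZ] at hx
      simp only at hx
      cases hz' : Z' ω with
      | none => rw [hz'] at hx; simp at hx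
      | some x' =>
        rw [hz'] at hx
        simp only [Option.map_some, Option.some.injEq] at hx
        obtain ⟨e, hmemA, hge⟩ := hrange ω x' hz'
        have he : h x' = e := by rw [← hge, hleft e]
        have hxe : x = e := by rw [← hx, he]
        rwa [hxe]
    · have h1 : {ω | Z ω ≠ none} = {ω | Z' ω ≠ none} := by
        ext ω
        simp only [Set.mem_setOf_eq, hZ]
        cases hz' : Z' ω <;> simp
      have h2 : Prod.fst '' A' = Prod.fst '' A := by
        rw [hA'def, Set.image_image]
      rw [h1, hZ'proj, h2]
end

section
/- (Jankov–von Neumann selection theorem.) Let E and F be Borel spaces and A an analytic subset of E × F. Then there exists an analytically measurable function φ : π_E(A) → F such that (x, φ(x)) ∈ A for every x ∈ π_E(A). -/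
open MeasureTheory
open Set

namespace JvN

/-- Cylinder determined by a finite sequence. -/
def Cyl (s : List ℕ) : Set (ℕ → ℕ) := {y | ∀ i, i < s.length → y i = s.getD i 0}

lemma cyl_nil : Cyl [] = univ := by
  ext y; simp [Cyl]

lemma measurableSet_cyl (s : List ℕ) : MeasurableSet (Cyl s) := by
  have : Cyl s = ⋂ i : ℕ, {y : ℕ → ℕ | i < s.length → y i = s.getD i 0} := by
    ext y; simp [Cyl]
  rw [this]
  refine MeasurableSet.iInter fun i => ?_
  by_cases h : i < s.length
  · have : {y : ℕ → ℕ | i < s.length → y i = s.getD i 0}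
        = (fun y : ℕ → ℕ => y i) ⁻¹' {s.getD i 0} := by
      ext y; simp [h]
    rw [this]
    exact measurable_pi_apply i (measurableSet_singleton _)
  · have : {y : ℕ → ℕ | i < s.length → y i = s.getD i 0} = univ := by
      ext y; simp [h]
    rw [this]; exact MeasurableSet.univ

lemma isOpen_cyl (s : List ℕ) : IsOpen (Cyl s) := by
  have : Cyl s = ⋂ i ∈ Finset.range s.length,
      (fun y : ℕ → ℕ => y i) ⁻¹' {s.getD i 0} := by
    ext y; simp [Cyl]
  rw [this]
  exact isOpen_biInter_finset fun i _ =>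
    (continuous_apply i).isOpen_preimage _ (isOpen_discrete _)

variable {E : Type*}

/-- Projections of cylinders. -/
def Dset (f : (ℕ → ℕ) → E) (s : List ℕ) : Set E := f '' Cyl s

lemma exists_extend {f : (ℕ → ℕ) → E} {x : E} {s : List ℕ} (h : x ∈ Dset f s) :
    ∃ k, x ∈ Dset f (s ++ [k]) := by
  obtain ⟨y, hy, rfl⟩ := h
  refine ⟨y s.length, y, fun i hi => ?_, rfl⟩
  simp only [List.length_append, List.length_cons, List.length_nil] at hi
  rcases Nat.lt_or_ge i s.length with h' | h'
  · rw [List.getD_append _ _ _ _ h']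
    exact hy i h'
  · have : i = s.length := by omega
    subst this
    rw [List.getD_append_right _ _ _ _ le_rfl]
    simp

open Classical in
/-- The leftmost-branch selection. -/
noncomputable def sel (f : (ℕ → ℕ) → E) (x : E) : ℕ → List ℕ
  | 0 => []
  | n + 1 =>
    let s := sel f x n
    s ++ [if h : ∃ k, x ∈ Dset f (s ++ [k]) then Nat.find h else 0]

lemma length_sel (f : (ℕ → ℕ) → E) (x : E) (n : ℕ) : (sel f x n).length = n := by
  induction n with
  | zero => rfl
  | succ n ih => simp [sel, ih]

lemma sel_prefix (f : (ℕ → ℕ) → E) (x : E) {m n : ℕ} (h : m ≤ n) :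
    sel f x m <+: sel f x n := by
  induction n with
  | zero => simp_all
  | succ n ih =>
    rcases Nat.eq_or_lt_of_le h with h' | h'
    · subst h'; exact List.prefix_rfl
    · exact (ih (Nat.lt_succ_iff.mp h')).trans ⟨_, rfl⟩

lemma mem_dset_sel {f : (ℕ → ℕ) → E} {x : E} (h : x ∈ Dset f []) (n : ℕ) :
    x ∈ Dset f (sel f x n) := by
  classical
  induction n with
  | zero => exact h
  | succ n ih =>
    have hex : ∃ k, x ∈ Dset f (sel f x n ++ [k]) := exists_extend ih
    simp only [sel, dif_pos hex]
    exact Nat.find_spec hex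

lemma sel_succ_eq {f : (ℕ → ℕ) → E} {x : E} (h : x ∈ Dset f []) (n : ℕ) (k : ℕ) :
    sel f x (n + 1) = sel f x n ++ [k] ↔
      x ∈ Dset f (sel f x n ++ [k]) ∧ ∀ j < k, x ∉ Dset f (sel f x n ++ [j]) := by
  classical
  have hex : ∃ k, x ∈ Dset f (sel f x n ++ [k]) := exists_extend (mem_dset_sel h n)
  simp only [sel, dif_pos hex, List.append_cancel_left_eq, List.cons.injEq, and_true]
  exact Nat.find_eq_iff hex

/-- The selected branch. -/
noncomputable def selLim (f : (ℕ → ℕ) → E) (x : E) : ℕ → ℕ :=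
  fun n => (sel f x (n + 1)).getD n 0

lemma getD_sel_of_le (f : (ℕ → ℕ) → E) (x : E) {i m n : ℕ} (him : i < m) (h : m ≤ n) :
    (sel f x n).getD i 0 = (sel f x m).getD i 0 := by
  obtain ⟨t, ht⟩ := sel_prefix f x h
  rw [← ht, List.getD_append _ _ _ _ (by rw [length_sel]; exact him)]

lemma selLim_mem_cyl (f : (ℕ → ℕ) → E) (x : E) (n : ℕ) :
    selLim f x ∈ Cyl (sel f x n) := by
  intro i hi
  rw [length_sel] at hi
  rw [selLim, getD_sel_of_le f x (Nat.lt_succ_self i) hi]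

end JvN




/-- A subset `B` of a measurable space `E` is analytic if it is the projection onto `E` of
a Borel (measurable) subset of `E × G` for some Borel space `G` (modelled as a standard
Borel space). -/
def IsAnalyticSet {E : Type*} [mE : MeasurableSpace E] (B : Set E) : Prop :=
  ∃ (G : Type) (mG : MeasurableSpace G), @StandardBorelSpace G mG ∧
    ∃ C : Set (E × G), MeasurableSet[mE.prod mG] C ∧ B = Prod.fst '' C

/-- The σ-field `A(E)` generated by all analytic subsets of `E`. -/
def analyticSigma (E : Type*) [MeasurableSpace E] : MeasurableSpace E :=
  MeasurableSpace.generateFrom {s : Set E | IsAnalyticSet s}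

namespace JvN

lemma isAnalyticSet_dset {E : Type*} [MeasurableSpace E] [TopologicalSpace E]
    [BorelSpace E] [PolishSpace E] {f : (ℕ → ℕ) → E} (hf : Continuous f) (s : List ℕ) :
    IsAnalyticSet (Dset f s) := by
  refine ⟨ℕ → ℕ, inferInstance, inferInstance,
    {p : E × (ℕ → ℕ) | p.2 ∈ Cyl s ∧ f p.2 = p.1}, ?_, ?_⟩
  · exact ((measurableSet_cyl s).preimage measurable_snd).inter
      ((isClosed_eq (hf.comp continuous_snd) continuous_fst).measurableSet)
  · ext x
    constructor
    · rintro ⟨y, hy, rfl⟩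
      exact ⟨(f y, y), ⟨hy, rfl⟩, rfl⟩
    · rintro ⟨⟨a, y⟩, ⟨hy, h2⟩, rfl⟩
      exact ⟨y, hy, h2⟩

lemma dset_mem_analyticSigma {E : Type*} [MeasurableSpace E] [TopologicalSpace E]
    [BorelSpace E] [PolishSpace E] {f : (ℕ → ℕ) → E} (hf : Continuous f) (s : List ℕ) :
    MeasurableSet[analyticSigma E] (Dset f s) :=
  MeasurableSpace.measurableSet_generateFrom (isAnalyticSet_dset hf s)

lemma exists_analytic_sel_set {E : Type*} [MeasurableSpace E] [TopologicalSpace E]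
    [BorelSpace E] [PolishSpace E] {f : (ℕ → ℕ) → E} (hf : Continuous f) (P : Set E)
    (hP : ∀ x ∈ P, x ∈ Dset f []) (n : ℕ) (s : List ℕ) :
    ∃ T : Set E, MeasurableSet[analyticSigma E] T ∧ ∀ x ∈ P, (x ∈ T ↔ sel f x n = s) := by
  induction n generalizing s with
  | zero =>
    by_cases h : s = []
    · subst h
      exact ⟨univ, @MeasurableSet.univ E (analyticSigma E), fun x _ => by simp [sel]⟩
    · refine ⟨∅, @MeasurableSet.empty E (analyticSigma E), fun x _ => ?_⟩
      simp only [mem_empty_iff_false, false_iff]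
      intro hc
      exact h (hc.symm.trans rfl) |>.elim
  | succ n ih =>
    rcases List.eq_nil_or_concat s with rfl | ⟨t, k, rfl⟩
    · refine ⟨∅, @MeasurableSet.empty E (analyticSigma E), fun x _ => ?_⟩
      simp only [mem_empty_iff_false, false_iff]
      intro hc
      have := congrArg List.length hc
      simp [length_sel] at this
    · obtain ⟨T', hT', hiff⟩ := ih t
      simp only [List.concat_eq_append]
      refine ⟨T' ∩ Dset f (t ++ [k]) ∩ ⋂ j : Fin k, (Dset f (t ++ [j.1]))ᶜ,
        (hT'.inter (dset_mem_analyticSigma hf _)).inter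
          (MeasurableSet.iInter fun j => (dset_mem_analyticSigma hf _).compl), ?_⟩
      intro x hx
      have hx0 : x ∈ Dset f [] := hP x hx
      constructor
      · rintro ⟨⟨h1, h2⟩, h3⟩
        have hsn : sel f x n = t := (hiff x hx).mp h1
        rw [show t ++ [k] = sel f x n ++ [k] from by rw [hsn]]
        refine (sel_succ_eq hx0 n k).mpr ⟨by rwa [hsn], fun j hj => ?_⟩
        have := mem_iInter.mp h3 ⟨j, hj⟩
        rwa [hsn]
      · intro hsel
        have hsn : sel f x n = t := by
          have := congrArg List.dropLast hsel
          simpa [sel, List.dropLast_concat] using this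
        have hk : sel f x (n + 1) = sel f x n ++ [k] := by rw [hsn]; exact hsel
        obtain ⟨h1, h2⟩ := (sel_succ_eq hx0 n k).mp hk
        refine ⟨⟨(hiff x hx).mpr hsn, by rwa [hsn] at h1⟩, mem_iInter.mpr fun j => ?_⟩
        have := h2 j.1 j.2
        rwa [hsn] at this

end JvN

/-- **Jankov–von Neumann selection theorem.** If `A` is an analytic subset of `E × F`
(`E`, `F` Borel spaces), there is an analytically measurable `φ : π_E(A) → F` (measurable
for the trace on `π_E(A)` of the σ-field generated by the analytic subsets of `E`) whose
graph is contained in `A`. -/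
theorem jankov_von_neumann
    {E F : Type*} [MeasurableSpace E] [StandardBorelSpace E]
    [MeasurableSpace F] [StandardBorelSpace F]
    (A : Set (E × F)) (hA : IsAnalyticSet A) :
    ∃ φ : (Prod.fst '' A) → F,
      @Measurable _ _ ((analyticSigma E).comap Subtype.val) _ φ ∧
      ∀ x : (Prod.fst '' A), ((x : E), φ x) ∈ A := by
  classical
  letI := upgradeStandardBorel E
  letI := upgradeStandardBorel F
  have hAnal : MeasureTheory.AnalyticSet A := by
    obtain ⟨G, mG, hG, C, hC, hACeq⟩ := hA
    letI := mG
    haveI := hG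
    have hC' : MeasurableSet C := hC
    rw [hACeq]
    exact hC'.analyticSet_image measurable_fst
  rw [MeasureTheory.AnalyticSet] at hAnal
  rcases hAnal with hempty | ⟨g, gcont, grange⟩
  · haveI : IsEmpty ↥(Prod.fst '' A) := ⟨fun x => by simpa [hempty] using x.2⟩
    refine ⟨fun x => (IsEmpty.false x).elim, ?_, fun x => (IsEmpty.false x).elim⟩
    intro t _
    rw [Set.eq_empty_of_isEmpty (_ ⁻¹' t)]
    exact @MeasurableSet.empty _ ((analyticSigma E).comap Subtype.val)
  · set f : (ℕ → ℕ) → E := fun y => (g y).1 with hfdef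
    have fcont : Continuous f := continuous_fst.comp gcont
    set P : Set E := Prod.fst '' A with hPdef
    have hP0 : ∀ x ∈ P, x ∈ JvN.Dset f [] := by
      intro x hx
      rw [JvN.Dset, JvN.cyl_nil, Set.image_univ]
      obtain ⟨p, hpA, rfl⟩ := hx
      rw [← grange] at hpA
      obtain ⟨y, rfl⟩ := hpA
      exact ⟨y, rfl⟩
    have hlim : ∀ x ∈ P, f (JvN.selLim f x) = x := by
      intro x hx
      have hmem : ∀ n, x ∈ JvN.Dset f (JvN.sel f x n) := fun n =>
        JvN.mem_dset_sel (hP0 x hx) n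
      choose y hy hfy using hmem
      have htend : Filter.Tendsto y Filter.atTop (nhds (JvN.selLim f x)) := by
        rw [tendsto_pi_nhds]
        intro i
        apply Filter.Tendsto.congr' _ (tendsto_const_nhds (x := JvN.selLim f x i))
        filter_upwards [Filter.eventually_ge_atTop (i + 1)] with n hn
        have h1 : y n i = (JvN.sel f x n).getD i 0 :=
          hy n i (by rw [JvN.length_sel]; omega)
        have h2 : (JvN.sel f x n).getD i 0 = (JvN.sel f x (i + 1)).getD i 0 :=
          JvN.getD_sel_of_le f x (Nat.lt_succ_self i) hn
        rw [h1, h2]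
        rfl
      have ht1 : Filter.Tendsto (fun n => f (y n)) Filter.atTop
          (nhds (f (JvN.selLim f x))) := (fcont.tendsto _).comp htend
      have ht2 : Filter.Tendsto (fun n => f (y n)) Filter.atTop (nhds x) := by
        have : (fun n => f (y n)) = fun _ => x := funext hfy
        rw [this]
        exact tendsto_const_nhds
      exact tendsto_nhds_unique ht1 ht2
    refine ⟨fun x => (g (JvN.selLim f ↑x)).2, ?_, ?_⟩
    · letI mP : MeasurableSpace ↥P := (analyticSigma E).comap Subtype.val
      have hmeas_lim : @Measurable _ _ ((analyticSigma E).comap Subtype.val) _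
          (fun x : P => JvN.selLim f ↑x) := by
        apply measurable_pi_lambda
        intro n
        apply measurable_to_countable'
        intro k
        have hset : (fun x : P => JvN.selLim f ↑x n) ⁻¹' {k}
            = ⋃ s : List ℕ, {x : P | JvN.sel f ↑x (n + 1) = s ∧ s.getD n 0 = k} := by
          ext x
          simp only [Set.mem_preimage, Set.mem_singleton_iff, Set.mem_iUnion,
            Set.mem_setOf_eq, JvN.selLim]
          constructor
          · intro h
            exact ⟨JvN.sel f ↑x (n + 1), rfl, h⟩
          · rintro ⟨s, hs, rfl⟩
            rw [hs]
        rw [hset]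
        apply MeasurableSet.iUnion
        intro s
        by_cases hk : s.getD n 0 = k
        · obtain ⟨T, hT, hTiff⟩ := JvN.exists_analytic_sel_set fcont P hP0 (n + 1) s
          have heq : {x : P | JvN.sel f ↑x (n + 1) = s ∧ s.getD n 0 = k}
              = Subtype.val ⁻¹' T := by
            ext x
            simp only [Set.mem_setOf_eq, Set.mem_preimage, hk, eq_self_iff_true, and_true]
            exact (hTiff ↑x x.2).symm
          rw [heq]
          exact MeasurableSpace.measurableSet_comap.mpr ⟨T, hT, rfl⟩
        · have heq : {x : P | JvN.sel f ↑x (n + 1) = s ∧ s.getD n 0 = k} = ∅ := by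
            ext x
            simp only [Set.mem_setOf_eq, Set.mem_empty_iff_false, iff_false, not_and]
            exact fun _ => hk
          rw [heq]
          exact MeasurableSet.empty
      exact measurable_snd.comp (gcont.measurable.comp hmeas_lim)
    · intro x
      have hx : f (JvN.selLim f ↑x) = ↑x := hlim ↑x x.2
      have hmemA : g (JvN.selLim f ↑x) ∈ A := by
        rw [← grange]
        exact ⟨_, rfl⟩
      have heq : ((x : E), (g (JvN.selLim f ↑x)).2) = g (JvN.selLim f ↑x) :=
        Prod.ext hx.symm rfl
      rw [heq]
      exact hmemA
end

section
/- Let E and F be Borel spaces, A an analytic subset of E × F, and f : A → ℝ an upper semianalytic function. Define g(x) := sup{ f(x, y) : (x, y) ∈ A }. Then: (i) g : π_E(A) → ℝ ∪ {∞} is upper semianalytic; (ii) for every ε > 0 there exists an analytically measurable function φ_ε : π_E(A) → F such that (x, φ_ε(x)) ∈ A and f(x, φ_ε(x)) ≥ g^ε(x) := (g(x) − ε) 1_{g(x)<∞} + (1/ε) 1_{g(x)=∞} for every x ∈ π_E(A). -/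
open MeasureTheory

open Set

lemma isAnalyticSet_of_analyticSet {α : Type*} [tα : TopologicalSpace α] [PolishSpace α]
    [mα : MeasurableSpace α] [BorelSpace α] {s : Set α} (hs : MeasureTheory.AnalyticSet s) :
    IsAnalyticSet s := by
  rw [MeasureTheory.AnalyticSet] at hs
  rcases hs with h | ⟨h, hcont, hrange⟩
  · exact ⟨ℕ → ℕ, inferInstance, inferInstance, ∅, MeasurableSet.empty, by simp [h]⟩
  · refine ⟨ℕ → ℕ, inferInstance, inferInstance, {p | p.1 = h p.2}, ?_, ?_⟩
    · have hcl : IsClosed {p : α × (ℕ → ℕ) | p.1 = h p.2} :=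
        isClosed_eq continuous_fst (hcont.comp continuous_snd)
      exact hcl.measurableSet
    · ext x
      simp only [mem_image, mem_setOf_eq, ← hrange, mem_range]
      constructor
      · rintro ⟨z, rfl⟩; exact ⟨(h z, z), rfl, rfl⟩
      · rintro ⟨⟨a, z⟩, hz, rfl⟩; exact ⟨z, hz.symm⟩

lemma analyticSet_of_isAnalyticSet {α : Type*} [tα : TopologicalSpace α] [PolishSpace α]
    [mα : MeasurableSpace α] [BorelSpace α] {s : Set α} (hs : IsAnalyticSet s) :
    MeasureTheory.AnalyticSet s := by
  obtain ⟨G, mG, hG, C, hC, rfl⟩ := hs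
  exact hC.analyticSet_image measurable_fst

lemma IsAnalyticSet.image_fst {E F : Type*} [MeasurableSpace E] [StandardBorelSpace E]
    [MeasurableSpace F] [StandardBorelSpace F] {B : Set (E × F)} (hB : IsAnalyticSet B) :
    IsAnalyticSet (Prod.fst '' B) := by
  letI := upgradeStandardBorel E
  letI := upgradeStandardBorel F
  exact isAnalyticSet_of_analyticSet
    ((analyticSet_of_isAnalyticSet hB).image_of_continuous continuous_fst)

namespace JVN
open Classical in
noncomputable def extAux : Unit := ()
variable {α : Type*}

/-- there exists a branch `z` with `h z = x` whose initial segment is `s`. -/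
def P (h : (ℕ → ℕ) → α) (x : α) (s : List ℕ) : Prop :=
  ∃ z : ℕ → ℕ, h z = x ∧ ∀ i, (hi : i < s.length) → z i = s[i]

lemma P.of_prefix {h : (ℕ → ℕ) → α} {x : α} {s t : List ℕ} (hst : s <+: t)
    (ht : P h x t) : P h x s := by
  obtain ⟨z, hz, hext⟩ := ht
  refine ⟨z, hz, fun i hi => ?_⟩
  obtain ⟨u, rfl⟩ := hst
  rw [hext i (by simp; omega), List.getElem_append_left]

lemma P.exists_ext {h : (ℕ → ℕ) → α} {x : α} {s : List ℕ} (hs : P h x s) :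
    ∃ n, P h x (s ++ [n]) := by
  obtain ⟨z, hz, hext⟩ := hs
  refine ⟨z s.length, z, hz, fun i hi => ?_⟩
  simp only [List.length_append, List.length_singleton] at hi
  rcases Nat.lt_or_ge i s.length with h' | h'
  · rw [hext i h', List.getElem_append_left]
  · have : i = s.length := by omega
    subst this
    simp

open Classical in
noncomputable def ext (h : (ℕ → ℕ) → α) (x : α) (s : List ℕ) : ℕ :=
  if hn : ∃ n, P h x (s ++ [n]) then Nat.find hn else 0

noncomputable def pref (h : (ℕ → ℕ) → α) (x : α) : ℕ → List ℕ
  | 0 => []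
  | k+1 => pref h x k ++ [ext h x (pref h x k)]

noncomputable def sel (h : (ℕ → ℕ) → α) (x : α) : ℕ → ℕ :=
  fun k => ext h x (pref h x k)

@[simp] lemma pref_length (h : (ℕ → ℕ) → α) (x : α) (k : ℕ) : (pref h x k).length = k := by
  induction k with
  | zero => rfl
  | succ k ih => simp [pref, ih]

lemma pref_succ (h : (ℕ → ℕ) → α) (x : α) (k : ℕ) :
    pref h x (k+1) = pref h x k ++ [sel h x k] := rfl

lemma P_pref {h : (ℕ → ℕ) → α} {x : α} (hx : ∃ z, h z = x) (k : ℕ) :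
    P h x (pref h x k) := by
  classical
  induction k with
  | zero =>
    obtain ⟨z, hz⟩ := hx
    exact ⟨z, hz, fun i hi => by simp [pref] at hi⟩
  | succ k ih =>
    have hex : ∃ n, P h x (pref h x k ++ [n]) := ih.exists_ext
    have heq : ext h x (pref h x k) = Nat.find hex := by
      rw [ext, dif_pos hex]
    rw [pref, heq]
    exact Nat.find_spec hex

lemma pref_getElem {h : (ℕ → ℕ) → α} {x : α} {k i : ℕ} (hi : i < k) :
    (pref h x k)[i]'(by simp [hi]) = sel h x i := by
  induction k with
  | zero => omega
  | succ k ih =>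
    simp only [pref_succ]
    rcases Nat.lt_or_ge i k with h' | h'
    · rw [List.getElem_append_left (by simp [h'])]
      exact ih h'
    · have : i = k := by omega
      subst this
      simp

lemma pref_take {h : (ℕ → ℕ) → α} {x : α} {k i : ℕ} (hi : i ≤ k) :
    (pref h x k).take i = pref h x i := by
  induction k with
  | zero => simp [Nat.le_zero.mp hi, pref]
  | succ k ih =>
    rcases Nat.lt_or_ge k i with h' | h'
    · have : i = k + 1 := by omega
      subst this
      simp
    · rw [pref_succ, List.take_append_of_le_length (by simp [h'])]
      exact ih h'

end JVN

namespace JVN2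
open JVN

variable {α : Type*}

open Classical in
lemma ext_spec {h : (ℕ → ℕ) → α} {x : α} {s : List ℕ} (hs : P h x s) :
    P h x (s ++ [ext h x s]) ∧ ∀ m < ext h x s, ¬ P h x (s ++ [m]) := by
  have hex := hs.exists_ext
  have heq : ext h x s = Nat.find hex := dif_pos hex
  rw [heq]
  exact ⟨Nat.find_spec hex, fun m hm => Nat.find_min hex hm⟩

open Classical in
lemma ext_eq_of {h : (ℕ → ℕ) → α} {x : α} {s : List ℕ} {n : ℕ}
    (hn : P h x (s ++ [n])) (hmin : ∀ m < n, ¬ P h x (s ++ [m])) : ext h x s = n := by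
  have hex : ∃ n, P h x (s ++ [n]) := ⟨n, hn⟩
  have heq : ext h x s = Nat.find hex := dif_pos hex
  rw [heq]
  exact le_antisymm (Nat.find_le hn) ((Nat.le_find_iff hex n).2 hmin)

lemma pref_eq_iff {h : (ℕ → ℕ) → α} {x : α} (hx : ∃ z, h z = x) {k : ℕ} {s : List ℕ}
    (hlen : s.length = k) :
    pref h x k = s ↔ P h x s ∧
      ∀ i, (hi : i < k) → ∀ m < s[i]'(by omega), ¬ P h x (s.take i ++ [m]) := by
  constructor
  · rintro rfl
    refine ⟨P_pref hx k, fun i hi m hm hPm => ?_⟩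
    rw [pref_take (le_of_lt hi)] at hPm
    have hgi : (pref h x k)[i]'(by simpa using hi) = sel h x i := pref_getElem hi
    rw [hgi] at hm
    exact (ext_spec (P_pref hx i)).2 m hm hPm
  · rintro ⟨hP, hmin⟩
    have main : ∀ j ≤ k, pref h x j = s.take j := by
      intro j hj
      induction j with
      | zero => simp [pref]
      | succ j ih =>
        have hj' : j ≤ k := by omega
        have hjk : j < k := by omega
        have hjs : j < s.length := by omega
        rw [pref_succ, ih hj']
        have htake : s.take j ++ [s[j]'hjs] = s.take (j+1) := by
          rw [List.take_succ, List.getElem?_eq_getElem hjs]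
          rfl
        have hPj : P h x (s.take (j+1)) := hP.of_prefix (List.take_prefix _ _)
        have hext : ext h x (s.take j) = s[j]'hjs := by
          apply ext_eq_of
          · rw [htake]; exact hPj
          · exact hmin j hjk
        have hsel : sel h x j = JVN.ext h x (List.take j s) := by
          rw [sel, ih hj']
        rw [hsel, hext, htake]
    rw [main k le_rfl, ← hlen, List.take_length]

lemma sel_getElem {h : (ℕ → ℕ) → α} {x : α} {k i : ℕ} (hi : i < k) :
    sel h x i = (pref h x k)[i]'(by simp [hi]) := (pref_getElem hi).symm

/-- the leftmost branch really is a branch over `x` -/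
lemma h_sel_eq {h : (ℕ → ℕ) → α} [TopologicalSpace α] [T2Space α] (hcont : Continuous h)
    {x : α} (hx : ∃ z, h z = x) : h (sel h x) = x := by
  have key : ∀ k, ∃ z, h z = x ∧ ∀ i < k, z i = sel h x i := by
    intro k
    obtain ⟨z, hz, hext⟩ := P_pref hx k
    exact ⟨z, hz, fun i hi => by
      rw [hext i (by simpa using hi)]; exact pref_getElem hi⟩
  choose z hz hzext using key
  have hten : Filter.Tendsto z Filter.atTop (nhds (sel h x)) := by
    rw [tendsto_pi_nhds]
    intro i
    apply Filter.Tendsto.congr' _ tendsto_const_nhds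
    filter_upwards [Filter.eventually_ge_atTop (i+1)] with k hk
    exact (hzext k i (by omega)).symm
  have h2 : Filter.Tendsto (fun k => h (z k)) Filter.atTop (nhds x) := by
    simp only [hz]
    exact tendsto_const_nhds
  exact tendsto_nhds_unique (((hcont.tendsto _).comp hten)) h2

def cylSet (h : (ℕ → ℕ) → α) (s : List ℕ) : Set α := {x | P h x s}

lemma cylSet_nil (h : (ℕ → ℕ) → α) : cylSet h [] = Set.range h := by
  ext x
  constructor
  · rintro ⟨z, hz, -⟩; exact ⟨z, hz⟩
  · rintro ⟨z, hz⟩; exact ⟨z, hz, fun i hi => by simp at hi⟩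

lemma analyticSet_cylSet {α : Type*} [TopologicalSpace α] {h : (ℕ → ℕ) → α}
    (hcont : Continuous h) (s : List ℕ) : MeasureTheory.AnalyticSet (cylSet h s) := by
  have himg : cylSet h s = h '' {z : ℕ → ℕ | ∀ i, (hi : i < s.length) → z i = s[i]} := by
    ext x
    constructor
    · rintro ⟨z, hz, he⟩; exact ⟨z, he, hz⟩
    · rintro ⟨z, he, hz⟩; exact ⟨z, hz, he⟩
  rw [himg]
  have hcl : IsClosed {z : ℕ → ℕ | ∀ i, (hi : i < s.length) → z i = s[i]} := by
    have : {z : ℕ → ℕ | ∀ i, (hi : i < s.length) → z i = s[i]} =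
        ⋂ (i : Fin s.length), {z : ℕ → ℕ | z i = s[i]} := by
      ext z
      simp only [Set.mem_iInter, Set.mem_setOf_eq]
      exact ⟨fun H i => H i i.2, fun H i hi => H ⟨i, hi⟩⟩
    rw [this]
    exact isClosed_iInter fun i => isClosed_eq (continuous_apply _) continuous_const
  exact hcl.analyticSet.image_of_continuous hcont

lemma setOf_pref_eq {h : (ℕ → ℕ) → α} {s : List ℕ} {k : ℕ} (hlen : s.length = k) :
    {x | (∃ z, h z = x) ∧ pref h x k = s} =
      cylSet h s \ ⋃ (i : Fin k) (m : Fin (s.getD i 0)), cylSet h (s.take i ++ [(m : ℕ)]) := by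
  ext x
  simp only [Set.mem_setOf_eq, Set.mem_diff, Set.mem_iUnion]
  constructor
  · rintro ⟨hx, hpref⟩
    have H := (pref_eq_iff hx hlen).1 hpref
    refine ⟨H.1, ?_⟩
    rintro ⟨i, m, hm⟩
    have hi : (i : ℕ) < k := i.2
    have hm2 : (m : ℕ) < s[(i : ℕ)]'(by omega) :=
      lt_of_lt_of_eq m.2 (List.getD_eq_getElem s 0 (by omega))
    exact H.2 i hi m hm2 hm
  · rintro ⟨hcyl, hnot⟩
    have hx : ∃ z, h z = x := by
      obtain ⟨z, hz, -⟩ := hcyl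
      exact ⟨z, hz⟩
    refine ⟨hx, (pref_eq_iff hx hlen).2 ⟨hcyl, ?_⟩⟩
    intro i hi m hm hP
    apply hnot
    refine ⟨⟨i, hi⟩, ⟨m, ?_⟩, hP⟩
    rwa [List.getD_eq_getElem s 0 (by omega)]

lemma setOf_sel_eq {h : (ℕ → ℕ) → α} {i n : ℕ} :
    {x | (∃ z, h z = x) ∧ sel h x i = n} =
      ⋃ (s : List ℕ) (_ : s.length = i + 1 ∧ s.getD i 0 = n),
        {x | (∃ z, h z = x) ∧ pref h x (i+1) = s} := by
  ext x
  simp only [Set.mem_setOf_eq, Set.mem_iUnion]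
  constructor
  · rintro ⟨hx, hsel⟩
    refine ⟨pref h x (i+1), ⟨by simp, ?_⟩, hx, rfl⟩
    rw [List.getD_eq_getElem _ 0 (by simp), ← sel_getElem (Nat.lt_succ_self i)]
    exact hsel
  · rintro ⟨s, ⟨hslen, hsn⟩, hx, hpref⟩
    refine ⟨hx, ?_⟩
    rw [sel_getElem (Nat.lt_succ_self i)]
    have h2 : (pref h x (i+1))[i]'(by simp) = s[i]'(by omega) := by simp only [hpref]
    rw [h2, ← hsn]
    exact (List.getD_eq_getElem _ 0 (by omega)).symm

end JVN2



lemma IsAnalyticSet.mem_analyticSigma {E : Type*} [MeasurableSpace E] {s : Set E}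
    (hs : IsAnalyticSet s) : MeasurableSet[analyticSigma E] s :=
  MeasurableSpace.measurableSet_generateFrom hs

lemma jvn_selection {E F : Type*} [mE : MeasurableSpace E] [StandardBorelSpace E]
    [mF : MeasurableSpace F] [StandardBorelSpace F] [Nonempty F]
    {B : Set (E × F)} (hB : IsAnalyticSet B) :
    ∃ ψ : E → F, (∀ x ∈ Prod.fst '' B, (x, ψ x) ∈ B) ∧
      ∀ s : Set F, MeasurableSet s →
        MeasurableSet[analyticSigma E] {x | x ∈ Prod.fst '' B ∧ ψ x ∈ s} := by
  letI tE := upgradeStandardBorel E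
  letI tF := upgradeStandardBorel F
  have hB' : MeasureTheory.AnalyticSet B := analyticSet_of_isAnalyticSet hB
  rw [MeasureTheory.AnalyticSet] at hB'
  rcases hB' with hemp | ⟨h, hcont, hrange⟩
  · refine ⟨fun _ => Classical.arbitrary F, by simp [hemp], fun s hs => ?_⟩
    have : {x | x ∈ Prod.fst '' B ∧ (fun _ => Classical.arbitrary F) x ∈ s} = ∅ := by
      simp [hemp]
    rw [this]
    exact @MeasurableSet.empty _ (analyticSigma E)
  · set h1 : (ℕ → ℕ) → E := fun z => (h z).1 with hh1
    have hcont1 : Continuous h1 := continuous_fst.comp hcont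
    have hD : Prod.fst '' B = Set.range h1 := by
      rw [← hrange, ← Set.range_comp]; rfl
    set D : Set E := Set.range h1 with hDdef
    have hsel_eq : ∀ x ∈ D, h1 (JVN.sel h1 x) = x := fun x hx =>
      JVN2.h_sel_eq hcont1 hx
    refine ⟨fun x => (h (JVN.sel h1 x)).2, ?_, ?_⟩
    · intro x hx
      rw [hD] at hx
      have hfst := hsel_eq x hx
      have hmem : h (JVN.sel h1 x) ∈ B := by rw [← hrange]; exact Set.mem_range_self _
      have hpair : (x, (h (JVN.sel h1 x)).2) = h (JVN.sel h1 x) :=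
        Prod.ext hfst.symm rfl
      rw [hpair]
      exact hmem
    · intro s hs
      -- analyticity of the basic pieces
      have hcylA : ∀ t : List ℕ, MeasurableSet[analyticSigma E] (JVN2.cylSet h1 t) := fun t =>
        (isAnalyticSet_of_analyticSet (JVN2.analyticSet_cylSet hcont1 t)).mem_analyticSigma
      have hDA : MeasurableSet[analyticSigma E] D := by
        rw [hDdef, ← JVN2.cylSet_nil h1]
        exact hcylA []
      -- prefix sets
      have hprefA : ∀ (k : ℕ) (t : List ℕ),
          MeasurableSet[analyticSigma E] {x | (∃ z, h1 z = x) ∧ JVN.pref h1 x k = t} := by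
        intro k t
        by_cases hlen : t.length = k
        · rw [JVN2.setOf_pref_eq hlen]
          exact (hcylA t).diff (MeasurableSet.iUnion fun i => MeasurableSet.iUnion fun m =>
            hcylA _)
        · have : {x | (∃ z, h1 z = x) ∧ JVN.pref h1 x k = t} = ∅ := by
            ext x
            simp only [Set.mem_setOf_eq, Set.mem_empty_iff_false, iff_false, not_and]
            intro hx hpref
            exact hlen (by rw [← hpref]; simp)
          rw [this]
          exact @MeasurableSet.empty _ (analyticSigma E)
      -- coordinate sets
      have hselA : ∀ (i n : ℕ),
          MeasurableSet[analyticSigma E] {x | (∃ z, h1 z = x) ∧ JVN.sel h1 x i = n} := by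
        intro i n
        rw [JVN2.setOf_sel_eq]
        exact MeasurableSet.iUnion fun t => MeasurableSet.iUnion fun _ => hprefA _ _
      -- trace sigma algebra
      let mD : MeasurableSpace E :=
        { MeasurableSet' := fun t => MeasurableSet[analyticSigma E] (t ∩ D)
          measurableSet_empty := by
            show MeasurableSet[analyticSigma E] (∅ ∩ D)
            rw [Set.empty_inter]
            exact @MeasurableSet.empty _ (analyticSigma E)
          measurableSet_compl := fun t ht => by
            show MeasurableSet[analyticSigma E] (tᶜ ∩ D)
            have heq : tᶜ ∩ D = D \ (t ∩ D) := by ext y; simp; tauto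
            rw [heq]
            exact hDA.diff ht
          measurableSet_iUnion := fun f hf => by
            show MeasurableSet[analyticSigma E] ((⋃ i, f i) ∩ D)
            rw [Set.iUnion_inter]
            exact MeasurableSet.iUnion hf }
      have hselm : @Measurable E (ℕ → ℕ) mD _ (JVN.sel h1) := by
        rw [@measurable_pi_iff]
        intro i
        apply measurable_to_countable'
        intro n
        show MeasurableSet[@analyticSigma E mE] ((fun x => JVN.sel h1 x i) ⁻¹' {n} ∩ D)
        have : (fun x => JVN.sel h1 x i) ⁻¹' {n} ∩ D =
            {x | (∃ z, h1 z = x) ∧ JVN.sel h1 x i = n} := by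
          ext y
          simp only [Set.mem_inter_iff, Set.mem_preimage, Set.mem_singleton_iff,
            Set.mem_setOf_eq]
          tauto
        rw [this]
        exact hselA i n
      have hT : MeasurableSet ((fun z => (h z).2) ⁻¹' s) :=
        (continuous_snd.comp hcont).measurable hs
      have hkey := hselm hT
      have hkey' : MeasurableSet[@analyticSigma E mE]
          (JVN.sel h1 ⁻¹' ((fun z => (h z).2) ⁻¹' s) ∩ D) := hkey
      have hfinal : {x | x ∈ Prod.fst '' B ∧ (h (JVN.sel h1 x)).2 ∈ s} =
          JVN.sel h1 ⁻¹' ((fun z => (h z).2) ⁻¹' s) ∩ D := by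
        rw [hD]
        ext y
        simp only [Set.mem_setOf_eq, Set.mem_inter_iff, Set.mem_preimage]
        tauto
      rw [hfinal]
      exact hkey'

/-- **Upper semianalytic supremum and ε-optimal analytic selection.** Let `A ⊆ E × F` be
analytic and `f : A → ℝ` upper semianalytic (its strict superlevel sets within `A` are
analytic).  Set `g(x) := sup { f(x,y) : (x,y) ∈ A }`.  Then:
(i) `g` is upper semianalytic on `π_E(A)`;
(ii) for every `ε > 0` there is an analytically measurable `φ_ε : π_E(A) → F` with
`(x, φ_ε(x)) ∈ A` and `f(x, φ_ε(x)) ≥ g^ε(x) = (g(x) − ε) 1_{g<∞} + (1/ε) 1_{g=∞}`. -/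
theorem usa_sup_and_selection
    {E F : Type*} [MeasurableSpace E] [StandardBorelSpace E]
    [MeasurableSpace F] [StandardBorelSpace F]
    (A : Set (E × F)) (hA : IsAnalyticSet A)
    (f : E × F → ℝ)
    (hf : ∀ c : ℝ, IsAnalyticSet {p : E × F | p ∈ A ∧ c < f p})
    (g : E → EReal)
    (hg : ∀ x, g x = ⨆ (y : F) (_ : (x, y) ∈ A), (f (x, y) : EReal)) :
    (∀ c : ℝ, IsAnalyticSet {x : E | x ∈ Prod.fst '' A ∧ (c : EReal) < g x}) ∧
    (∀ ε : ℝ, 0 < ε → ∃ φ : (Prod.fst '' A) → F,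
      @Measurable _ _ ((analyticSigma E).comap Subtype.val) _ φ ∧
      ∀ x : (Prod.fst '' A), ((x : E), φ x) ∈ A ∧
        (if g (x : E) = ⊤ then ((1 / ε : ℝ) : EReal) else g (x : E) - (ε : EReal))
          ≤ (f ((x : E), φ x) : EReal)) := by
  classical
  have key : ∀ (c : ℝ) (x : E), (c : EReal) < g x ↔ ∃ y : F, (x, y) ∈ A ∧ c < f (x, y) := by
    intro c x
    rw [hg, lt_iSup_iff]
    constructor
    · rintro ⟨y, hy⟩
      rw [lt_iSup_iff] at hy
      obtain ⟨hyA, hcf⟩ := hy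
      exact ⟨y, hyA, by exact_mod_cast hcf⟩
    · rintro ⟨y, hyA, hcf⟩
      refine ⟨y, ?_⟩
      rw [lt_iSup_iff]
      exact ⟨hyA, by exact_mod_cast hcf⟩
  set D : Set E := Prod.fst '' A with hDdef
  have hlevel : ∀ c : ℝ, {x : E | x ∈ D ∧ (c : EReal) < g x} =
      Prod.fst '' {p : E × F | p ∈ A ∧ c < f p} := by
    intro c
    ext x
    simp only [Set.mem_setOf_eq, Set.mem_image, Prod.exists]
    constructor
    · rintro ⟨-, hc⟩
      obtain ⟨y, hyA, hcf⟩ := (key c x).1 hc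
      exact ⟨x, y, ⟨hyA, hcf⟩, rfl⟩
    · rintro ⟨a, b, ⟨hab, hcf⟩, rfl⟩
      exact ⟨⟨(a, b), hab, rfl⟩, (key c a).2 ⟨b, hab, hcf⟩⟩
  have part1 : ∀ c : ℝ, IsAnalyticSet {x : E | x ∈ D ∧ (c : EReal) < g x} := by
    intro c
    rw [hlevel c]
    exact (hf c).image_fst
  refine ⟨part1, ?_⟩
  intro ε hε
  rcases isEmpty_or_nonempty F with hF | hF
  · haveI : IsEmpty (E × F) := Prod.isEmpty_right
    have hAe : A = ∅ := Set.eq_empty_of_isEmpty A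
    have hDe : D = ∅ := by rw [hDdef, hAe, Set.image_empty]
    haveI : IsEmpty (↥D) := Set.isEmpty_coe_sort.2 hDe
    refine ⟨fun x => isEmptyElim x, fun s hs => ?_, fun x => isEmptyElim x⟩
    have hpre : (fun x : ↥D => (isEmptyElim x : F)) ⁻¹' s = ∅ := Set.eq_empty_of_isEmpty _
    rw [hpre]
    exact @MeasurableSet.empty _ ((analyticSigma E).comap Subtype.val)
  · -- nonempty F
    have hDm : MeasurableSet[analyticSigma E] D := hA.image_fst.mem_analyticSigma
    have hL : ∀ c : ℝ, MeasurableSet[analyticSigma E] {x : E | x ∈ D ∧ (c : EReal) < g x} := fun c =>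
      (part1 c).mem_analyticSigma
    -- the rational enumeration
    set e : ℕ → ℚ := fun n => (Denumerable.eqv ℚ).symm n with he
    -- the constraint sets
    set Btop : Set (E × F) := {p | p ∈ A ∧ 1 / ε < f p} with hBtop
    set Bn : ℕ → Set (E × F) := fun n => {p | p ∈ A ∧ (e n : ℝ) < f p} with hBn
    obtain ⟨ψt, hψt_mem, hψt_meas⟩ := jvn_selection (hf (1 / ε))
    have hsel : ∀ n : ℕ, ∃ ψ : E → F, (∀ x ∈ Prod.fst '' (Bn n), (x, ψ x) ∈ Bn n) ∧
        ∀ s : Set F, MeasurableSet s →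
          MeasurableSet[analyticSigma E] {x | x ∈ Prod.fst '' (Bn n) ∧ ψ x ∈ s} := fun n =>
      jvn_selection (hf (e n))
    choose ψ hψ_mem hψ_meas using hsel
    -- membership in the projected constraint sets
    have hmemtop : ∀ x, x ∈ D → g x = ⊤ → x ∈ Prod.fst '' Btop := by
      intro x hx htop
      have : ((1 / ε : ℝ) : EReal) < g x := by rw [htop]; exact EReal.coe_lt_top _
      obtain ⟨y, hyA, hyf⟩ := (key _ x).1 this
      exact ⟨(x, y), ⟨hyA, hyf⟩, rfl⟩
    have hmemn : ∀ x n, ((e n : ℝ) : EReal) < g x → x ∈ Prod.fst '' (Bn n) := by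
      intro x n hlt
      obtain ⟨y, hyA, hyf⟩ := (key _ x).1 hlt
      exact ⟨(x, y), ⟨hyA, hyf⟩, rfl⟩
    -- the index function
    set ok : E → ℕ → Prop := fun x n =>
      ((e n : ℝ) : EReal) < g x ∧ g x ≤ (((e n : ℝ) + ε : ℝ) : EReal) with hok
    have hex : ∀ x ∈ D, g x ≠ ⊤ → ∃ n, ok x n := by
      intro x hx htop
      have hbot : g x ≠ ⊥ := by
        obtain ⟨⟨a, b⟩, hab, rfl⟩ := hx
        have : (f (a, b) : EReal) ≤ g (a, b).1 := by
          rw [hg]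
          exact le_iSup₂ (f := fun y (_ : ((a, b).1, y) ∈ A) => (f ((a, b).1, y) : EReal)) b hab
        exact fun hb => by simp [hb] at this
      set r : ℝ := (g x).toReal with hr
      have hgr : ((r : ℝ) : EReal) = g x := EReal.coe_toReal htop hbot
      obtain ⟨q, hq1, hq2⟩ := exists_rat_btwn (sub_lt_self r hε)
      refine ⟨(Denumerable.eqv ℚ) q, ?_, ?_⟩
      · rw [he]
        simp only [Equiv.symm_apply_apply]
        rw [← hgr]
        exact_mod_cast hq2
      · rw [he]
        simp only [Equiv.symm_apply_apply]
        rw [← hgr]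
        have : r ≤ (q : ℝ) + ε := by linarith
        exact_mod_cast this
    set idx : E → ℕ := fun x => if hx : ∃ n, ok x n then Nat.find hx else 0 with hidx
    -- the selection
    set Ψ : E → F := fun x => if g x = ⊤ then ψt x else ψ (idx x) x with hΨ
    refine ⟨fun x => Ψ x, ?_, ?_⟩
    · -- measurability
      intro s hs
      set Gtop : Set E := ⋂ n : ℕ, {x : E | x ∈ D ∧ ((n : ℝ) : EReal) < g x} with hGtop
      have hGtopm : MeasurableSet[analyticSigma E] Gtop := MeasurableSet.iInter fun n => hL n
      have hGtop_eq : Gtop = {x | x ∈ D ∧ g x = ⊤} := by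
        ext x
        simp only [hGtop, Set.mem_iInter, Set.mem_setOf_eq]
        constructor
        · intro H
          refine ⟨(H 0).1, ?_⟩
          by_contra htop
          have hbot := (H 0).2
          set r : ℝ := (g x).toReal with hr
          have hgr : ((r : ℝ) : EReal) = g x :=
            EReal.coe_toReal htop (fun hb => by rw [hb] at hbot; exact not_lt_bot hbot)
          obtain ⟨n, hn⟩ := exists_nat_gt r
          have := (H n).2
          rw [← hgr] at this
          exact absurd (EReal.coe_lt_coe_iff.1 this) (by linarith)
        · rintro ⟨hx, htop⟩
          exact fun n => ⟨hx, by rw [htop]; exact EReal.coe_lt_top _⟩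
      have hOk : ∀ n : ℕ, MeasurableSet[analyticSigma E] {x | x ∈ D ∧ ok x n} := by
        intro n
        have heq : {x | x ∈ D ∧ ok x n} =
            {x : E | x ∈ D ∧ ((e n : ℝ) : EReal) < g x} \
              {x : E | x ∈ D ∧ (((e n : ℝ) + ε : ℝ) : EReal) < g x} := by
          ext x
          simp only [Set.mem_setOf_eq, Set.mem_diff, hok, not_and, not_lt]
          constructor
          · rintro ⟨hx, h1, h2⟩
            exact ⟨⟨hx, h1⟩, fun _ => h2⟩
          · rintro ⟨⟨hx, h1⟩, h2⟩
            exact ⟨hx, h1, h2 hx⟩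
        rw [heq]
        exact (hL _).diff (hL _)
      have hIdx : ∀ n : ℕ, MeasurableSet[analyticSigma E] {x | x ∈ D ∧ g x ≠ ⊤ ∧ idx x = n} := by
        intro n
        have heq : {x | x ∈ D ∧ g x ≠ ⊤ ∧ idx x = n} =
            ({x | x ∈ D ∧ ok x n} \ Gtop) \ ⋃ (m : ℕ) (_ : m < n), {x | x ∈ D ∧ ok x m} := by
          ext x
          simp only [Set.mem_setOf_eq, Set.mem_diff, Set.mem_iUnion, hGtop_eq, not_and,
            not_exists]
          constructor
          · rintro ⟨hx, htop, hidxn⟩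
            have hexx : ∃ m, ok x m := hex x hx htop
            rw [hidx] at hidxn
            simp only [dif_pos hexx] at hidxn
            subst hidxn
            exact ⟨⟨⟨hx, Nat.find_spec hexx⟩, fun _ h => htop h⟩,
              fun m hm => fun _ => Nat.find_min hexx hm⟩
          · rintro ⟨⟨⟨hx, hokn⟩, hntop⟩, hmin⟩
            have htop : g x ≠ ⊤ := fun h => hntop hx h
            have hexx : ∃ m, ok x m := ⟨n, hokn⟩
            refine ⟨hx, htop, ?_⟩
            rw [hidx]
            simp only [dif_pos hexx]
            rw [Nat.find_eq_iff]
            exact ⟨hokn, fun m hm hokm => hmin m hm hx hokm⟩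
        rw [heq]
        exact ((hOk n).diff hGtopm).diff
          (MeasurableSet.iUnion fun m => MeasurableSet.iUnion fun _ => hOk m)
      -- assemble
      set W : Set E := ({x | x ∈ D ∧ g x = ⊤} ∩ {x | x ∈ Prod.fst '' Btop ∧ ψt x ∈ s}) ∪
          ⋃ n : ℕ, ({x | x ∈ D ∧ g x ≠ ⊤ ∧ idx x = n} ∩
            {x | x ∈ Prod.fst '' (Bn n) ∧ ψ n x ∈ s}) with hW
      have hWm : MeasurableSet[analyticSigma E] W := by
        refine MeasurableSet.union ?_ (MeasurableSet.iUnion fun n => ?_)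
        · exact (hGtop_eq ▸ hGtopm).inter (hψt_meas s hs)
        · exact (hIdx n).inter (hψ_meas n s hs)
      refine ⟨W, hWm, ?_⟩
      ext x
      obtain ⟨x, hx⟩ := x
      simp only [Set.mem_preimage, hW, Set.mem_union, Set.mem_inter_iff, Set.mem_setOf_eq,
        Set.mem_iUnion]
      constructor
      · rintro (⟨⟨-, htop⟩, -, hψs⟩ | ⟨n, ⟨-, htop, hidxn⟩, -, hψs⟩)
        · show Ψ x ∈ s
          rw [hΨ]
          simp only [if_pos htop]
          exact hψs
        · show Ψ x ∈ s
          rw [hΨ]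
          simp only [if_neg htop]
          rw [hidxn]
          exact hψs
      · intro hψs
        have hψs : Ψ x ∈ s := hψs
        by_cases htop : g x = ⊤
        · left
          refine ⟨⟨hx, htop⟩, hmemtop x hx htop, ?_⟩
          rw [hΨ] at hψs
          simpa only [if_pos htop] using hψs
        · right
          have hexx : ∃ m, ok x m := hex x hx htop
          refine ⟨idx x, ⟨hx, htop, rfl⟩, ?_, ?_⟩
          · apply hmemn
            rw [hidx]
            simp only [dif_pos hexx]
            exact (Nat.find_spec hexx).1
          · rw [hΨ] at hψs
            simpa only [if_neg htop] using hψs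
    · -- the pointwise properties
      rintro ⟨x, hx⟩
      simp only
      by_cases htop : g x = ⊤
      · have hxB := hmemtop x hx htop
        have hmem := hψt_mem x hxB
        have hΨx : Ψ x = ψt x := by rw [hΨ]; simp [htop]
        rw [hΨx]
        refine ⟨hmem.1, ?_⟩
        rw [if_pos htop]
        exact le_of_lt (by exact_mod_cast hmem.2)
      · have hexx : ∃ m, ok x m := hex x hx htop
        have hfind : idx x = Nat.find hexx := by rw [hidx]; simp only [dif_pos hexx]
        have hokn : ok x (idx x) := by rw [hfind]; exact Nat.find_spec hexx
        have hxB := hmemn x (idx x) hokn.1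
        have hmem := hψ_mem (idx x) x hxB
        have hΨx : Ψ x = ψ (idx x) x := by rw [hΨ]; simp [htop]
        rw [hΨx]
        refine ⟨hmem.1, ?_⟩
        rw [if_neg htop]
        calc g x - (ε : EReal) ≤ (((e (idx x) : ℝ) + ε : ℝ) : EReal) - (ε : EReal) :=
              EReal.sub_le_sub hokn.2 le_rfl
          _ = ((e (idx x) : ℝ) : EReal) := by
              rw [← EReal.coe_sub]
              norm_num
          _ ≤ (f (x, ψ (idx x) x) : EReal) := le_of_lt (by exact_mod_cast hmem.2)
end

section
/- Let (X, 𝒳) and (Y, 𝒴) be measurable spaces and N a probability kernel from (X, 𝒳) to (Y, 𝒴). Then N extends uniquely to a probability kernel from (X, 𝒳^U) to (Y, 𝒴^U): for every x the probability measure N(x, ·) has a unique extension N^U(x, ·) to the universal completion 𝒴^U, and for every B ∈ 𝒴^U the map x ↦ N^U(x, B) is 𝒳^U-measurable. -/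
open MeasureTheory ProbabilityTheory

lemma le_univCompletion {Ω : Type*} (m : MeasurableSpace Ω) : m ≤ univCompletion m :=
  fun _s hs _μ _hμ => hs.nullMeasurableSet

lemma univCompletion_nullMeasurable {Ω : Type*} {m : MeasurableSpace Ω} {s : Set Ω}
    (hs : MeasurableSet[univCompletion m] s) (μ : Measure Ω) [hμ : IsProbabilityMeasure μ] :
    NullMeasurableSet s μ := hs μ hμ

/-- The extension of a probability measure to the universal completion. -/
noncomputable def measureUnivExt {Ω : Type*} {m : MeasurableSpace Ω} (μ : Measure Ω)
    [IsProbabilityMeasure μ] : @Measure Ω (univCompletion m) :=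
  letI mU := univCompletion m
  { toOuterMeasure := @Measure.toOuterMeasure Ω m μ
    m_iUnion := by
      intro s hs hd
      exact measure_iUnion₀ (hd.mono fun _ _ h => (h.aedisjoint))
        (fun i => univCompletion_nullMeasurable (hs i) μ)
    trim_le :=
      (OuterMeasure.trim_anti_measurableSpace _ (le_univCompletion m)).trans
        (le_of_eq (@Measure.trimmed Ω m μ)) }

lemma measureUnivExt_apply {Ω : Type*} {m : MeasurableSpace Ω} (μ : Measure Ω)
    [IsProbabilityMeasure μ] (s : Set Ω) : measureUnivExt μ s = μ s := rfl

section KernelExt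

variable {X Y : Type*} [mX : MeasurableSpace X] [mY : MeasurableSpace Y]

lemma univExtKernel_measurable (N : Kernel X Y) [IsMarkovKernel N] :
    @Measurable X (@Measure Y (univCompletion mY)) (univCompletion mX)
      (@Measure.instMeasurableSpace Y (univCompletion mY))
      (fun x => @measureUnivExt Y mY (N x) inferInstance) := by
  refine @Measure.measurable_of_measurable_coe Y X (univCompletion mY) (univCompletion mX) _ ?_
  intro B hB
  intro A hA P hP
  -- `B` is null measurable w.r.t. `P.bind N`
  have hPN : IsProbabilityMeasure (P.bind N) := by
    constructor
    rw [Measure.bind_apply MeasurableSet.univ N.measurable.aemeasurable]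
    simp
  obtain ⟨B', hB', hBB'⟩ := hB (P.bind N) hPN
  set t := toMeasurable (P.bind N) (symmDiff B B') with ht
  have htm : MeasurableSet[mY] t := measurableSet_toMeasurable _ _
  have htnull : (P.bind N) t = 0 := by
    rw [measure_toMeasurable]
    exact measure_symmDiff_eq_zero_iff.mpr hBB'
  have hint : ∀ᵐ x ∂P, N x t = 0 := by
    rw [Measure.bind_apply htm N.measurable.aemeasurable] at htnull
    exact (lintegral_eq_zero_iff (N.measurable_coe htm)).mp htnull
  have hae : (fun x => measureUnivExt (N x) B) =ᵐ[P] (fun x => N x B') := by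
    filter_upwards [hint] with x hx
    have hsub : N x (symmDiff B B') = 0 :=
      le_antisymm (le_trans (measure_mono (subset_toMeasurable _ _)) hx.le) (zero_le)
    rw [measureUnivExt_apply]
    exact measure_congr (measure_symmDiff_eq_zero_iff.mp hsub)
  have hg : Measurable[mX] (fun x => N x B') := N.measurable_coe hB'
  have hpre : (fun x => measureUnivExt (N x) B) ⁻¹' A =ᵐ[P] (fun x => N x B') ⁻¹' A := by
    filter_upwards [hae] with x hx
    exact congrArg (· ∈ A) hx
  exact ((hg hA).nullMeasurableSet).congr hpre.symm

/-- The extension of a probability kernel to the universal completions. -/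
noncomputable def univExtKernel (N : Kernel X Y) [IsMarkovKernel N] :
    @Kernel X Y (univCompletion mX) (univCompletion mY) :=
  @Kernel.mk X Y (univCompletion mX) (univCompletion mY)
    (fun x => measureUnivExt (N x)) (univExtKernel_measurable N)

lemma univExtKernel_apply (N : Kernel X Y) [IsMarkovKernel N] (x : X) (s : Set Y) :
    univExtKernel N x s = N x s := measureUnivExt_apply (N x) s

end KernelExt

/-- **Unique extension of a probability kernel to the universal completions.** A probability
kernel `N` from `(X, 𝒳)` to `(Y, 𝒴)` extends uniquely to a kernel from `(X, 𝒳^U)` to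
`(Y, 𝒴^U)`: there is a unique kernel between the universal completions agreeing with `N`
on the sets of `𝒴`. -/
theorem kernel_unique_extension_univCompletion
    {X Y : Type*} [mX : MeasurableSpace X] [mY : MeasurableSpace Y]
    (N : Kernel X Y) [IsMarkovKernel N] :
    ∃! N' : @Kernel X Y (univCompletion mX) (univCompletion mY),
      ∀ x : X, ∀ s : Set Y, MeasurableSet[mY] s → N' x s = N x s := by
  refine ⟨univExtKernel N, fun x s _ => univExtKernel_apply N x s, ?_⟩
  intro K' hK'
  -- both kernels agree on every set of the universal completion
  have key : ∀ (L : @Kernel X Y (univCompletion mX) (univCompletion mY)),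
      (∀ x : X, ∀ s : Set Y, MeasurableSet[mY] s → L x s = N x s) →
      ∀ x : X, ∀ B : Set Y, MeasurableSet[univCompletion mY] B →
      ∀ B' : Set Y, MeasurableSet[mY] B' → N x (symmDiff B B') = 0 → L x B = N x B' := by
    intro L hL x B hB B' hB' hnull
    set t := toMeasurable (N x) (symmDiff B B') with ht
    have htm : MeasurableSet[mY] t := measurableSet_toMeasurable _ _
    have htnull : N x t = 0 := by rw [measure_toMeasurable]; exact hnull
    have hsub1 : B ⊆ B' ∪ t := fun y hy => by
      by_cases h : y ∈ B'
      · exact Or.inl h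
      · exact Or.inr (subset_toMeasurable _ _ (Or.inl ⟨hy, h⟩))
    have hsub2 : B' ⊆ B ∪ t := fun y hy => by
      by_cases h : y ∈ B
      · exact Or.inl h
      · exact Or.inr (subset_toMeasurable _ _ (Or.inr ⟨hy, h⟩))
    have h1 : L x B ≤ N x B' := by
      calc L x B ≤ L x (B' ∪ t) := measure_mono hsub1
        _ ≤ L x B' + L x t := measure_union_le _ _
        _ = N x B' + N x t := by rw [hL x B' hB', hL x t htm]
        _ = N x B' := by rw [htnull, add_zero]
    have h2 : N x B' ≤ L x B := by
      calc N x B' = L x B' := (hL x B' hB').symm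
        _ ≤ L x (B ∪ t) := measure_mono hsub2
        _ ≤ L x B + L x t := measure_union_le _ _
        _ = L x B + N x t := by rw [hL x t htm]
        _ = L x B := by rw [htnull, add_zero]
    exact le_antisymm h1 h2
  refine Kernel.ext fun x => ?_
  refine @Measure.ext Y (univCompletion mY) _ _ fun B hB => ?_
  obtain ⟨B', hB', hBB'⟩ := hB (N x) inferInstance
  have hnull : N x (symmDiff B B') = 0 := measure_symmDiff_eq_zero_iff.mpr hBB'
  rw [key K' hK' x B hB B' hB' hnull, key (univExtKernel N) (fun x s _ => univExtKernel_apply N x s) x B hB B' hB' hnull]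
end

section
/- Let (Ω, F, (F_t)_{t≥0}) be a filtered measurable space, E a metric space, and X an (F_t)-adapted process with values in E all of whose paths are càdlàg (right continuous with left limits). Let A ⊆ E be a closed set. Then the random time Z_A(ω) := inf{ t ≥ 0 : X_t(ω) ∈ A or X_{t−}(ω) ∈ A } (with X_{0−} := X_0 and inf ∅ = ∞) is an (F_t)-stopping time: { Z_A ≤ t } ∈ F_t for every t ≥ 0. -/
open MeasureTheory Filter Metric
open scoped ENNReal NNReal Topology

/-- **The hitting time of a closed set by a càdlàg adapted process (together with its left
limits) is a stopping time.** `X` is adapted to the filtration `ℱ`, all its paths are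
right continuous, `Xm` is the process of left limits (`Xm 0 = X 0`), and `A` is closed.
Then `Z_A(ω) := inf { t ≥ 0 : X_t(ω) ∈ A or X_{t−}(ω) ∈ A }` (convention `inf ∅ = ∞`)
satisfies `{Z_A ≤ t} ∈ ℱ_t` for every `t`. -/
theorem hitting_time_closed_is_stopping_time
    {Ω E : Type*} [mΩ : MeasurableSpace Ω]
    [MetricSpace E] [MeasurableSpace E] [BorelSpace E]
    (ℱ : ℝ≥0 → MeasurableSpace Ω) (hmono : Monotone ℱ) (hle : ∀ t, ℱ t ≤ mΩ)
    (X Xm : ℝ≥0 → Ω → E)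
    (hadapted : ∀ t : ℝ≥0, Measurable[ℱ t] (X t))
    (hright : ∀ ω : Ω, ∀ t : ℝ≥0, ContinuousWithinAt (fun s => X s ω) (Set.Ici t) t)
    (hXm0 : ∀ ω : Ω, Xm 0 ω = X 0 ω)
    (hleft : ∀ ω : Ω, ∀ t : ℝ≥0, 0 < t →
      Tendsto (fun s => X s ω) (𝓝[Set.Iio t] t) (𝓝 (Xm t ω)))
    (A : Set E) (hA : IsClosed A) :
    ∀ t : ℝ≥0,
      MeasurableSet[ℱ t]
        {ω | (⨅ (s : ℝ≥0) (_ : X s ω ∈ A ∨ Xm s ω ∈ A), (s : ℝ≥0∞)) ≤ (t : ℝ≥0∞)} := by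
  intro t
  classical
  rcases A.eq_empty_or_nonempty with rfl | hAne
  · have he : {ω | (⨅ (s : ℝ≥0) (_ : X s ω ∈ (∅ : Set E) ∨ Xm s ω ∈ (∅ : Set E)),
        (s : ℝ≥0∞)) ≤ (t : ℝ≥0∞)} = ∅ := by
      ext ω
      simp [top_le_iff]
    rw [he]
    exact @MeasurableSet.empty _ (ℱ t)
  -- the countable "dense in `[0,t]`" set of times
  set D : Set ℝ≥0 := insert t {q | q ≤ t ∧ ∃ r : ℚ, (r : ℝ) = (q : ℝ)} with hDdef
  have hDsub : ∀ q ∈ D, q ≤ t := by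
    intro q hq
    rcases hq with rfl | hq
    · exact le_rfl
    · exact hq.1
  have hDc : D.Countable := by
    refine Set.Countable.insert t ?_
    refine (Set.countable_range fun r : ℚ => Real.toNNReal (r : ℝ)).mono ?_
    rintro q ⟨-, r, hr⟩
    exact ⟨r, by simp [hr]⟩
  have hdense : ∀ a b : ℝ≥0, a < b →
      ∃ q : ℝ≥0, (∃ r : ℚ, (r : ℝ) = (q : ℝ)) ∧ a < q ∧ q < b := by
    intro a b hab
    obtain ⟨r, h1, h2⟩ := exists_rat_btwn (show (a : ℝ) < (b : ℝ) from hab)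
    have hr0 : (0 : ℝ) ≤ r := le_trans a.coe_nonneg h1.le
    refine ⟨Real.toNNReal (r : ℝ), ⟨r, by rw [Real.coe_toNNReal _ hr0]⟩, ?_, ?_⟩
    · rw [← NNReal.coe_lt_coe, Real.coe_toNNReal _ hr0]; exact h1
    · rw [← NNReal.coe_lt_coe, Real.coe_toNNReal _ hr0]; exact h2
  -- approximation of a right-hit by rational times in `D`
  have hAux : ∀ ω : Ω, ∀ s : ℝ≥0, s ≤ t → X s ω ∈ A →
      ∀ ε : ℝ, 0 < ε → ∃ q ∈ D, infDist (X q ω) A < ε := by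
    intro ω s hst hs ε hε
    rcases eq_or_lt_of_le hst with rfl | hst
    · exact ⟨s, Set.mem_insert _ _, by simpa [infDist_zero_of_mem hs] using hε⟩
    · obtain ⟨δ, hδ, hδ'⟩ := Metric.continuousWithinAt_iff.mp (hright ω s) ε hε
      have hpos : s < s + Real.toNNReal δ :=
        lt_add_of_pos_right s (Real.toNNReal_pos.mpr hδ)
      obtain ⟨q, hqr, hq1, hq2⟩ := hdense s (min t (s + Real.toNNReal δ)) (lt_min hst hpos)
      have hqt : q ≤ t := le_trans hq2.le (min_le_left _ _)
      have hqδ : (q : ℝ) < (s : ℝ) + δ := by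
        have := lt_of_lt_of_le hq2 (min_le_right _ _)
        have h2 : (q : ℝ) < ((s + Real.toNNReal δ : ℝ≥0) : ℝ) := NNReal.coe_lt_coe.mpr this
        rwa [NNReal.coe_add, Real.coe_toNNReal _ hδ.le] at h2
      have hdq : dist q s < δ := by
        rw [NNReal.dist_eq, abs_of_nonneg (sub_nonneg.mpr (NNReal.coe_le_coe.mpr hq1.le))]
        linarith
      have hdist : dist (X q ω) (X s ω) < ε := hδ' (Set.mem_Ici.mpr hq1.le) hdq
      refine ⟨q, Set.mem_insert_iff.mpr (Or.inr ⟨hqt, hqr⟩), ?_⟩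
      calc infDist (X q ω) A ≤ infDist (X s ω) A + dist (X q ω) (X s ω) :=
            infDist_le_infDist_add_dist
        _ = dist (X q ω) (X s ω) := by rw [infDist_zero_of_mem hs, zero_add]
        _ < ε := hdist
  -- step 1 : the debut is `≤ t` iff the set is hit at some time `≤ t`
  have key1 : ∀ ω : Ω,
      (⨅ (s : ℝ≥0) (_ : X s ω ∈ A ∨ Xm s ω ∈ A), (s : ℝ≥0∞)) ≤ (t : ℝ≥0∞) ↔
      ∃ s : ℝ≥0, s ≤ t ∧ (X s ω ∈ A ∨ Xm s ω ∈ A) := by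
    intro ω
    constructor
    · intro hZ
      by_contra hns
      push_neg at hns
      have hXt : X t ω ∈ A := by
        have hb : ∀ ε : ℝ, 0 < ε → infDist (X t ω) A < ε := by
          intro ε hε
          obtain ⟨δ, hδ, hδ'⟩ :=
            Metric.continuousWithinAt_iff.mp (hright ω t) (ε / 2) (by positivity)
          set δ' : ℝ≥0 := Real.toNNReal δ with hδ'def
          have hδ'pos : 0 < δ' := Real.toNNReal_pos.mpr hδ
          have hlt : (⨅ (s : ℝ≥0) (_ : X s ω ∈ A ∨ Xm s ω ∈ A), (s : ℝ≥0∞)) <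
              ((t + δ' : ℝ≥0) : ℝ≥0∞) :=
            lt_of_le_of_lt hZ (by exact_mod_cast lt_add_of_pos_right t hδ'pos)
          obtain ⟨s, hs⟩ := iInf_lt_iff.mp hlt
          obtain ⟨hPs, hslt⟩ := iInf_lt_iff.mp hs
          have hslt' : s < t + δ' := by exact_mod_cast hslt
          have hts : t < s := by
            refine lt_of_not_ge fun h => ?_
            rcases hPs with h1 | h2
            exacts [(hns s h).1 h1, (hns s h).2 h2]
          have hsltR : (s : ℝ) < (t : ℝ) + δ := by
            have := NNReal.coe_lt_coe.mpr hslt'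
            rwa [NNReal.coe_add, Real.coe_toNNReal _ hδ.le] at this
          rcases hPs with hXs | hXms
          · have hdq : dist s t < δ := by
              rw [NNReal.dist_eq, abs_of_nonneg (sub_nonneg.mpr (NNReal.coe_le_coe.mpr hts.le))]
              linarith
            have hdd : dist (X s ω) (X t ω) < ε / 2 := hδ' (Set.mem_Ici.mpr hts.le) hdq
            calc infDist (X t ω) A ≤ infDist (X s ω) A + dist (X t ω) (X s ω) :=
                  infDist_le_infDist_add_dist
              _ = dist (X s ω) (X t ω) := by
                  rw [infDist_zero_of_mem hXs, zero_add, dist_comm]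
              _ < ε / 2 := hdd
              _ < ε := by linarith
          · have h0s : 0 < s := lt_of_le_of_lt (show (0:ℝ≥0) ≤ t from zero_le) hts
            have hmem : (fun u => X u ω) ⁻¹' Metric.ball (Xm s ω) (ε / 2) ∈
                𝓝[Set.Iio s] s :=
              hleft ω s h0s (Metric.ball_mem_nhds _ (by positivity))
            have hmem2 : ((fun u => X u ω) ⁻¹' Metric.ball (Xm s ω) (ε / 2)) ∩
                Set.Ioi t ∩ Set.Iio s ∈ 𝓝[Set.Iio s] s :=
              inter_mem (inter_mem hmem (nhdsWithin_le_nhds (Ioi_mem_nhds hts)))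
                self_mem_nhdsWithin
            haveI : (𝓝[Set.Iio s] s).NeBot := nhdsWithin_Iio_self_neBot' ⟨0, h0s⟩
            obtain ⟨u, ⟨⟨hub, hut⟩, hus⟩⟩ := Filter.nonempty_of_mem hmem2
            have hut' : t < u := hut
            have hus' : u < s := hus
            have hdq : dist u t < δ := by
              rw [NNReal.dist_eq, abs_of_nonneg (sub_nonneg.mpr (NNReal.coe_le_coe.mpr hut'.le))]
              have : (u : ℝ) < (s : ℝ) := NNReal.coe_lt_coe.mpr hus'
              linarith
            have hdd : dist (X u ω) (X t ω) < ε / 2 := hδ' (Set.mem_Ici.mpr hut'.le) hdq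
            have hball : dist (X u ω) (Xm s ω) < ε / 2 := by
              simpa [Metric.mem_ball] using hub
            calc infDist (X t ω) A ≤ infDist (X u ω) A + dist (X t ω) (X u ω) :=
                  infDist_le_infDist_add_dist
              _ ≤ (infDist (Xm s ω) A + dist (X u ω) (Xm s ω)) + dist (X t ω) (X u ω) := by
                  gcongr
                  exact infDist_le_infDist_add_dist
              _ = dist (X u ω) (Xm s ω) + dist (X t ω) (X u ω) := by
                  rw [infDist_zero_of_mem hXms, zero_add]
              _ < ε / 2 + ε / 2 := by
                  rw [dist_comm (X t ω)]
                  exact add_lt_add hball hdd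
              _ = ε := by ring
        have h0 : infDist (X t ω) A = 0 :=
          le_antisymm (not_lt.mp fun hpos => lt_irrefl _ (hb _ hpos)) infDist_nonneg
        exact (hA.mem_iff_infDist_zero hAne).mpr h0
      exact (hns t le_rfl).1 hXt
    · rintro ⟨s, hst, hPs⟩
      exact le_trans (iInf_le_of_le s (iInf_le _ hPs)) (ENNReal.coe_le_coe.mpr hst)
  -- step 2 : hitting at some time `≤ t` iff `infDist` along `D` gets arbitrarily small
  have key2 : ∀ ω : Ω,
      (∃ s : ℝ≥0, s ≤ t ∧ (X s ω ∈ A ∨ Xm s ω ∈ A)) ↔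
      (∀ ε : ℝ, 0 < ε → ∃ q ∈ D, infDist (X q ω) A < ε) := by
    intro ω
    constructor
    · rintro ⟨s, hst, hXs | hXms⟩
      · exact fun ε hε => hAux ω s hst hXs ε hε
      · rcases eq_or_lt_of_le (show (0:ℝ≥0) ≤ s from zero_le) with rfl | h0s
        · rw [hXm0 ω] at hXms
          exact fun ε hε => hAux ω 0 hst hXms ε hε
        · intro ε hε
          have hmem : (fun u => X u ω) ⁻¹' Metric.ball (Xm s ω) ε ∈ 𝓝[Set.Iio s] s :=
            hleft ω s h0s (Metric.ball_mem_nhds _ hε)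
          obtain ⟨l, hl, hIoo⟩ :=
            (mem_nhdsLT_iff_exists_Ioo_subset' h0s).mp hmem
          obtain ⟨q, hqr, hq1, hq2⟩ := hdense l s hl
          have hqt : q ≤ t := le_trans hq2.le hst
          refine ⟨q, Set.mem_insert_iff.mpr (Or.inr ⟨hqt, hqr⟩), ?_⟩
          have hball : dist (X q ω) (Xm s ω) < ε := by
            have := hIoo ⟨hq1, hq2⟩
            simpa [Metric.mem_ball] using this
          calc infDist (X q ω) A ≤ infDist (Xm s ω) A + dist (X q ω) (Xm s ω) :=
                infDist_le_infDist_add_dist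
            _ = dist (X q ω) (Xm s ω) := by rw [infDist_zero_of_mem hXms, zero_add]
            _ < ε := hball
    · intro h
      have hq : ∀ n : ℕ, ∃ q, q ∈ D ∧ infDist (X q ω) A < 1 / ((n : ℝ) + 1) := by
        intro n
        obtain ⟨q, hq1, hq2⟩ := h (1 / ((n : ℝ) + 1)) (by positivity)
        exact ⟨q, hq1, hq2⟩
      choose q hqD hqlt using hq
      have hqmem : ∀ n, q n ∈ Set.Icc 0 t := fun n => ⟨zero_le, hDsub _ (hqD n)⟩
      obtain ⟨s, hsmem, φ, hφ, htends⟩ := (isCompact_Icc).tendsto_subseq hqmem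
      have hbound : ∀ ψ : ℕ → ℕ, StrictMono ψ →
          ∀ n : ℕ, infDist (X (q (ψ n)) ω) A ≤ 1 / ((n : ℝ) + 1) := by
        intro ψ hψ n
        refine le_trans (hqlt (ψ n)).le ?_
        apply one_div_le_one_div_of_le (by positivity)
        have hnle : n ≤ ψ n := hψ.le_apply
        have : (n : ℝ) ≤ (ψ n : ℝ) := by exact_mod_cast hnle
        linarith
      by_cases hfr : ∃ᶠ n in atTop, s ≤ q (φ n)
      · obtain ⟨ψ, hψ, hge⟩ := Filter.extraction_of_frequently_atTop hfr
        have htd : Tendsto (fun n => q (φ (ψ n))) atTop (𝓝 s) :=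
          htends.comp hψ.tendsto_atTop
        have htd' : Tendsto (fun n => q (φ (ψ n))) atTop (𝓝[Set.Ici s] s) :=
          tendsto_nhdsWithin_iff.mpr ⟨htd, Filter.Eventually.of_forall fun n => hge n⟩
        have hXtd : Tendsto (fun n => X (q (φ (ψ n))) ω) atTop (𝓝 (X s ω)) :=
          (hright ω s).tendsto.comp htd'
        have hd : Tendsto (fun n => infDist (X (q (φ (ψ n))) ω) A) atTop
            (𝓝 (infDist (X s ω) A)) :=
          ((continuous_infDist_pt A).tendsto _).comp hXtd
        have hle0 : infDist (X s ω) A ≤ 0 :=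
          le_of_tendsto_of_tendsto' hd tendsto_one_div_add_atTop_nhds_zero_nat
            (hbound (φ ∘ ψ) (hφ.comp hψ))
        exact ⟨s, hsmem.2,
          Or.inl ((hA.mem_iff_infDist_zero hAne).mpr (le_antisymm hle0 infDist_nonneg))⟩
      · have hev : ∀ᶠ n in atTop, q (φ n) < s := by
          rw [Filter.not_frequently] at hfr
          simpa using hfr
        obtain ⟨N, hN⟩ := Filter.eventually_atTop.mp hev
        have h0s : 0 < s := lt_of_le_of_lt (show (0:ℝ≥0) ≤ _ from zero_le) (hN N le_rfl)
        have hmN : StrictMono fun n : ℕ => n + N := fun a b hab => by simpa using hab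
        have htd : Tendsto (fun n => q (φ (n + N))) atTop (𝓝 s) :=
          htends.comp (tendsto_add_atTop_nat N)
        have htd' : Tendsto (fun n => q (φ (n + N))) atTop (𝓝[Set.Iio s] s) :=
          tendsto_nhdsWithin_iff.mpr
            ⟨htd, Filter.Eventually.of_forall fun n => hN (n + N) (Nat.le_add_left _ _)⟩
        have hXtd : Tendsto (fun n => X (q (φ (n + N))) ω) atTop (𝓝 (Xm s ω)) :=
          (hleft ω s h0s).comp htd'
        have hd : Tendsto (fun n => infDist (X (q (φ (n + N))) ω) A) atTop
            (𝓝 (infDist (Xm s ω) A)) :=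
          ((continuous_infDist_pt A).tendsto _).comp hXtd
        have hle0 : infDist (Xm s ω) A ≤ 0 :=
          le_of_tendsto_of_tendsto' hd tendsto_one_div_add_atTop_nhds_zero_nat
            (hbound (fun n => φ (n + N)) (hφ.comp hmN))
        exact ⟨s, hsmem.2,
          Or.inr ((hA.mem_iff_infDist_zero hAne).mpr (le_antisymm hle0 infDist_nonneg))⟩
  -- rewrite the set as a countable intersection of countable unions
  have hset : {ω | (⨅ (s : ℝ≥0) (_ : X s ω ∈ A ∨ Xm s ω ∈ A), (s : ℝ≥0∞)) ≤ (t : ℝ≥0∞)} =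
      ⋂ n : ℕ, ⋃ q ∈ D, {ω | infDist (X q ω) A < 1 / ((n : ℝ) + 1)} := by
    ext ω
    simp only [Set.mem_setOf_eq, Set.mem_iInter, Set.mem_iUnion, exists_prop]
    rw [key1 ω, key2 ω]
    constructor
    · intro h n
      exact h _ (by positivity)
    · intro h ε hε
      obtain ⟨n, hn⟩ := exists_nat_one_div_lt hε
      obtain ⟨qq, hq1, hq2⟩ := h n
      exact ⟨qq, hq1, hq2.trans hn⟩
  rw [hset]
  refine MeasurableSet.iInter fun n => MeasurableSet.biUnion hDc fun q hq => ?_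
  have hopen : IsOpen {x : E | infDist x A < 1 / ((n : ℝ) + 1)} :=
    isOpen_lt (continuous_infDist_pt A) continuous_const
  exact hmono (hDsub q hq) _ (hadapted q hopen.measurableSet)
end
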